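/- arXiv:1109.6580 — 4 statements merged into one kernel-verified Lean document; each statement's English description precedes it below -/
import Mathlib

section
/- Let n ≥ 1 be an odd integer and suppose f^{(n)} is integrable on [a,b] with γ_n ≤ f^{(n)}(x) ≤ Γ_n for all x ∈ [a,b]. Then for every θ ∈ [0,1], |I - F_n| ≤ (Γ_n - γ_n)/2 · (b-a)^{n+1}/((n+1)!·2^n) · K, where K = θ(n+1) - 1 if θn ≥ 1, and K = 2θ^{n+1}n^n - θ(n+1) + 1 if 0 ≤ θn < 1. -/
open MeasureTheory intervalIntegral

/-- The Peano kernel `G_n` from the paper (first branch on `[a,(a+b)/2]`,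
second branch on `((a+b)/2, b]`). -/
noncomputable def G (a b θ : ℝ) (n : ℕ) (x : ℝ) : ℝ :=
  if x ≤ (a + b) / 2 then
    (x - a) ^ (n - 1) / (n.factorial : ℝ) * (x - a - θ * n * (b - a) / 2)
  else
    (x - b) ^ (n - 1) / (n.factorial : ℝ) * (x - b + θ * n * (b - a) / 2)

/-- The quadrature functional `F_n`. -/
noncomputable def quadF (a b θ : ℝ) (n : ℕ) (f : ℝ → ℝ) : ℝ :=
  (b - a) * ((1 - θ) * f ((a + b) / 2) + θ * (f a + f b) / 2)
    + ∑ i ∈ Finset.Icc 1 ((n - 1) / 2),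
        (1 - θ * (2 * (i : ℝ) + 1)) * (b - a) ^ (2 * i + 1)
          / (((2 * i + 1).factorial : ℝ) * 2 ^ (2 * i)) * iteratedDeriv (2 * i) f ((a + b) / 2)

/-- `σ(g) = ∫ g² - (1/(b-a)) (∫ g)²`. -/
noncomputable def qsigma (a b : ℝ) (g : ℝ → ℝ) : ℝ :=
  (∫ x in a..b, (g x) ^ 2) - (1 / (b - a)) * (∫ x in a..b, g x) ^ 2

open Set

lemma swap_lemma {α β : ℝ} (hab : α ≤ β) {p w : ℝ → ℝ} (hp : Continuous p)
    (hw : IntervalIntegrable w volume α β) :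
    ∫ x in α..β, p x * (∫ t in α..x, w t)
      = ∫ t in α..β, (∫ x in t..β, p x) * w t := by
  have hw' : IntegrableOn w (Ioc α β) volume :=
    (intervalIntegrable_iff_integrableOn_Ioc_of_le hab).1 hw
  set μ : Measure ℝ := volume.restrict (Ioc α β) with hμ
  have hwμ : Integrable w μ := hw'
  have hpμ : Integrable p μ := (hp.integrableOn_Ioc)
  have hs : MeasurableSet {z : ℝ × ℝ | z.2 ≤ z.1} :=
    measurableSet_le measurable_snd measurable_fst
  set F : ℝ × ℝ → ℝ := {z : ℝ × ℝ | z.2 ≤ z.1}.indicator (fun z => p z.1 * w z.2) with hF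
  have hFint : Integrable F (μ.prod μ) := (hpμ.mul_prod hwμ).indicator hs
  have key : ∫ x, (∫ t, F (x, t) ∂μ) ∂μ = ∫ t, (∫ x, F (x, t) ∂μ) ∂μ :=
    integral_integral_swap hFint
  have hL : ∫ x in α..β, p x * (∫ t in α..x, w t) = ∫ x, (∫ t, F (x, t) ∂μ) ∂μ := by
    rw [integral_of_le hab, hμ]
    refine (setIntegral_congr_fun measurableSet_Ioc fun x hx => ?_).symm
    have h1 : (fun t => F (x, t)) = (Iic x).indicator (fun t => p x * w t) := by
      funext t
      simp only [hF, Set.indicator_apply, Set.mem_setOf_eq, Set.mem_Iic]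
    rw [h1, MeasureTheory.integral_indicator measurableSet_Iic,
      Measure.restrict_restrict measurableSet_Iic]
    have h2 : Iic x ∩ Ioc α β = Ioc α x := by
      ext y; simp only [mem_inter_iff, mem_Iic, mem_Ioc]
      exact ⟨fun ⟨h1', h2', _⟩ => ⟨h2', h1'⟩, fun ⟨h1', h2'⟩ => ⟨h2', h1', h2'.trans hx.2⟩⟩
    rw [h2, MeasureTheory.integral_const_mul, ← integral_of_le hx.1.le]
  have hR : ∫ t in α..β, (∫ x in t..β, p x) * w t = ∫ t, (∫ x, F (x, t) ∂μ) ∂μ := by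
    rw [integral_of_le hab, hμ]
    refine (setIntegral_congr_fun measurableSet_Ioc fun t ht => ?_).symm
    have h1 : (fun x => F (x, t)) = (Ici t).indicator (fun x => p x * w t) := by
      funext x
      simp only [hF, Set.indicator_apply, Set.mem_setOf_eq, Set.mem_Ici]
    rw [h1, MeasureTheory.integral_indicator measurableSet_Ici,
      Measure.restrict_restrict measurableSet_Ici]
    have h2 : Ici t ∩ Ioc α β = Icc t β := by
      ext y; simp only [mem_inter_iff, mem_Ici, mem_Ioc, mem_Icc]
      exact ⟨fun ⟨h1', _, h3'⟩ => ⟨h1', h3'⟩, fun ⟨h1', h2'⟩ => ⟨h1', ht.1.trans_le h1', h2'⟩⟩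
    rw [h2, MeasureTheory.integral_mul_const, integral_Icc_eq_integral_Ioc, ← integral_of_le ht.2]
  rw [hL, hR, key]

lemma ibp_form {α β : ℝ} (hab : α ≤ β) {u u' w v : ℝ → ℝ}
    (hu : ∀ x, HasDerivAt u (u' x) x) (hu' : Continuous u')
    (hw : IntervalIntegrable w volume α β)
    (hv : ∀ x ∈ Set.Icc α β, v x = v α + ∫ t in α..x, w t) :
    ∫ x in α..β, u x * w x
      = u β * v β - u α * v α - ∫ x in α..β, u' x * v x := by
  have hucont : Continuous u := by
    have : Differentiable ℝ u := fun x => (hu x).differentiableAt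
    exact this.continuous
  have hu'int : IntervalIntegrable u' volume α β := hu'.intervalIntegrable α β
  set W : ℝ → ℝ := fun x => ∫ t in α..x, w t with hW
  have hWcont : ContinuousOn W (Set.uIcc α β) :=
    intervalIntegral.continuousOn_primitive_interval' hw left_mem_uIcc
  have hIuw : IntervalIntegrable (fun x => u x * w x) volume α β :=
    hw.continuousOn_mul hucont.continuousOn
  have step1 : ∫ x in α..β, u' x * v x
      = ∫ x in α..β, (u' x * v α + u' x * W x) := by
    refine integral_congr fun x hx => ?_
    rw [uIcc_of_le hab] at hx
    rw [hv x hx]; ring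
  have hIu'W : IntervalIntegrable (fun x => u' x * W x) volume α β :=
    (hu'.continuousOn.mul hWcont).intervalIntegrable
  have step2 : ∫ x in α..β, (u' x * v α + u' x * W x)
      = (∫ x in α..β, u' x) * v α + ∫ x in α..β, u' x * W x := by
    rw [integral_add (hu'int.mul_const (v α)) hIu'W]
    congr 1
    calc ∫ x in α..β, u' x * v α = ∫ x in α..β, v α • u' x :=
          integral_congr fun x _ => by simp [mul_comm]
      _ = v α • ∫ x in α..β, u' x := integral_smul _ _
      _ = (∫ x in α..β, u' x) * v α := by simp [mul_comm]
  have step3 : ∫ x in α..β, u' x = u β - u α :=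
    integral_eq_sub_of_hasDerivAt (fun x _ => hu x) hu'int
  have step4 : ∫ x in α..β, u' x * W x = ∫ t in α..β, (u β - u t) * w t := by
    rw [hW, swap_lemma hab hu' hw]
    refine integral_congr fun t _ => ?_
    rw [integral_eq_sub_of_hasDerivAt (fun x _ => hu x) (hu'.intervalIntegrable t β)]
  have step5 : ∫ t in α..β, (u β - u t) * w t
      = (u β * ∫ t in α..β, w t) - ∫ t in α..β, u t * w t := by
    have : ∫ t in α..β, (u β - u t) * w t
        = ∫ t in α..β, (u β * w t - u t * w t) := integral_congr fun t _ => by ring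
    rw [this, integral_sub (hw.const_mul (u β)) hIuw]
    have h9 : ∫ t in α..β, u β * w t = u β * ∫ t in α..β, w t := by
      calc ∫ t in α..β, u β * w t = ∫ t in α..β, u β • w t :=
          integral_congr fun t _ => by simp
        _ = u β • ∫ t in α..β, w t := integral_smul _ _
        _ = u β * ∫ t in α..β, w t := by simp
    rw [h9]
  have hvβ : v β = v α + ∫ t in α..β, w t := hv β ⟨hab, le_refl β⟩
  have : ∫ x in α..β, u' x * v x
      = (u β - u α) * v α + ((u β * ∫ t in α..β, w t) - ∫ t in α..β, u t * w t) := by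
    rw [step1, step2, step3, step4, step5]
  rw [hvβ]
  linear_combination this

noncomputable def PP (r d : ℝ) (k : ℕ) (x : ℝ) : ℝ :=
  (x - r) ^ (k - 1) / (k.factorial : ℝ) * (x - r - k * d)

lemma PP_cont (r d : ℝ) (k : ℕ) : Continuous (PP r d k) := by
  unfold PP; fun_prop

lemma PP_hasDeriv (r d : ℝ) (j : ℕ) (x : ℝ) :
    HasDerivAt (PP r d (j + 2)) (PP r d (j + 1) x) x := by
  have h1 : HasDerivAt (fun y : ℝ => (y - r) ^ (j + 1)) (((j:ℝ)+1) * (x - r) ^ j) x := by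
    have := ((hasDerivAt_id x).sub_const r).fun_pow (j+1)
    simpa using this
  have h2 : HasDerivAt (fun y : ℝ => y - r - ((j:ℝ)+2) * d) 1 x := by
    simpa using ((hasDerivAt_id x).sub_const r).sub_const (((j:ℝ)+2) * d)
  have h3 := (h1.div_const (((j+2).factorial : ℕ) : ℝ)).fun_mul h2
  convert! h3 using 1
  · funext y
    simp only [PP, Nat.add_sub_cancel]
    push_cast
    ring
  · simp only [PP, Nat.add_sub_cancel, Nat.factorial_succ (j+1), Nat.factorial_succ j]
    push_cast
    have hf : ((j.factorial : ℝ)) ≠ 0 := Nat.cast_ne_zero.2 j.factorial_ne_zero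
    field_simp
    ring

lemma PP_antideriv (r d : ℝ) (j : ℕ) (x : ℝ) :
    HasDerivAt
      (fun y => ((y - r) ^ (j + 2) / ((j:ℝ) + 2) - d * (y - r) ^ (j + 1)) / ((j+1).factorial : ℝ))
      (PP r d (j + 1) x) x := by
  have h1 : HasDerivAt (fun y : ℝ => (y - r) ^ (j + 2)) (((j:ℝ)+2) * (x - r) ^ (j+1)) x := by
    have := ((hasDerivAt_id x).sub_const r).fun_pow (j+2)
    simpa using this
  have h2 : HasDerivAt (fun y : ℝ => (y - r) ^ (j + 1)) (((j:ℝ)+1) * (x - r) ^ j) x := by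
    have := ((hasDerivAt_id x).sub_const r).fun_pow (j+1)
    simpa using this
  have h3 := (((h1.div_const (((j:ℝ) + 2))).sub (h2.const_mul d)).div_const (((j+1).factorial : ℕ) : ℝ))
  convert! h3 using 1
  simp only [PP, Nat.add_sub_cancel, Nat.factorial_succ j]
  push_cast
  have hf : ((j.factorial : ℝ)) ≠ 0 := Nat.cast_ne_zero.2 j.factorial_ne_zero
  have h2' : ((j:ℝ) + 2) ≠ 0 := by positivity
  field_simp
  ring

lemma PP_integral (r d : ℝ) (j : ℕ) (α β : ℝ) :
    ∫ x in α..β, PP r d (j+1) x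
      = ((β - r) ^ (j + 2) / ((j:ℝ) + 2) - d * (β - r) ^ (j + 1)) / ((j+1).factorial : ℝ)
        - ((α - r) ^ (j + 2) / ((j:ℝ) + 2) - d * (α - r) ^ (j + 1)) / ((j+1).factorial : ℝ) :=
  integral_eq_sub_of_hasDerivAt (fun x _ => PP_antideriv r d j x)
    ((PP_cont r d (j+1)).intervalIntegrable α β)

lemma piece_bound {α β : ℝ} (hab : α ≤ β) {p g : ℝ → ℝ} {E C : ℝ}
    (hp : Continuous p) (hg : IntervalIntegrable g volume α β)
    (hpp : ∀ x ∈ Set.Icc α β, 0 ≤ p x) (hE : ∀ x ∈ Set.Icc α β, |g x - C| ≤ E) :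
    |∫ x in α..β, p x * (g x - C)| ≤ E * ∫ x in α..β, p x := by
  have hint : IntervalIntegrable (fun x => p x * (g x - C)) volume α β :=
    (hg.sub (intervalIntegrable_const)).continuousOn_mul hp.continuousOn
  have h1 : |∫ x in α..β, p x * (g x - C)| ≤ ∫ x in α..β, |p x * (g x - C)| :=
    intervalIntegral.abs_integral_le_integral_abs hab
  refine h1.trans ?_
  have h2 : ∫ x in α..β, |p x * (g x - C)| ≤ ∫ x in α..β, E * p x := by
    refine intervalIntegral.integral_mono_on hab hint.abs
      ((hp.intervalIntegrable α β).const_mul E) fun x hx => ?_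
    rw [abs_mul, abs_of_nonneg (hpp x hx)]
    calc p x * |g x - C| ≤ p x * E := mul_le_mul_of_nonneg_left (hE x hx) (hpp x hx)
      _ = E * p x := mul_comm _ _
  refine h2.trans ?_
  rw [intervalIntegral.integral_const_mul]
set_option maxHeartbeats 1600000 in
theorem stmt9 (a b θ : ℝ) (n : ℕ) (f : ℝ → ℝ) (γ Γ : ℝ)
    (hab : a < b) (hθ : θ ∈ Set.Icc (0 : ℝ) 1) (hn : 1 ≤ n) (hodd : Odd n)
    (hd : ∀ k < n - 1, ∀ x ∈ Set.Icc a b,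
      HasDerivAt (iteratedDeriv k f) (iteratedDeriv (k + 1) f x) x)
    (hcont : ContinuousOn (iteratedDeriv (n - 1) f) (Set.Icc a b))
    (hint : IntervalIntegrable (iteratedDeriv n f) volume a b)
    (hftc : ∀ x ∈ Set.Icc a b,
      iteratedDeriv (n - 1) f x
        = iteratedDeriv (n - 1) f a + ∫ t in a..x, iteratedDeriv n f t)
    (hγ : ∀ x ∈ Set.Icc a b, γ ≤ iteratedDeriv n f x)
    (hΓ : ∀ x ∈ Set.Icc a b, iteratedDeriv n f x ≤ Γ) :
    (1 ≤ θ * (n : ℝ) →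
      |(∫ x in a..b, f x) - quadF a b θ n f|
        ≤ (Γ - γ) / 2 * ((b - a) ^ (n + 1) / (((n + 1).factorial : ℝ) * 2 ^ n))
          * (θ * ((n : ℝ) + 1) - 1)) ∧
    (θ * (n : ℝ) < 1 →
      |(∫ x in a..b, f x) - quadF a b θ n f|
        ≤ (Γ - γ) / 2 * ((b - a) ^ (n + 1) / (((n + 1).factorial : ℝ) * 2 ^ n))
          * (2 * θ ^ (n + 1) * (n : ℝ) ^ n - θ * ((n : ℝ) + 1) + 1)) := by
  have g : ℕ → ℝ → ℝ := fun k => iteratedDeriv k f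
  set m : ℝ := (a + b) / 2 with hm
  set d : ℝ := θ * (b - a) / 2 with hdd
  have ham : a ≤ m := by rw [hm]; linarith
  have hmb : m ≤ b := by rw [hm]; linarith
  have haI : a ∈ Set.Icc a b := ⟨le_refl a, hab.le⟩
  have hbI : b ∈ Set.Icc a b := ⟨hab.le, le_refl b⟩
  have hmI : m ∈ Set.Icc a b := ⟨ham, hmb⟩
  have hsub : ∀ {x y : ℝ}, x ∈ Set.Icc a b → y ∈ Set.Icc a b → Set.uIcc x y ⊆ Set.Icc a b := by
    intro x y hx hy
    rw [← Set.uIcc_of_le hab.le]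
    exact Set.uIcc_subset_uIcc (by rwa [Set.uIcc_of_le hab.le]) (by rwa [Set.uIcc_of_le hab.le])
  have gcont : ∀ k, k < n → ContinuousOn (iteratedDeriv k f) (Set.Icc a b) := by
    intro k hk
    by_cases hk' : k = n - 1
    · subst hk'; exact hcont
    · intro x hx
      exact ((hd k (by omega) x hx).continuousAt).continuousWithinAt
  have gint : ∀ k, k ≤ n → ∀ x y, x ∈ Set.Icc a b → y ∈ Set.Icc a b →
      IntervalIntegrable (iteratedDeriv k f) volume x y := by
    intro k hk x y hx hy
    rcases eq_or_lt_of_le hk with rfl | hk'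
    · refine hint.mono_set ?_
      rw [Set.uIcc_of_le hab.le]
      exact hsub hx hy
    · exact ((gcont k hk').mono (hsub hx hy)).intervalIntegrable
  have hftc' : ∀ k, 1 ≤ k → k ≤ n → ∀ x ∈ Set.Icc a b, ∀ y ∈ Set.Icc a b, x ≤ y →
      iteratedDeriv (k-1) f y = iteratedDeriv (k-1) f x + ∫ t in x..y, iteratedDeriv k f t := by
    intro k h1 h2 x hx y hy hxy
    rcases eq_or_lt_of_le h2 with rfl | hk'
    · have e1 := hftc y hy
      have e2 := hftc x hx
      have e3 : (∫ t in a..y, iteratedDeriv k f t) - ∫ t in a..x, iteratedDeriv k f t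
          = ∫ t in x..y, iteratedDeriv k f t :=
        intervalIntegral.integral_interval_sub_left (gint k le_rfl a y haI hy)
          (gint k le_rfl a x haI hx)
      rw [e1, e2]
      linarith [e3]
    · have hder : ∀ t ∈ Set.uIcc x y, HasDerivAt (iteratedDeriv (k-1) f)
          (iteratedDeriv k f t) t := by
        intro t ht
        have h5 := hd (k-1) (by omega) t (hsub hx hy ht)
        rwa [show k - 1 + 1 = k from by omega] at h5
      have := integral_eq_sub_of_hasDerivAt hder (gint k h2 x y hx hy)
      rw [this]; ring
  -- the IBP step
  have hSTEP : ∀ j : ℕ, j + 2 ≤ n →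
      ((∫ x in a..m, PP a d (j+2) x * iteratedDeriv (j+2) f x)
        + ∫ x in m..b, PP b (-d) (j+2) x * iteratedDeriv (j+2) f x)
      = (PP a d (j+2) m - PP b (-d) (j+2) m) * iteratedDeriv (j+1) f m
        - ((∫ x in a..m, PP a d (j+1) x * iteratedDeriv (j+1) f x)
          + ∫ x in m..b, PP b (-d) (j+1) x * iteratedDeriv (j+1) f x) := by
    intro j hjn
    have hL := ibp_form ham (fun x => PP_hasDeriv a d j x) (PP_cont a d (j+1))
      (gint (j+2) hjn a m haI hmI)
      (fun x hx => by
        have := hftc' (j+2) (by omega) hjn a haI x ⟨hx.1, hx.2.trans hmb⟩ hx.1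
        simpa using this)
    have hR := ibp_form hmb (fun x => PP_hasDeriv b (-d) j x) (PP_cont b (-d) (j+1))
      (gint (j+2) hjn m b hmI hbI)
      (fun x hx => by
        have := hftc' (j+2) (by omega) hjn m hmI x ⟨ham.trans hx.1, hx.2⟩ hx.1
        simpa using this)
    have hPa : PP a d (j+2) a = 0 := by simp [PP]
    have hQb : PP b (-d) (j+2) b = 0 := by simp [PP]
    rw [hL, hR, hPa, hQb]
    ring
  -- base case
  have hbase :
      ((∫ x in a..m, PP a d 1 x * iteratedDeriv 1 f x)
        + ∫ x in m..b, PP b (-d) 1 x * iteratedDeriv 1 f x)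
      = quadF a b θ 1 f - ∫ x in a..b, f x := by
    have e1 : ∀ r e : ℝ, PP r e 1 = fun x => x - r - e := by
      intro r e; funext x; simp [PP]
    have hu1 : ∀ r e : ℝ, ∀ x : ℝ, HasDerivAt (PP r e 1) 1 x := by
      intro r e x
      rw [e1]
      simpa using ((hasDerivAt_id x).sub_const r).sub_const e
    have hL := ibp_form ham (hu1 a d) continuous_const (gint 1 hn a m haI hmI)
      (fun x hx => by
        have := hftc' 1 le_rfl hn a haI x ⟨hx.1, hx.2.trans hmb⟩ hx.1
        simpa using this)
    have hR := ibp_form hmb (hu1 b (-d)) continuous_const (gint 1 hn m b hmI hbI)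
      (fun x hx => by
        have := hftc' 1 le_rfl hn m hmI x ⟨ham.trans hx.1, hx.2⟩ hx.1
        simpa using this)
    simp only [one_mul] at hL hR
    have hf0 : IntervalIntegrable f volume a m := by
      have := gint 0 (by omega) a m haI hmI; rwa [iteratedDeriv_zero] at this
    have hf0' : IntervalIntegrable f volume m b := by
      have := gint 0 (by omega) m b hmI hbI; rwa [iteratedDeriv_zero] at this
    have hsplit : (∫ x in a..m, f x) + ∫ x in m..b, f x = ∫ x in a..b, f x :=
      intervalIntegral.integral_add_adjacent_intervals hf0 hf0'
    rw [hL, hR, quadF, show (1-1)/2 = 0 from rfl,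
      show Finset.Icc 1 0 = (∅ : Finset ℕ) from rfl, Finset.sum_empty, e1, e1]
    simp only [hm, hdd] at hsplit ⊢
    linear_combination -hsplit
  -- main induction
  have hmain : ∀ j : ℕ, 2*j+1 ≤ n →
      ((∫ x in a..m, PP a d (2*j+1) x * iteratedDeriv (2*j+1) f x)
        + ∫ x in m..b, PP b (-d) (2*j+1) x * iteratedDeriv (2*j+1) f x)
      = quadF a b θ (2*j+1) f - ∫ x in a..b, f x := by
    intro j
    induction j with
    | zero => intro _; simpa using hbase
    | succ i ih =>
      intro hle
      have e1 : 2*i+1+2 = 2*(i+1)+1 := by ring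
      have e2 : 2*i+1+1 = 2*i+2 := by ring
      have e3 : 2*i+2+1 = 2*(i+1)+1 := by ring  -- unused maybe
      have hstep1 := hSTEP (2*i+1) (by omega)
      rw [e1, e2] at hstep1
      have hstep2 := hSTEP (2*i) (by omega)
      have e4 : 2*i+2 = 2*i + 2 := rfl
      have hzero : PP a d (2*i+2) m - PP b (-d) (2*i+2) m = 0 := by
        simp only [PP, show 2*i+2-1 = 2*i+1 from by omega, hm]
        have hma' : (a+b)/2 - a = (b-a)/2 := by ring
        have hmb' : (a+b)/2 - b = -((b-a)/2) := by ring
        rw [hma', hmb', Odd.neg_pow ⟨i, by ring⟩]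
        push_cast
        ring
      have hjump : PP a d (2*(i+1)+1) m - PP b (-d) (2*(i+1)+1) m
          = (1 - θ * (2 * ((i+1 : ℕ) : ℝ) + 1)) * (b - a) ^ (2*(i+1)+1)
            / (((2*(i+1)+1).factorial : ℝ) * 2 ^ (2*(i+1))) := by
        have hfac : (((2*(i+1)+1).factorial : ℕ) : ℝ) ≠ 0 :=
          Nat.cast_ne_zero.2 (Nat.factorial_ne_zero _)
        simp only [PP, show 2*(i+1)+1-1 = 2*(i+1) from by omega, hm, hdd]
        have hma' : (a+b)/2 - a = (b-a)/2 := by ring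
        have hmb' : (a+b)/2 - b = -((b-a)/2) := by ring
        rw [hma', hmb', Even.neg_pow ⟨i+1, by ring⟩]
        push_cast
        rw [div_pow]
        field_simp
        ring
      have hquad : quadF a b θ (2*(i+1)+1) f = quadF a b θ (2*i+1) f
          + (1 - θ * (2 * ((i+1 : ℕ) : ℝ) + 1)) * (b - a) ^ (2*(i+1)+1)
            / (((2*(i+1)+1).factorial : ℝ) * 2 ^ (2*(i+1)))
            * iteratedDeriv (2*(i+1)) f m := by
        rw [quadF, quadF]
        rw [show (2*(i+1)+1-1)/2 = i+1 from by omega, show (2*i+1-1)/2 = i from by omega]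
        rw [Finset.sum_Icc_succ_top (by omega : 1 ≤ i+1)]
        simp only [hm]
        ring
      have ih' := ih (by omega)
      rw [hstep1, hstep2, hzero, hquad, hjump, ih']
      rw [show 2*(i+1) = 2*i+2 from by ring]
      ring
  -- the identity at n
  obtain ⟨jj, hjj⟩ := hodd
  have hjj' : n = 2*jj+1 := by omega
  have hid :
      ((∫ x in a..m, PP a d n x * iteratedDeriv n f x)
        + ∫ x in m..b, PP b (-d) n x * iteratedDeriv n f x)
      = quadF a b θ n f - ∫ x in a..b, f x := by
    rw [hjj']
    exact hmain jj (by omega)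
  have hodd' : Odd n := ⟨jj, hjj⟩
  have heven1 : Even (n - 1) := Nat.Odd.sub_odd hodd' odd_one
  have hevenn1 : Even (n + 1) := by exact ⟨jj+1, by omega⟩
  set E : ℝ := (Γ - γ)/2 with hEdef
  set Cc : ℝ := (γ + Γ)/2 with hCdef
  have hE : ∀ x ∈ Set.Icc a b, |iteratedDeriv n f x - Cc| ≤ E := by
    intro x hx
    have h1 := hγ x hx
    have h2 := hΓ x hx
    rw [abs_le]
    constructor <;> [skip; skip] <;> simp only [hEdef, hCdef] <;> linarith
  have hamI : ∀ {x : ℝ}, x ∈ Set.Icc a m → x ∈ Set.Icc a b := fun hx => ⟨hx.1, hx.2.trans hmb⟩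
  have hmbI : ∀ {x : ℝ}, x ∈ Set.Icc m b → x ∈ Set.Icc a b := fun hx => ⟨ham.trans hx.1, hx.2⟩
  have hPg : ∀ (r e α β : ℝ), α ∈ Set.Icc a b → β ∈ Set.Icc a b →
      IntervalIntegrable (fun x => PP r e n x * (iteratedDeriv n f x - Cc)) volume α β := by
    intro r e α β hα hβ
    exact ((gint n le_rfl α β hα hβ).sub intervalIntegrable_const).continuousOn_mul
      (PP_cont r e n).continuousOn
  have hdecomp : ∀ (r e α β : ℝ), α ∈ Set.Icc a b → β ∈ Set.Icc a b →
      (∫ x in α..β, PP r e n x * iteratedDeriv n f x)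
      = (∫ x in α..β, PP r e n x * (iteratedDeriv n f x - Cc))
        + Cc * ∫ x in α..β, PP r e n x := by
    intro r e α β hα hβ
    have h2 : IntervalIntegrable (fun x => Cc * PP r e n x) volume α β :=
      ((PP_cont r e n).intervalIntegrable α β).const_mul Cc
    calc (∫ x in α..β, PP r e n x * iteratedDeriv n f x)
        = ∫ x in α..β, (PP r e n x * (iteratedDeriv n f x - Cc) + Cc * PP r e n x) :=
          integral_congr fun x _ => by ring
      _ = (∫ x in α..β, PP r e n x * (iteratedDeriv n f x - Cc))
          + ∫ x in α..β, Cc * PP r e n x := integral_add (hPg r e α β hα hβ) h2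
      _ = (∫ x in α..β, PP r e n x * (iteratedDeriv n f x - Cc))
          + Cc * ∫ x in α..β, PP r e n x := by rw [intervalIntegral.integral_const_mul]
  have hPI : ∀ (r e α β : ℝ), ∫ x in α..β, PP r e n x
      = ((β - r)^(n+1)/((n:ℝ)+1) - e*(β-r)^n)/(n.factorial : ℝ)
        - ((α - r)^(n+1)/((n:ℝ)+1) - e*(α-r)^n)/(n.factorial : ℝ) := by
    intro r e α β
    have h := PP_integral r e (n-1) α β
    rw [show n-1+1 = n from by omega, show n-1+2 = n+1 from by omega, Nat.cast_sub hn] at h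
    rw [h]
    push_cast
    ring
  set A : ℝ := ∫ x in a..m, PP a d n x * (iteratedDeriv n f x - Cc) with hAdef
  set B : ℝ := ∫ x in m..b, PP b (-d) n x * (iteratedDeriv n f x - Cc) with hBdef
  have hIPQ : (∫ x in a..m, PP a d n x) + (∫ x in m..b, PP b (-d) n x) = 0 := by
    rw [hPI, hPI]
    simp only [hm]
    rw [show (a+b)/2 - a = (b-a)/2 from by ring, show (a+b)/2 - b = -((b-a)/2) from by ring,
      sub_self, sub_self, Even.neg_pow hevenn1, Odd.neg_pow hodd',
      zero_pow (by omega : n + 1 ≠ 0), zero_pow (by omega : n ≠ 0)]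
    ring
  have hSn : (∫ x in a..b, f x) - quadF a b θ n f = -(A + B) := by
    have h := hid
    rw [hdecomp a d a m haI hmI, hdecomp b (-d) m b hmI hbI] at h
    rw [hAdef, hBdef]
    linear_combination h - Cc * hIPQ
  rw [hSn, abs_neg]
  have habs : |A + B| ≤ |A| + |B| := abs_add_le A B
  constructor
  · -- case θ n ≥ 1
    intro hθn
    have hz : (0:ℝ) < (b-a)/2 := by linarith
    have hnd : (b-a)/2 ≤ (n:ℝ)*d := by
      have h1 : 1 * ((b-a)/2) ≤ (θ*(n:ℝ)) * ((b-a)/2) := mul_le_mul_of_nonneg_right hθn hz.le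
      rw [hdd]; nlinarith [h1]
    have hsignL : ∀ x ∈ Set.Icc a m, 0 ≤ -PP a d n x := by
      intro x hx
      have h1 : (0:ℝ) ≤ (x-a)^(n-1) := heven1.pow_nonneg _
      have h2 : x - a - (n:ℝ)*d ≤ 0 := by
        have := hx.2; simp only [hm] at this; linarith
      have h3 : (0:ℝ) ≤ (x-a)^(n-1)/(n.factorial:ℝ) := div_nonneg h1 (Nat.cast_nonneg _)
      simp only [PP]
      nlinarith
    have hsignR : ∀ x ∈ Set.Icc m b, 0 ≤ PP b (-d) n x := by
      intro x hx
      have h1 : (0:ℝ) ≤ (x-b)^(n-1) := heven1.pow_nonneg _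
      have h2 : 0 ≤ x - b - (n:ℝ)*(-d) := by
        have := hx.1; simp only [hm] at this; linarith
      have h3 : (0:ℝ) ≤ (x-b)^(n-1)/(n.factorial:ℝ) := div_nonneg h1 (Nat.cast_nonneg _)
      simp only [PP]
      nlinarith
    have hbA : |A| ≤ E * ∫ x in a..m, -PP a d n x := by
      have hA2 : A = -∫ x in a..m, (-PP a d n x) * (iteratedDeriv n f x - Cc) := by
        rw [← intervalIntegral.integral_neg]
        exact integral_congr fun x _ => by ring
      rw [hA2, abs_neg]
      exact piece_bound ham (PP_cont a d n).neg (gint n le_rfl a m haI hmI) hsignL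
        (fun x hx => hE x (hamI hx))
    have hbB : |B| ≤ E * ∫ x in m..b, PP b (-d) n x :=
      piece_bound hmb (PP_cont b (-d) n) (gint n le_rfl m b hmI hbI) hsignR
        (fun x hx => hE x (hmbI hx))
    have hv1 : (∫ x in a..m, PP a d n x)
        = (((b-a)/2)^(n+1)/((n:ℝ)+1) - d*((b-a)/2)^n)/(n.factorial:ℝ) := by
      rw [hPI, show m - a = (b-a)/2 from by rw [hm]; ring, sub_self,
        zero_pow (by omega : n+1 ≠ 0), zero_pow (by omega : n ≠ 0)]
      ring
    have hv2 : (∫ x in m..b, PP b (-d) n x)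
        = -((((b-a)/2)^(n+1)/((n:ℝ)+1) - d*((b-a)/2)^n)/(n.factorial:ℝ)) := by
      rw [hPI, show m - b = -((b-a)/2) from by rw [hm]; ring, sub_self,
        Even.neg_pow hevenn1, Odd.neg_pow hodd',
        zero_pow (by omega : n+1 ≠ 0), zero_pow (by omega : n ≠ 0)]
      ring
    have hfact : (((n+1).factorial : ℕ) : ℝ) = ((n:ℝ)+1) * (n.factorial:ℝ) := by
      rw [Nat.factorial_succ]; push_cast; ring
    have hf : ((n.factorial:ℕ):ℝ) ≠ 0 := Nat.cast_ne_zero.2 (Nat.factorial_ne_zero _)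
    have hn0 : ((n:ℝ)+1) ≠ 0 := by positivity
    have h2n : ((2:ℝ))^n ≠ 0 := by positivity
    have hval : E * (∫ x in a..m, -PP a d n x) + E * (∫ x in m..b, PP b (-d) n x)
        = (Γ - γ) / 2 * ((b - a) ^ (n + 1) / (((n + 1).factorial : ℝ) * 2 ^ n))
          * (θ * ((n : ℝ) + 1) - 1) := by
      rw [intervalIntegral.integral_neg, hv1, hv2, hEdef, hdd, hfact]
      simp only [div_pow]
      rw [pow_succ (2:ℝ) n, pow_succ (b-a) n]
      field_simp
      ring
    calc |A + B| ≤ |A| + |B| := abs_add_le A B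
      _ ≤ E * (∫ x in a..m, -PP a d n x) + E * (∫ x in m..b, PP b (-d) n x) :=
          add_le_add hbA hbB
      _ = _ := hval
  · -- case θ n < 1
    intro hθn
    have hz : (0:ℝ) < (b-a)/2 := by linarith
    have hθ0 : (0:ℝ) ≤ θ := hθ.1
    have hnd0 : 0 ≤ (n:ℝ)*d := by
      rw [hdd]
      have hn' : (0:ℝ) ≤ (n:ℝ) := Nat.cast_nonneg n
      have h2 : 0 ≤ θ * (b - a) := mul_nonneg hθ0 (by linarith)
      nlinarith
    have hndz : (n:ℝ)*d ≤ (b-a)/2 := by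
      have h1 : (θ*(n:ℝ)) * ((b-a)/2) ≤ 1 * ((b-a)/2) := mul_le_mul_of_nonneg_right hθn.le hz.le
      rw [hdd]; nlinarith [h1]
    set s1 : ℝ := a + (n:ℝ)*d with hs1def
    set s2 : ℝ := b - (n:ℝ)*d with hs2def
    have hs1m : s1 ≤ m := by rw [hs1def, hm]; linarith
    have has1 : a ≤ s1 := by rw [hs1def]; linarith
    have hms2 : m ≤ s2 := by rw [hs2def, hm]; linarith
    have hs2b : s2 ≤ b := by rw [hs2def]; linarith
    have hs1I : s1 ∈ Set.Icc a b := ⟨has1, hs1m.trans hmb⟩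
    have hs2I : s2 ∈ Set.Icc a b := ⟨ham.trans hms2, hs2b⟩
    -- sign helpers
    have hPfac : ∀ (r e x : ℝ), 0 ≤ x - r - (n:ℝ)*e → 0 ≤ PP r e n x := by
      intro r e x hx
      have h1 : (0:ℝ) ≤ (x-r)^(n-1) := heven1.pow_nonneg _
      have h3 : (0:ℝ) ≤ (x-r)^(n-1)/(n.factorial:ℝ) := div_nonneg h1 (Nat.cast_nonneg _)
      simp only [PP]
      nlinarith
    have hPfacneg : ∀ (r e x : ℝ), x - r - (n:ℝ)*e ≤ 0 → 0 ≤ -PP r e n x := by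
      intro r e x hx
      have h1 : (0:ℝ) ≤ (x-r)^(n-1) := heven1.pow_nonneg _
      have h3 : (0:ℝ) ≤ (x-r)^(n-1)/(n.factorial:ℝ) := div_nonneg h1 (Nat.cast_nonneg _)
      simp only [PP]
      nlinarith
    -- generic bounds
    have hBND : ∀ (r e α β : ℝ), α ∈ Set.Icc a b → β ∈ Set.Icc a b → α ≤ β →
        (∀ x ∈ Set.Icc α β, 0 ≤ PP r e n x) →
        |∫ x in α..β, PP r e n x * (iteratedDeriv n f x - Cc)|
          ≤ E * ∫ x in α..β, PP r e n x := by
      intro r e α β hα hβ hle hsgn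
      exact piece_bound hle (PP_cont r e n) (gint n le_rfl α β hα hβ) hsgn
        (fun x hx => hE x ⟨hα.1.trans hx.1, hx.2.trans hβ.2⟩)
    have hBNDneg : ∀ (r e α β : ℝ), α ∈ Set.Icc a b → β ∈ Set.Icc a b → α ≤ β →
        (∀ x ∈ Set.Icc α β, 0 ≤ -PP r e n x) →
        |∫ x in α..β, PP r e n x * (iteratedDeriv n f x - Cc)|
          ≤ E * ∫ x in α..β, -PP r e n x := by
      intro r e α β hα hβ hle hsgn
      have hA2 : (∫ x in α..β, PP r e n x * (iteratedDeriv n f x - Cc))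
          = -∫ x in α..β, (-PP r e n x) * (iteratedDeriv n f x - Cc) := by
        rw [← intervalIntegral.integral_neg]
        exact integral_congr fun x _ => by ring
      rw [hA2, abs_neg]
      exact piece_bound hle (PP_cont r e n).neg (gint n le_rfl α β hα hβ) hsgn
        (fun x hx => hE x ⟨hα.1.trans hx.1, hx.2.trans hβ.2⟩)
    -- splits
    have hsplitA : A = (∫ x in a..s1, PP a d n x * (iteratedDeriv n f x - Cc))
        + ∫ x in s1..m, PP a d n x * (iteratedDeriv n f x - Cc) :=
      (intervalIntegral.integral_add_adjacent_intervals
        (hPg a d a s1 haI hs1I) (hPg a d s1 m hs1I hmI)).symm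
    have hsplitB : B = (∫ x in m..s2, PP b (-d) n x * (iteratedDeriv n f x - Cc))
        + ∫ x in s2..b, PP b (-d) n x * (iteratedDeriv n f x - Cc) :=
      (intervalIntegral.integral_add_adjacent_intervals
        (hPg b (-d) m s2 hmI hs2I) (hPg b (-d) s2 b hs2I hbI)).symm
    -- four bounds
    have hbA1 := hBNDneg a d a s1 haI hs1I has1 (fun x hx => hPfacneg a d x (by
      have := hx.2; rw [hs1def] at this; linarith))
    have hbA2 := hBND a d s1 m hs1I hmI hs1m (fun x hx => hPfac a d x (by
      have := hx.1; rw [hs1def] at this; linarith))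
    have hbB1 := hBNDneg b (-d) m s2 hmI hs2I hms2 (fun x hx => hPfacneg b (-d) x (by
      have := hx.2; rw [hs2def] at this; linarith))
    have hbB2 := hBND b (-d) s2 b hs2I hbI hs2b (fun x hx => hPfac b (-d) x (by
      have := hx.1; rw [hs2def] at this; linarith))
    -- values
    have hw1 : ∫ x in a..s1, PP a d n x
        = (((n:ℝ)*d)^(n+1)/((n:ℝ)+1) - d*((n:ℝ)*d)^n)/(n.factorial:ℝ) := by
      rw [hPI, show s1 - a = (n:ℝ)*d from by rw [hs1def]; ring, sub_self,
        zero_pow (by omega : n+1 ≠ 0), zero_pow (by omega : n ≠ 0)]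
      ring
    have hw2 : ∫ x in s1..m, PP a d n x
        = (((b-a)/2)^(n+1)/((n:ℝ)+1) - d*((b-a)/2)^n)/(n.factorial:ℝ)
          - (((n:ℝ)*d)^(n+1)/((n:ℝ)+1) - d*((n:ℝ)*d)^n)/(n.factorial:ℝ) := by
      rw [hPI, show s1 - a = (n:ℝ)*d from by rw [hs1def]; ring,
        show m - a = (b-a)/2 from by rw [hm]; ring]
    have hw3 : ∫ x in m..s2, PP b (-d) n x
        = (((n:ℝ)*d)^(n+1)/((n:ℝ)+1) - d*((n:ℝ)*d)^n)/(n.factorial:ℝ)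
          - (((b-a)/2)^(n+1)/((n:ℝ)+1) - d*((b-a)/2)^n)/(n.factorial:ℝ) := by
      rw [hPI, show s2 - b = -((n:ℝ)*d) from by rw [hs2def]; ring,
        show m - b = -((b-a)/2) from by rw [hm]; ring,
        Even.neg_pow hevenn1, Even.neg_pow hevenn1, Odd.neg_pow hodd', Odd.neg_pow hodd']
      ring
    have hw4 : ∫ x in s2..b, PP b (-d) n x
        = -((((n:ℝ)*d)^(n+1)/((n:ℝ)+1) - d*((n:ℝ)*d)^n)/(n.factorial:ℝ)) := by
      rw [hPI, show s2 - b = -((n:ℝ)*d) from by rw [hs2def]; ring, sub_self,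
        Even.neg_pow hevenn1, Odd.neg_pow hodd',
        zero_pow (by omega : n+1 ≠ 0), zero_pow (by omega : n ≠ 0)]
      ring
    have hfact : (((n+1).factorial : ℕ) : ℝ) = ((n:ℝ)+1) * (n.factorial:ℝ) := by
      rw [Nat.factorial_succ]; push_cast; ring
    have hf : ((n.factorial:ℕ):ℝ) ≠ 0 := Nat.cast_ne_zero.2 (Nat.factorial_ne_zero _)
    have hn0 : ((n:ℝ)+1) ≠ 0 := by positivity
    have h2n : ((2:ℝ))^n ≠ 0 := by positivity
    have hval : E * (∫ x in a..s1, -PP a d n x) + E * (∫ x in s1..m, PP a d n x)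
        + (E * (∫ x in m..s2, -PP b (-d) n x) + E * (∫ x in s2..b, PP b (-d) n x))
        = (Γ - γ) / 2 * ((b - a) ^ (n + 1) / (((n + 1).factorial : ℝ) * 2 ^ n))
          * (2 * θ ^ (n + 1) * (n : ℝ) ^ n - θ * ((n : ℝ) + 1) + 1) := by
      rw [intervalIntegral.integral_neg, intervalIntegral.integral_neg,
        hw1, hw2, hw3, hw4, hEdef, hdd, hfact]
      simp only [mul_pow, div_pow]
      rw [pow_succ (2:ℝ) n, pow_succ (b-a) n, pow_succ θ n]
      field_simp
      ring
    calc |A + B| ≤ |A| + |B| := abs_add_le A B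
      _ ≤ (|∫ x in a..s1, PP a d n x * (iteratedDeriv n f x - Cc)|
            + |∫ x in s1..m, PP a d n x * (iteratedDeriv n f x - Cc)|)
          + (|∫ x in m..s2, PP b (-d) n x * (iteratedDeriv n f x - Cc)|
            + |∫ x in s2..b, PP b (-d) n x * (iteratedDeriv n f x - Cc)|) := by
        rw [hsplitA, hsplitB]
        exact add_le_add (abs_add_le _ _) (abs_add_le _ _)
      _ ≤ (E * (∫ x in a..s1, -PP a d n x) + E * (∫ x in s1..m, PP a d n x))
          + (E * (∫ x in m..s2, -PP b (-d) n x) + E * (∫ x in s2..b, PP b (-d) n x)) :=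
        add_le_add (add_le_add hbA1 hbA2) (add_le_add hbB1 hbB2)
      _ = _ := hval
end

section
/- Let n = 2m ≥ 2 be an even integer and suppose f^{(2m)} is integrable on [a,b] with γ_{2m} ≤ f^{(2m)}(x) ≤ Γ_{2m} for all x ∈ [a,b]. Then for every θ ∈ [0,1], |I - F_{2m} - (b-a)^{2m+1}/((2m)!·2^{2m}) · (1/(2m+1) - θ) · (f^{(2m-1)}(b) - f^{(2m-1)}(a))/(b-a)| ≤ [(f^{(2m-1)}(b) - f^{(2m-1)}(a))/(b-a) - γ_{2m}] · (b-a)^{2m+1}/((2m)!·2^{2m}) · K, where K = max{θ - 1/(2m+1), θ(2m-1) - 2m/(2m+1)} if θ(2m-1) ≥ 1, and K = max{|θ - 1/(2m+1)|, |θ(2m-1) - 2m/(2m+1)|, |θ - 1/(2m+1) - θ^{2m}(2m-1)^{2m-1}|} if θ(2m-1) < 1. -/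
open MeasureTheory intervalIntegral

lemma ibp_ac {u u' w v : ℝ → ℝ} {s t : ℝ} (hst : s ≤ t)
    (hu : ∀ x ∈ Set.Icc s t, HasDerivAt u (u' x) x)
    (hu'cont : Continuous u')
    (hwm : StronglyMeasurable w)
    (hw : IntervalIntegrable w volume s t)
    (hv : ∀ x ∈ Set.Icc s t, v x = v s + ∫ τ in s..x, w τ)
    (hvcont : ContinuousOn v (Set.Icc s t)) :
    ∫ x in s..t, u x * w x = u t * v t - u s * v s - ∫ x in s..t, u' x * v x := by
  have hicc : Set.uIcc s t = Set.Icc s t := Set.uIcc_of_le hst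
  have ucont : ContinuousOn u (Set.Icc s t) :=
    fun x hx => (hu x hx).continuousAt.continuousWithinAt
  obtain ⟨M, hM⟩ := isCompact_Icc.exists_bound_of_continuousOn
    (hu'cont.continuousOn (s := Set.Icc s t))
  obtain ⟨Mu, hMu⟩ := isCompact_Icc.exists_bound_of_continuousOn ucont
  have wI : IntegrableOn w (Set.Ioc s t) := hw.1
  haveI finI : IsFiniteMeasure (volume.restrict (Set.Ioc s t)) :=
    ⟨by rw [Measure.restrict_apply_univ]; exact measure_Ioc_lt_top⟩
  have ftc : ∀ τ ∈ Set.Icc s t, (∫ x in τ..t, u' x) = u t - u τ := by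
    intro τ hτ
    refine integral_eq_sub_of_hasDerivAt (fun x hx => hu x ?_) (hu'cont.intervalIntegrable _ _)
    rw [Set.uIcc_of_le hτ.2] at hx; exact ⟨le_trans hτ.1 hx.1, hx.2⟩
  have uwI : IntegrableOn (fun x => u x * w x) (Set.Ioc s t) := by
    refine wI.bdd_mul (c := Mu) ((ucont.mono Set.Ioc_subset_Icc_self).aestronglyMeasurable measurableSet_Ioc) ?_
    exact ae_restrict_of_forall_mem measurableSet_Ioc
      (fun x hx => hMu x (Set.Ioc_subset_Icc_self hx))
  have wprim : ContinuousOn (fun x => ∫ τ in s..x, w τ) (Set.Icc s t) := by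
    have : IntegrableOn w (Set.uIcc s t) := by
      rw [hicc, integrableOn_Icc_iff_integrableOn_Ioc]; exact wI
    have := intervalIntegral.continuousOn_primitive_interval this
    rwa [hicc] at this
  have hvt : v t = v s + ∫ τ in s..t, w τ := hv t ⟨hst, le_refl t⟩
  -- step 1 : expand v inside the integral
  have step1 : (∫ x in s..t, u' x * v x)
      = (∫ x in s..t, u' x * v s) + ∫ x in s..t, u' x * ∫ τ in s..x, w τ := by
    rw [← intervalIntegral.integral_add]
    · refine integral_congr (fun x hx => ?_)
      rw [hicc] at hx
      show u' x * v x = u' x * v s + u' x * ∫ τ in s..x, w τ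
      rw [hv x hx]; ring
    · exact ContinuousOn.intervalIntegrable (hu'cont.continuousOn.mul continuousOn_const)
    · exact ContinuousOn.intervalIntegrable (by rw [hicc]; exact hu'cont.continuousOn.mul wprim)
  have step2 : (∫ x in s..t, u' x * v s) = (u t - u s) * v s := by
    rw [intervalIntegral.integral_mul_const, ftc s ⟨le_refl s, hst⟩]
  -- Fubini
  have key : (∫ x in s..t, u' x * ∫ τ in s..x, w τ)
      = u t * (∫ τ in s..t, w τ) - ∫ x in s..t, u x * w x := by
    rw [integral_of_le hst, integral_of_le hst, integral_of_le hst]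
    have e1 : (∫ x in Set.Ioc s t, u' x * ∫ τ in s..x, w τ)
        = ∫ x in Set.Ioc s t, ∫ τ in Set.Ioc s t, u' x * (Set.Ioc s x).indicator w τ := by
      refine setIntegral_congr_fun measurableSet_Ioc (fun x hx => ?_)
      rw [MeasureTheory.integral_const_mul, setIntegral_indicator measurableSet_Ioc,
        Set.inter_eq_self_of_subset_right (Set.Ioc_subset_Ioc_right hx.2),
        integral_of_le hx.1.le]
    have hsetm : MeasurableSet {q : ℝ × ℝ | s < q.2 ∧ q.2 ≤ q.1} := by
      rw [Set.setOf_and]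
      exact (measurableSet_lt measurable_const measurable_snd).inter
        (measurableSet_le measurable_snd measurable_fst)
    have hint2 : Integrable (Function.uncurry fun x τ => u' x * (Set.Ioc s x).indicator w τ)
        ((volume.restrict (Set.Ioc s t)).prod (volume.restrict (Set.Ioc s t))) := by
      have heq : (Function.uncurry fun x τ => u' x * (Set.Ioc s x).indicator w τ)
          = fun p : ℝ × ℝ => u' p.1 *
            ({q : ℝ × ℝ | s < q.2 ∧ q.2 ≤ q.1}.indicator (fun q => w q.2) p) := by
        ext p
        by_cases h : s < p.2 ∧ p.2 ≤ p.1 <;>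
          simp [Function.uncurry, Set.indicator_apply, Set.mem_Ioc, h]
      rw [heq]
      refine Integrable.mono' (((integrable_const M).mul_prod wI.norm)) ?_ ?_
      · exact ((hu'cont.measurable.comp measurable_fst).mul
          ((hwm.measurable.comp measurable_snd).indicator hsetm)).aestronglyMeasurable
      · rw [Measure.prod_restrict]
        refine ae_restrict_of_forall_mem (measurableSet_Ioc.prod measurableSet_Ioc)
          (fun p hp => ?_)
        have h1 : ‖u' p.1‖ ≤ M := hM p.1 (Set.Ioc_subset_Icc_self hp.1)
        have h2 : ‖{q : ℝ × ℝ | s < q.2 ∧ q.2 ≤ q.1}.indicator (fun q => w q.2) p‖ ≤ ‖w p.2‖ :=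
          norm_indicator_le_norm_self _ p
        calc ‖u' p.1 * _‖ = ‖u' p.1‖ * ‖_‖ := norm_mul _ _
          _ ≤ M * ‖w p.2‖ := mul_le_mul h1 h2 (norm_nonneg _) ((norm_nonneg _).trans h1)
    rw [e1, integral_integral_swap hint2]
    have e2 : (∫ τ in Set.Ioc s t, ∫ x in Set.Ioc s t, u' x * (Set.Ioc s x).indicator w τ)
        = ∫ τ in Set.Ioc s t, (u t - u τ) * w τ := by
      refine setIntegral_congr_fun measurableSet_Ioc (fun τ hτ => ?_)
      have e3 : (fun x => u' x * (Set.Ioc s x).indicator w τ)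
          = fun x => (Set.Ici τ).indicator (fun x => u' x * w τ) x := by
        ext x
        by_cases h : τ ≤ x <;>
          simp [Set.indicator_apply, Set.mem_Ici, Set.mem_Ioc, h, hτ.1]
      rw [e3, setIntegral_indicator measurableSet_Ici]
      have e4 : Set.Ioc s t ∩ Set.Ici τ = Set.Icc τ t := by
        ext x
        simp only [Set.mem_inter_iff, Set.mem_Ioc, Set.mem_Ici, Set.mem_Icc]
        exact ⟨fun h => ⟨h.2, h.1.2⟩, fun h => ⟨⟨lt_of_lt_of_le hτ.1 h.1, h.2⟩, h.1⟩⟩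
      rw [e4, MeasureTheory.integral_mul_const, integral_Icc_eq_integral_Ioc, ← integral_of_le hτ.2,
        ftc τ ⟨hτ.1.le, hτ.2⟩]
    rw [e2]
    have e5 : (∫ τ in Set.Ioc s t, (u t - u τ) * w τ)
        = (∫ τ in Set.Ioc s t, u t * w τ) - ∫ τ in Set.Ioc s t, u τ * w τ := by
      rw [← integral_sub (wI.const_mul (u t)) uwI]
      refine setIntegral_congr_fun measurableSet_Ioc (fun τ hτ => ?_)
      ring
    rw [e5, MeasureTheory.integral_const_mul]
  have uwII : IntervalIntegrable (fun x => u x * w x) volume s t := by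
    rw [intervalIntegrable_iff_integrableOn_Ioc_of_le hst]; exact uwI
  have : (∫ τ in s..t, w τ) = v t - v s := by rw [hvt]; ring
  rw [this] at key
  rw [step1, step2, key]
  ring


noncomputable def Rf (e μ : ℝ) (j : ℕ) (x : ℝ) : ℝ :=
  (x - e) ^ (j + 1) / ((j + 1).factorial : ℝ) - μ * ((x - e) ^ j / (j.factorial : ℝ))

lemma fac_cast (k : ℕ) : (((k + 1).factorial : ℕ) : ℝ) = (k + 1) * (k.factorial : ℝ) := by
  rw [Nat.factorial_succ]; push_cast; ring

lemma fac_ne (k : ℕ) : ((k.factorial : ℕ) : ℝ) ≠ 0 := by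
  exact_mod_cast k.factorial_ne_zero

lemma Rf_cont (e μ : ℝ) (j : ℕ) : Continuous (Rf e μ j) := by
  unfold Rf
  fun_prop

lemma pow_shift_deriv (e : ℝ) (k : ℕ) (x : ℝ) :
    HasDerivAt (fun x => (x - e) ^ (k + 1)) ((k + 1) * (x - e) ^ k) x := by
  have := ((hasDerivAt_id x).sub_const e).pow (k + 1)
  exact this.congr_deriv (by simp)

lemma Rf_deriv (e μ : ℝ) (j : ℕ) (x : ℝ) :
    HasDerivAt (Rf e μ (j + 1)) (Rf e μ j x) x := by
  have h1 := (pow_shift_deriv e (j + 1) x).div_const (((j + 2).factorial : ℕ) : ℝ)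
  have h2 := ((pow_shift_deriv e j x).div_const (((j + 1).factorial : ℕ) : ℝ)).const_mul μ
  have h := h1.sub h2
  refine h.congr_deriv ?_
  unfold Rf
  rw [show (j + 2) = (j + 1) + 1 from rfl, fac_cast (j + 1), fac_cast j]
  have h1 : ((j:ℝ) + 1) ≠ 0 := by positivity
  have h2 : ((j:ℝ) + 1 + 1) ≠ 0 := by positivity
  have h3 := fac_ne j
  push_cast
  field_simp

lemma telesc (E R : ℕ → ℝ → ℝ) (N : ℕ) (x : ℝ)
    (hE : ∀ j ≤ N, HasDerivAt (E j) (E (j + 1) x) x)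
    (hR0 : HasDerivAt (R 0) 1 x)
    (hR : ∀ j < N, HasDerivAt (R (j + 1)) (R j x) x) :
    HasDerivAt (fun y => ∑ j ∈ Finset.range (N + 1), (-1 : ℝ) ^ j * R j y * E j y)
      (E 0 x + (-1 : ℝ) ^ N * R N x * E (N + 1) x) x := by
  induction N with
  | zero =>
    have h := hR0.mul (hE 0 le_rfl)
    have h2 : HasDerivAt (fun y => ∑ j ∈ Finset.range 1, (-1 : ℝ) ^ j * R j y * E j y)
        (1 * E 0 x + R 0 x * E 1 x) x := by
      exact h.congr_of_eventuallyEq (Filter.Eventually.of_forall fun y => by simp)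
    convert h2 using 1; ring
  | succ N ih =>
    have ih' := ih (fun j hj => hE j (le_trans hj (Nat.le_succ N)))
      (fun j hj => hR j (lt_trans hj (Nat.lt_succ_self N)))
    have hnew : HasDerivAt (fun y => (-1 : ℝ) ^ (N + 1) * (R (N + 1) y * E (N + 1) y))
        ((-1 : ℝ) ^ (N + 1) * (R N x * E (N + 1) x + R (N + 1) x * E (N + 2) x)) x :=
      ((hR N (Nat.lt_succ_self N)).mul (hE (N + 1) le_rfl)).const_mul _
    have hsum := ih'.add hnew
    have heq : (fun y => (∑ j ∈ Finset.range (N + 1), (-1 : ℝ) ^ j * R j y * E j y)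
        + (-1 : ℝ) ^ (N + 1) * (R (N + 1) y * E (N + 1) y))
        = fun y => ∑ j ∈ Finset.range (N + 2), (-1 : ℝ) ^ j * R j y * E j y := by
      funext y; conv_rhs => rw [Finset.sum_range_succ]
      ring
    exact (hsum.congr_of_eventuallyEq (Filter.Eventually.of_forall fun y =>
      (congrFun heq y).symm)).congr_deriv (by ring)

lemma Rf_deriv0 (e μ : ℝ) (x : ℝ) : HasDerivAt (Rf e μ 0) 1 x := by
  have h := ((hasDerivAt_id x).sub_const e).sub_const μ
  have heq : Rf e μ 0 = fun x => (x - e) - μ := by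
    funext y; unfold Rf; simp [Nat.factorial]
  rw [heq]; simpa using h

lemma Rf_reflect (e1 e2 μ : ℝ) (j : ℕ) (x : ℝ) (hx : x - e2 = -(x - e1)) :
    Rf e2 (-μ) j x = (-1 : ℝ) ^ (j + 1) * Rf e1 μ j x := by
  unfold Rf
  rw [hx]
  have p1 : (-(x - e1)) ^ (j + 1) = (-1 : ℝ) ^ (j + 1) * (x - e1) ^ (j + 1) := by rw [neg_pow]
  have p2 : (-(x - e1)) ^ j = (-1 : ℝ) ^ j * (x - e1) ^ j := by rw [neg_pow]
  rw [p1, p2]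
  ring

lemma Rf_zero (e μ : ℝ) (j : ℕ) (hj : 1 ≤ j) : Rf e μ j e = 0 := by
  unfold Rf
  rw [sub_self, zero_pow (by omega), zero_pow (by omega)]
  simp

lemma Rf_zero0 (e μ : ℝ) : Rf e μ 0 e = -μ := by
  unfold Rf; simp [Nat.factorial]

lemma sum_even (F : ℕ → ℝ) (m : ℕ) (h0 : ∀ j, Odd j → F j = 0) :
    ∑ j ∈ Finset.range (2 * m + 1), F j = ∑ i ∈ Finset.range (m + 1), F (2 * i) := by
  induction m with
  | zero => simp
  | succ k ih =>
    rw [show 2 * (k + 1) + 1 = (2 * k + 1) + 1 + 1 by ring]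
    rw [Finset.sum_range_succ, Finset.sum_range_succ (n := 2 * k + 1), ih,
      Finset.sum_range_succ (n := k + 1), h0 (2 * k + 1) ⟨k, by ring⟩]
    rw [show 2 * k + 1 + 1 = 2 * (k + 1) by ring]
    ring

lemma half_ibp (E : ℕ → ℝ → ℝ) (e μ s t A B : ℝ) (m : ℕ) (hm : 1 ≤ m)
    (hst : s ≤ t) (hsub : Set.Icc s t ⊆ Set.Icc A B)
    (hE : ∀ j < 2 * m - 1, ∀ x ∈ Set.Icc A B, HasDerivAt (E j) (E (j + 1) x) x)
    (hcont : ContinuousOn (E (2 * m - 1)) (Set.Icc A B))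
    (hwm : StronglyMeasurable (E (2 * m)))
    (hw : IntervalIntegrable (E (2 * m)) volume s t)
    (hv : ∀ x ∈ Set.Icc s t, E (2 * m - 1) x = E (2 * m - 1) s + ∫ τ in s..x, E (2 * m) τ) :
    ∫ x in s..t, Rf e μ (2 * m - 1) x * E (2 * m) x
      = (Rf e μ (2 * m - 1) t * E (2 * m - 1) t
          - ∑ j ∈ Finset.range (2 * m - 1), (-1 : ℝ) ^ j * Rf e μ j t * E j t)
        - (Rf e μ (2 * m - 1) s * E (2 * m - 1) s
          - ∑ j ∈ Finset.range (2 * m - 1), (-1 : ℝ) ^ j * Rf e μ j s * E j s)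
        + ∫ x in s..t, E 0 x := by
  have h1 : 2 * m - 1 = (2 * m - 2) + 1 := by omega
  have hicc : Set.uIcc s t = Set.Icc s t := Set.uIcc_of_le hst
  have hE0cont : ContinuousOn (E 0) (Set.Icc A B) :=
    fun x hx => ((hE 0 (by omega) x hx).continuousAt).continuousWithinAt
  have ibp := ibp_ac (u := Rf e μ (2 * m - 1)) (u' := Rf e μ (2 * m - 2)) (w := E (2 * m))
    (v := E (2 * m - 1)) hst
    (fun x _ => by rw [h1]; exact Rf_deriv e μ (2 * m - 2) x)
    (Rf_cont e μ (2 * m - 2)) hwm hw hv (hcont.mono hsub)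
  set W : ℝ → ℝ := fun y => ∑ j ∈ Finset.range (2 * m - 1), (-1 : ℝ) ^ j * Rf e μ j y * E j y
    with hW
  have hWder : ∀ x ∈ Set.uIcc s t, HasDerivAt W
      (E 0 x + Rf e μ (2 * m - 2) x * E (2 * m - 1) x) x := by
    intro x hx
    rw [hicc] at hx
    have htl := telesc E (Rf e μ) (2 * m - 2) x
      (fun j hj => hE j (by omega) x (hsub hx))
      (Rf_deriv0 e μ x) (fun j _ => Rf_deriv e μ j x)
    rw [show (2 * m - 2) + 1 = 2 * m - 1 by omega] at htl
    have hev : (-1 : ℝ) ^ (2 * m - 2) = 1 := Even.neg_one_pow ⟨m - 1, by omega⟩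
    rw [hev, one_mul] at htl
    exact htl
  have hintegrand : IntervalIntegrable
      (fun x => E 0 x + Rf e μ (2 * m - 2) x * E (2 * m - 1) x) volume s t := by
    apply ContinuousOn.intervalIntegrable
    rw [hicc]
    exact (hE0cont.mono hsub).add
      (((Rf_cont e μ (2 * m - 2)).continuousOn).mul (hcont.mono hsub))
  have ftc2 := integral_eq_sub_of_hasDerivAt hWder hintegrand
  have hE0int : IntervalIntegrable (E 0) volume s t := by
    apply ContinuousOn.intervalIntegrable; rw [hicc]; exact hE0cont.mono hsub
  have hRvint : IntervalIntegrable (fun x => Rf e μ (2 * m - 2) x * E (2 * m - 1) x)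
      volume s t := by
    apply ContinuousOn.intervalIntegrable; rw [hicc]
    exact ((Rf_cont e μ (2 * m - 2)).continuousOn).mul (hcont.mono hsub)
  rw [intervalIntegral.integral_add hE0int hRvint] at ftc2
  rw [ibp]
  have hkey : ∫ x in s..t, Rf e μ (2 * m - 2) x * E (2 * m - 1) x
      = W t - W s - ∫ x in s..t, E 0 x := by linarith
  rw [hkey]
  ring

section psi
variable (θ hR : ℝ) (m : ℕ)

private noncomputable def psi (t : ℝ) : ℝ :=
  t ^ (2 * m) - θ * (2 * (m : ℝ)) * hR * t ^ (2 * m - 1)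

lemma psi_deriv (hm : 1 ≤ m) (t : ℝ) :
    HasDerivAt (psi θ hR m)
      ((2 * (m : ℝ)) * t ^ (2 * m - 2) * (t - θ * (2 * (m : ℝ) - 1) * hR)) t := by
  have h1 := (hasDerivAt_pow (2 * m) t).sub
    ((hasDerivAt_pow (2 * m - 1) t).const_mul (θ * (2 * (m : ℝ)) * hR))
  refine h1.congr_deriv ?_
  have e1 : 2 * m - 1 = (2 * m - 2) + 1 := by omega
  have e2 : 2 * m - 1 - 1 = 2 * m - 2 := by omega
  have e3 : ((2 * m - 1 : ℕ) : ℝ) = 2 * (m : ℝ) - 1 := by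
    rw [Nat.cast_sub (by omega)]; push_cast; ring
  rw [e2, e3]
  rw [show t ^ (2 * m - 1) = t ^ (2 * m - 2) * t by rw [← pow_succ, ← e1]]
  push_cast
  ring

lemma psi_zero (hm : 1 ≤ m) : psi θ hR m 0 = 0 := by
  unfold psi
  rw [zero_pow (by omega : 2 * m ≠ 0), zero_pow (by omega : 2 * m - 1 ≠ 0)]
  ring

lemma psi_end (hm : 1 ≤ m) : psi θ hR m hR = hR ^ (2 * m) * (1 - θ * (2 * (m : ℝ))) := by
  unfold psi
  rw [show hR ^ (2 * m) = hR ^ (2 * m - 1) * hR by rw [← pow_succ]; congr 1; omega]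
  ring

lemma psi_star (hm : 1 ≤ m) :
    psi θ hR m (θ * (2 * (m : ℝ) - 1) * hR)
      = -(θ ^ (2 * m) * (2 * (m : ℝ) - 1) ^ (2 * m - 1) * hR ^ (2 * m)) := by
  unfold psi
  set s := θ * (2 * (m : ℝ) - 1) * hR with hs
  have e1 : s ^ (2 * m) = s ^ (2 * m - 1) * s := by rw [← pow_succ]; congr 1; omega
  have e2 : s ^ (2 * m - 1) = θ ^ (2 * m - 1) * (2 * (m : ℝ) - 1) ^ (2 * m - 1) * hR ^ (2 * m - 1) := by
    rw [hs, mul_pow, mul_pow]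
  have e3 : θ ^ (2 * m) = θ ^ (2 * m - 1) * θ := by rw [← pow_succ]; congr 1; omega
  have e4 : hR ^ (2 * m) = hR ^ (2 * m - 1) * hR := by rw [← pow_succ]; congr 1; omega
  rw [e1, e2, e3, e4]
  ring

lemma psi_cont : Continuous (psi θ hR m) := by unfold psi; fun_prop

lemma psi_anti (hm : 1 ≤ m) (hθ0 : 0 ≤ θ) {p q : ℝ} (h0 : 0 ≤ p)
    (hq : q ≤ θ * (2 * (m : ℝ) - 1) * hR) :
    AntitoneOn (psi θ hR m) (Set.Icc p q) := by
  apply antitoneOn_of_deriv_nonpos (convex_Icc p q) (psi_cont θ hR m).continuousOn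
  · intro x hx
    exact ((psi_deriv θ hR m hm x).differentiableAt).differentiableWithinAt
  · intro x hx
    rw [interior_Icc] at hx
    rw [(psi_deriv θ hR m hm x).deriv]
    have hx0 : 0 ≤ x := le_trans h0 hx.1.le
    have hx1 : x - θ * (2 * (m : ℝ) - 1) * hR ≤ 0 := by
      have := hx.2.le.trans hq; linarith
    have : (0:ℝ) ≤ (2 * (m : ℝ)) * x ^ (2 * m - 2) := by positivity
    exact mul_nonpos_of_nonneg_of_nonpos this hx1

lemma psi_mono (hm : 1 ≤ m) (hθ0 : 0 ≤ θ) {q : ℝ}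
    (hp : 0 ≤ θ * (2 * (m : ℝ) - 1) * hR) :
    MonotoneOn (psi θ hR m) (Set.Icc (θ * (2 * (m : ℝ) - 1) * hR) q) := by
  apply monotoneOn_of_deriv_nonneg (convex_Icc _ q) (psi_cont θ hR m).continuousOn
  · intro x hx
    exact ((psi_deriv θ hR m hm x).differentiableAt).differentiableWithinAt
  · intro x hx
    rw [interior_Icc] at hx
    rw [(psi_deriv θ hR m hm x).deriv]
    have hx0 : 0 ≤ x := le_trans hp hx.1.le
    have : (0:ℝ) ≤ (2 * (m : ℝ)) * x ^ (2 * m - 2) := by positivity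
    exact mul_nonneg this (by linarith [hx.1])

lemma psi_range (hm : 1 ≤ m) (hh : 0 < hR) (hθ0 : 0 ≤ θ) :
    (∀ t ∈ Set.Icc (0:ℝ) hR, θ * (2 * (m : ℝ) - 1) ≤ 1 →
        -(θ ^ (2 * m) * (2 * (m : ℝ) - 1) ^ (2 * m - 1) * hR ^ (2 * m)) ≤ psi θ hR m t) ∧
    (∀ t ∈ Set.Icc (0:ℝ) hR, 1 ≤ θ * (2 * (m : ℝ) - 1) →
        hR ^ (2 * m) * (1 - θ * (2 * (m : ℝ))) ≤ psi θ hR m t) ∧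
    (∀ t ∈ Set.Icc (0:ℝ) hR,
        psi θ hR m t ≤ max 0 (hR ^ (2 * m) * (1 - θ * (2 * (m : ℝ))))) := by
  set ts := θ * (2 * (m : ℝ) - 1) * hR with hts
  have hts0 : 0 ≤ ts := by
    have : (0:ℝ) ≤ 2 * (m : ℝ) - 1 := by
      have : (1:ℝ) ≤ (m:ℝ) := by exact_mod_cast hm
      linarith
    positivity
  refine ⟨?_, ?_, ?_⟩
  · -- lower bound by psi(ts), case ts ≤ hR
    intro t ht hcase
    have htsh : ts ≤ hR := by
      rw [hts]
      nlinarith [hh, hcase]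
    rw [← psi_star θ hR m hm]
    rcases le_total t ts with h | h
    · exact (psi_anti θ hR m hm hθ0 le_rfl le_rfl) ⟨ht.1, h⟩ ⟨hts0, le_rfl⟩ h
    · exact (psi_mono θ hR m hm hθ0 (q := hR) hts0) ⟨le_rfl, htsh⟩ ⟨h, ht.2⟩ h
  · -- lower bound by psi(hR), case hR ≤ ts
    intro t ht hcase
    have htsh : hR ≤ ts := by
      rw [hts]
      nlinarith [hh, hcase]
    rw [← psi_end θ hR m hm]
    exact (psi_anti θ hR m hm hθ0 (p := 0) (q := hR) le_rfl htsh) ht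
      ⟨hh.le, le_rfl⟩ ht.2
  · intro t ht
    rcases le_total t ts with h | h
    · have h0m : (0:ℝ) ∈ Set.Icc (0:ℝ) t := ⟨le_rfl, ht.1⟩
      have htm : t ∈ Set.Icc (0:ℝ) t := ⟨ht.1, le_rfl⟩
      have hb := psi_anti θ hR m hm hθ0 (p := (0:ℝ)) (q := t) le_rfl h h0m htm ht.1
      rw [psi_zero θ hR m hm] at hb
      exact le_trans hb (le_max_left _ _)
    · have htsh : ts ≤ hR := le_trans h ht.2
      have hb := psi_mono θ hR m hm hθ0 (q := hR) hts0 ⟨h, ht.2⟩ ⟨htsh, le_rfl⟩ ht.2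
      rw [psi_end θ hR m hm] at hb
      exact le_trans hb (le_max_right _ _)

set_option maxHeartbeats 1600000 in
theorem stmt12 (a b θ : ℝ) (m : ℕ) (f : ℝ → ℝ) (γ Γ : ℝ)
    (hab : a < b) (hθ : θ ∈ Set.Icc (0 : ℝ) 1) (hm : 1 ≤ m)
    (hd : ∀ k < 2 * m - 1, ∀ x ∈ Set.Icc a b,
      HasDerivAt (iteratedDeriv k f) (iteratedDeriv (k + 1) f x) x)
    (hcont : ContinuousOn (iteratedDeriv (2 * m - 1) f) (Set.Icc a b))
    (hint : IntervalIntegrable (iteratedDeriv (2 * m) f) volume a b)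
    (hftc : ∀ x ∈ Set.Icc a b,
      iteratedDeriv (2 * m - 1) f x
        = iteratedDeriv (2 * m - 1) f a + ∫ t in a..x, iteratedDeriv (2 * m) f t)
    (hγ : ∀ x ∈ Set.Icc a b, γ ≤ iteratedDeriv (2 * m) f x)
    (hΓ : ∀ x ∈ Set.Icc a b, iteratedDeriv (2 * m) f x ≤ Γ) :
    (1 ≤ θ * (2 * (m : ℝ) - 1) →
      |(∫ x in a..b, f x) - quadF a b θ (2 * m) f
          - (b - a) ^ (2 * m + 1) / (((2 * m).factorial : ℝ) * 2 ^ (2 * m))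
            * (1 / (2 * (m : ℝ) + 1) - θ)
            * ((iteratedDeriv (2 * m - 1) f b - iteratedDeriv (2 * m - 1) f a) / (b - a))|
        ≤ ((iteratedDeriv (2 * m - 1) f b - iteratedDeriv (2 * m - 1) f a) / (b - a) - γ)
          * ((b - a) ^ (2 * m + 1) / (((2 * m).factorial : ℝ) * 2 ^ (2 * m)))
          * (max (θ - 1 / (2 * (m : ℝ) + 1)) (θ * (2 * (m : ℝ) - 1) - 2 * (m : ℝ) / (2 * (m : ℝ) + 1)))) ∧
    (θ * (2 * (m : ℝ) - 1) < 1 →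
      |(∫ x in a..b, f x) - quadF a b θ (2 * m) f
          - (b - a) ^ (2 * m + 1) / (((2 * m).factorial : ℝ) * 2 ^ (2 * m))
            * (1 / (2 * (m : ℝ) + 1) - θ)
            * ((iteratedDeriv (2 * m - 1) f b - iteratedDeriv (2 * m - 1) f a) / (b - a))|
        ≤ ((iteratedDeriv (2 * m - 1) f b - iteratedDeriv (2 * m - 1) f a) / (b - a) - γ)
          * ((b - a) ^ (2 * m + 1) / (((2 * m).factorial : ℝ) * 2 ^ (2 * m)))
          * (max (max |θ - 1 / (2 * (m : ℝ) + 1)|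
                |θ * (2 * (m : ℝ) - 1) - 2 * (m : ℝ) / (2 * (m : ℝ) + 1)|)
            |θ - 1 / (2 * (m : ℝ) + 1) - θ ^ (2 * m) * (2 * (m : ℝ) - 1) ^ (2 * m - 1)|)) := by
  obtain ⟨hθ0, hθ1⟩ := hθ
  have hab' : a ≤ b := hab.le
  set c : ℝ := (a + b) / 2 with hc
  set h : ℝ := (b - a) / 2 with hh_def
  set μ : ℝ := θ * (b - a) / 2 with hμ
  have hh : 0 < h := by rw [hh_def]; linarith
  have hac : a ≤ c := by rw [hc]; linarith
  have hcb : c ≤ b := by rw [hc]; linarith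
  have hca : c - a = h := by rw [hc, hh_def]; ring
  have hba : b - a = 2 * h := by rw [hh_def]; ring
  have hμh : μ = θ * h := by rw [hμ, hh_def]; ring
  have cm1 : ((2 * m - 1 : ℕ) : ℝ) = 2 * (m : ℝ) - 1 := by
    rw [Nat.cast_sub (by omega)]; push_cast; ring
  have efac : (((2 * m).factorial : ℕ) : ℝ)
      = (2 * (m : ℝ)) * (((2 * m - 1).factorial : ℕ) : ℝ) := by
    rw [show 2 * m = (2 * m - 1) + 1 by omega, fac_cast, cm1]
    rw [show (2 * m - 1 + 1) = 2 * m by omega]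
    ring
  have efac2 : (((2 * m + 1).factorial : ℕ) : ℝ)
      = (2 * (m : ℝ) + 1) * (((2 * m).factorial : ℕ) : ℝ) := by
    rw [fac_cast (2 * m)]; push_cast; ring
  have hfacpos : (0:ℝ) < (((2 * m).factorial : ℕ) : ℝ) := by
    exact_mod_cast (2 * m).factorial_pos
  -- measurability of the top derivative
  have hwm : StronglyMeasurable (iteratedDeriv (2 * m) f) := by
    rw [show 2 * m = (2 * m - 1) + 1 by omega, iteratedDeriv_succ]
    exact (measurable_deriv _).stronglyMeasurable
  -- branch formulas for G
  have hG1 : ∀ x, x ≤ c → G a b θ (2 * m) x = Rf a μ (2 * m - 1) x := by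
    intro x hx
    unfold G Rf
    rw [if_pos (by rw [← hc]; exact hx)]
    rw [show (2 * m - 1) + 1 = 2 * m by omega]
    have e1 : (x - a) ^ (2 * m) = (x - a) ^ (2 * m - 1) * (x - a) := by
      rw [← pow_succ]; congr 1; omega
    rw [e1, efac, hμ]
    have h1 := fac_ne (2 * m - 1)
    have h2 : (2 * (m : ℝ)) ≠ 0 := by positivity
    push_cast
    field_simp
  have hGc : Rf a μ (2 * m - 1) c = Rf b (-μ) (2 * m - 1) c := by
    rw [Rf_reflect a b μ (2 * m - 1) c (by rw [hc]; ring)]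
    rw [show (2 * m - 1) + 1 = 2 * m by omega]
    rw [Even.neg_one_pow ⟨m, by omega⟩, one_mul]
  have hG2 : ∀ x, c ≤ x → G a b θ (2 * m) x = Rf b (-μ) (2 * m - 1) x := by
    intro x hx
    rcases le_or_gt x c with hxc | hxc
    · have hxeq : x = c := le_antisymm hxc hx
      rw [hxeq, hG1 c le_rfl, hGc]
    · unfold G Rf
      rw [if_neg (by rw [← hc]; exact not_le.mpr hxc)]
      rw [show (2 * m - 1) + 1 = 2 * m by omega]
      have e1 : (x - b) ^ (2 * m) = (x - b) ^ (2 * m - 1) * (x - b) := by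
        rw [← pow_succ]; congr 1; omega
      rw [e1, efac, hμ]
      have h1 := fac_ne (2 * m - 1)
      have h2 : (2 * (m : ℝ)) ≠ 0 := by positivity
      push_cast
      field_simp
      ring
  -- G is ψ/(2m)! at a point of [0,h]
  have hRfpsi1 : ∀ x : ℝ, Rf a μ (2 * m - 1) x
      = psi θ h m (x - a) / (((2 * m).factorial : ℕ) : ℝ) := by
    intro x
    unfold Rf psi
    rw [show (2 * m - 1) + 1 = 2 * m by omega, efac, hμh]
    have h1 := fac_ne (2 * m - 1)
    have h2 : (2 * (m : ℝ)) ≠ 0 := by positivity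
    field_simp
  have hRfpsi2 : ∀ x : ℝ, Rf b (-μ) (2 * m - 1) x
      = psi θ h m (b - x) / (((2 * m).factorial : ℕ) : ℝ) := by
    intro x
    unfold Rf psi
    rw [show (2 * m - 1) + 1 = 2 * m by omega, efac, hμh]
    have e1 : (x - b) ^ (2 * m) = (b - x) ^ (2 * m) := by
      rw [show x - b = -(b - x) by ring, Even.neg_pow ⟨m, by omega⟩]
    have e2 : (x - b) ^ (2 * m - 1) = -(b - x) ^ (2 * m - 1) := by
      rw [show x - b = -(b - x) by ring, Odd.neg_pow ⟨m - 1, by omega⟩]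
    rw [e1, e2]
    have h1 := fac_ne (2 * m - 1)
    have h2 : (2 * (m : ℝ)) ≠ 0 := by positivity
    field_simp
  have hGpsi : ∀ x ∈ Set.Icc a b, ∃ t ∈ Set.Icc (0:ℝ) h,
      G a b θ (2 * m) x = psi θ h m t / (((2 * m).factorial : ℕ) : ℝ) := by
    intro x hx
    rcases le_or_gt x c with hxc | hxc
    · exact ⟨x - a, ⟨by linarith [hx.1], by rw [hh_def]; rw [hc] at hxc; linarith⟩,
        by rw [hG1 x hxc, hRfpsi1]⟩
    · exact ⟨b - x, ⟨by linarith [hx.2], by rw [hh_def]; rw [hc] at hxc; linarith⟩,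
        by rw [hG2 x hxc.le, hRfpsi2]⟩
  -- measurability and boundedness of G
  have hGm : Measurable (G a b θ (2 * m)) := by
    unfold G
    exact Measurable.ite (measurableSet_le measurable_id measurable_const)
      (by fun_prop) (by fun_prop)
  obtain ⟨B0, hB0⟩ := isCompact_Icc.exists_bound_of_continuousOn
    ((psi_cont θ h m).continuousOn (s := Set.Icc (0:ℝ) h))
  have hGbd : ∀ x ∈ Set.Icc a b, ‖G a b θ (2 * m) x‖ ≤ B0 / (((2 * m).factorial : ℕ) : ℝ) := by
    intro x hx
    obtain ⟨t, ht, hGt⟩ := hGpsi x hx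
    rw [hGt, Real.norm_eq_abs, abs_div, abs_of_pos hfacpos]
    refine (div_le_div_iff_of_pos_right hfacpos).mpr ?_
    have := hB0 t ht
    rwa [Real.norm_eq_abs] at this
  -- integrability helpers
  have hGint : ∀ {s t : ℝ}, a ≤ s → s ≤ t → t ≤ b →
      IntervalIntegrable (G a b θ (2 * m)) volume s t := by
    intro s t has hst htb
    rw [intervalIntegrable_iff_integrableOn_Ioc_of_le hst]
    haveI : IsFiniteMeasure (volume.restrict (Set.Ioc s t)) :=
      ⟨by rw [Measure.restrict_apply_univ]; exact measure_Ioc_lt_top⟩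
    have h1 : IntegrableOn (fun x => G a b θ (2 * m) x * 1) (Set.Ioc s t) :=
      (integrable_const 1).bdd_mul (c := B0 / (((2 * m).factorial : ℕ) : ℝ))
        hGm.aestronglyMeasurable
        (ae_restrict_of_forall_mem measurableSet_Ioc
          (fun x hx => hGbd x ⟨le_trans has hx.1.le, le_trans hx.2 htb⟩))
    simpa using h1
  have hwsub : ∀ {s t : ℝ}, a ≤ s → s ≤ t → t ≤ b →
      IntervalIntegrable (iteratedDeriv (2 * m) f) volume s t := by
    intro s t has hst htb
    exact hint.mono_set (by
      rw [Set.uIcc_of_le hst, Set.uIcc_of_le hab']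
      exact Set.Icc_subset_Icc has htb)
  have hprod_int : ∀ {s t : ℝ}, a ≤ s → s ≤ t → t ≤ b →
      IntervalIntegrable (fun x => G a b θ (2 * m) x * iteratedDeriv (2 * m) f x)
        volume s t := by
    intro s t has hst htb
    rw [intervalIntegrable_iff_integrableOn_Ioc_of_le hst]
    refine ((hwsub has hst htb).1).bdd_mul (c := B0 / (((2 * m).factorial : ℕ) : ℝ))
      hGm.aestronglyMeasurable ?_
    exact ae_restrict_of_forall_mem measurableSet_Ioc
      (fun x hx => hGbd x ⟨le_trans has hx.1.le, le_trans hx.2 htb⟩)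
  have hfc : ContinuousOn (iteratedDeriv 0 f) (Set.Icc a b) :=
    fun x hx => (hd 0 (by omega) x hx).continuousAt.continuousWithinAt
  have hsub_ac : Set.Icc a c ⊆ Set.Icc a b := Set.Icc_subset_Icc le_rfl hcb
  have hsub_cb : Set.Icc c b ⊆ Set.Icc a b := Set.Icc_subset_Icc hac le_rfl
  have hfint_ac : IntervalIntegrable (iteratedDeriv 0 f) volume a c :=
    ContinuousOn.intervalIntegrable (by rw [Set.uIcc_of_le hac]; exact hfc.mono hsub_ac)
  have hfint_cb : IntervalIntegrable (iteratedDeriv 0 f) volume c b :=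
    ContinuousOn.intervalIntegrable (by rw [Set.uIcc_of_le hcb]; exact hfc.mono hsub_cb)
  -- the two integration-by-parts identities
  have hv1 : ∀ x ∈ Set.Icc a c, iteratedDeriv (2 * m - 1) f x
      = iteratedDeriv (2 * m - 1) f a + ∫ τ in a..x, iteratedDeriv (2 * m) f τ :=
    fun x hx => hftc x (hsub_ac hx)
  have hv2 : ∀ x ∈ Set.Icc c b, iteratedDeriv (2 * m - 1) f x
      = iteratedDeriv (2 * m - 1) f c + ∫ τ in c..x, iteratedDeriv (2 * m) f τ := by
    intro x hx
    have h1 := hftc x (hsub_cb hx)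
    have h2 := hftc c ⟨hac, hcb⟩
    have h3 := integral_add_adjacent_intervals (a := a) (b := c) (c := x)
      (hwsub le_rfl hac hcb) (hwsub hac hx.1 hx.2)
    linarith
  have I1 : ∫ x in a..c, Rf a μ (2 * m - 1) x * iteratedDeriv (2 * m) f x
      = (Rf a μ (2 * m - 1) c * iteratedDeriv (2 * m - 1) f c
          - ∑ j ∈ Finset.range (2 * m - 1), (-1 : ℝ) ^ j * Rf a μ j c * iteratedDeriv j f c)
        - (Rf a μ (2 * m - 1) a * iteratedDeriv (2 * m - 1) f a
          - ∑ j ∈ Finset.range (2 * m - 1), (-1 : ℝ) ^ j * Rf a μ j a * iteratedDeriv j f a)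
        + ∫ x in a..c, iteratedDeriv 0 f x :=
    half_ibp (fun k => iteratedDeriv k f) a μ a c a b m hm hac hsub_ac hd hcont hwm
      (hwsub le_rfl hac hcb) hv1
  have I2 : ∫ x in c..b, Rf b (-μ) (2 * m - 1) x * iteratedDeriv (2 * m) f x
      = (Rf b (-μ) (2 * m - 1) b * iteratedDeriv (2 * m - 1) f b
          - ∑ j ∈ Finset.range (2 * m - 1), (-1 : ℝ) ^ j * Rf b (-μ) j b * iteratedDeriv j f b)
        - (Rf b (-μ) (2 * m - 1) c * iteratedDeriv (2 * m - 1) f c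
          - ∑ j ∈ Finset.range (2 * m - 1), (-1 : ℝ) ^ j * Rf b (-μ) j c * iteratedDeriv j f c)
        + ∫ x in c..b, iteratedDeriv 0 f x :=
    half_ibp (fun k => iteratedDeriv k f) b (-μ) c b a b m hm hcb hsub_cb hd hcont hwm
      (hwsub hac hcb le_rfl) hv2
  have hcongr1 : ∫ x in a..c, G a b θ (2 * m) x * iteratedDeriv (2 * m) f x
      = ∫ x in a..c, Rf a μ (2 * m - 1) x * iteratedDeriv (2 * m) f x := by
    refine integral_congr (fun x hx => ?_)
    rw [Set.uIcc_of_le hac] at hx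
    rw [hG1 x hx.2]
  have hcongr2 : ∫ x in c..b, G a b θ (2 * m) x * iteratedDeriv (2 * m) f x
      = ∫ x in c..b, Rf b (-μ) (2 * m - 1) x * iteratedDeriv (2 * m) f x := by
    refine integral_congr (fun x hx => ?_)
    rw [Set.uIcc_of_le hcb] at hx
    rw [hG2 x hx.1]
  -- the evaluations
  have hV1a : Rf a μ (2 * m - 1) a * iteratedDeriv (2 * m - 1) f a
      - ∑ j ∈ Finset.range (2 * m - 1), (-1 : ℝ) ^ j * Rf a μ j a * iteratedDeriv j f a
      = μ * f a := by
    rw [Rf_zero a μ (2 * m - 1) (by omega)]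
    rw [Finset.sum_eq_single 0 (fun j _ hj0 => by rw [Rf_zero a μ j (by omega)]; ring)
      (fun h0 => absurd (Finset.mem_range.mpr (by omega)) h0)]
    rw [Rf_zero0, pow_zero, iteratedDeriv_zero]
    ring
  have hV2b : Rf b (-μ) (2 * m - 1) b * iteratedDeriv (2 * m - 1) f b
      - ∑ j ∈ Finset.range (2 * m - 1), (-1 : ℝ) ^ j * Rf b (-μ) j b * iteratedDeriv j f b
      = -(μ * f b) := by
    rw [Rf_zero b (-μ) (2 * m - 1) (by omega)]
    rw [Finset.sum_eq_single 0 (fun j _ hj0 => by rw [Rf_zero b (-μ) j (by omega)]; ring)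
      (fun h0 => absurd (Finset.mem_range.mpr (by omega)) h0)]
    rw [Rf_zero0, pow_zero, iteratedDeriv_zero]
    ring
  have hs : (∑ j ∈ Finset.range (2 * m - 1), (-1 : ℝ) ^ j * Rf a μ j c * iteratedDeriv j f c)
      - (∑ j ∈ Finset.range (2 * m - 1), (-1 : ℝ) ^ j * Rf b (-μ) j c * iteratedDeriv j f c)
      = ∑ i ∈ Finset.range m, 2 * Rf a μ (2 * i) c * iteratedDeriv (2 * i) f c := by
    rw [← Finset.sum_sub_distrib]
    have hterm : ∀ j ∈ Finset.range (2 * m - 1),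
        (-1 : ℝ) ^ j * Rf a μ j c * iteratedDeriv j f c
          - (-1 : ℝ) ^ j * Rf b (-μ) j c * iteratedDeriv j f c
        = ((-1 : ℝ) ^ j + 1) * Rf a μ j c * iteratedDeriv j f c := by
      intro j _
      rw [Rf_reflect a b μ j c (by rw [hc]; ring)]
      have hsq : (-1 : ℝ) ^ j * (-1 : ℝ) ^ j = 1 := by
        rw [← pow_add]; exact Even.neg_one_pow ⟨j, by ring⟩
      linear_combination (Rf a μ j c * iteratedDeriv j f c) * hsq
    rw [Finset.sum_congr rfl hterm]
    rw [show 2 * m - 1 = 2 * (m - 1) + 1 by omega]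
    rw [sum_even _ (m - 1) (fun j hj => by rw [Odd.neg_one_pow hj]; ring)]
    rw [show (m - 1) + 1 = m by omega]
    refine Finset.sum_congr rfl (fun i _ => ?_)
    rw [Even.neg_one_pow ⟨i, by ring⟩]
    norm_num
  have hquad : quadF a b θ (2 * m) f
      = μ * f a + μ * f b
        + ∑ i ∈ Finset.range m, 2 * Rf a μ (2 * i) c * iteratedDeriv (2 * i) f c := by
    unfold quadF
    rw [show (2 * m - 1) / 2 = m - 1 by omega]
    rw [← hc]
    have hsplit : Finset.range m = insert 0 (Finset.Icc 1 (m - 1)) := by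
      ext j; simp only [Finset.mem_range, Finset.mem_insert, Finset.mem_Icc]; omega
    rw [hsplit, Finset.sum_insert (by simp)]
    have hterm : ∀ i ∈ Finset.Icc 1 (m - 1),
        (1 - θ * (2 * (i : ℝ) + 1)) * (b - a) ^ (2 * i + 1)
            / (((2 * i + 1).factorial : ℝ) * 2 ^ (2 * i)) * iteratedDeriv (2 * i) f c
        = 2 * Rf a μ (2 * i) c * iteratedDeriv (2 * i) f c := by
      intro i _
      have hcoef : (1 - θ * (2 * (i : ℝ) + 1)) * (b - a) ^ (2 * i + 1)
          / (((2 * i + 1).factorial : ℝ) * 2 ^ (2 * i)) = 2 * Rf a μ (2 * i) c := by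
        unfold Rf
        rw [hca, hh_def, hμ, fac_cast (2 * i), div_pow, div_pow]
        have h1 := fac_ne (2 * i)
        have h2 : ((2 * i : ℕ) : ℝ) + 1 ≠ 0 := by positivity
        have h3 : (2 : ℝ) ^ (2 * i) ≠ 0 := by positivity
        push_cast
        field_simp
        ring
      rw [← hcoef]
    rw [Finset.sum_congr rfl hterm]
    have h0 : Rf a μ 0 c = h - μ := by
      unfold Rf; rw [hca]; simp [Nat.factorial]
    rw [h0, iteratedDeriv_zero, hba, hμh]
    ring
  have hIden : ∫ x in a..b, G a b θ (2 * m) x * iteratedDeriv (2 * m) f x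
      = (∫ x in a..b, f x) - quadF a b θ (2 * m) f := by
    rw [← integral_add_adjacent_intervals (hprod_int le_rfl hac hcb) (hprod_int hac hcb le_rfl)]
    rw [hcongr1, hcongr2, I1, I2]
    have hfjoin : (∫ x in a..c, iteratedDeriv 0 f x) + (∫ x in c..b, iteratedDeriv 0 f x)
        = ∫ x in a..b, f x := by
      rw [iteratedDeriv_zero] at hfint_ac hfint_cb ⊢
      exact integral_add_adjacent_intervals hfint_ac hfint_cb
    have hT : Rf b (-μ) (2 * m - 1) c = Rf a μ (2 * m - 1) c := hGc.symm
    rw [hquad, hT]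
    linarith [hV1a, hV2b, hs, hfjoin]
  -- value of the integral of G
  have hRderiv1 : ∀ x : ℝ, HasDerivAt (Rf a μ (2 * m)) (Rf a μ (2 * m - 1) x) x := by
    intro x
    have := Rf_deriv a μ (2 * m - 1) x
    rwa [show (2 * m - 1) + 1 = 2 * m by omega] at this
  have hRderiv2 : ∀ x : ℝ, HasDerivAt (Rf b (-μ) (2 * m)) (Rf b (-μ) (2 * m - 1) x) x := by
    intro x
    have := Rf_deriv b (-μ) (2 * m - 1) x
    rwa [show (2 * m - 1) + 1 = 2 * m by omega] at this
  have hPval : ∫ x in a..b, G a b θ (2 * m) x = 2 * Rf a μ (2 * m) c := by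
    rw [← integral_add_adjacent_intervals (hGint le_rfl hac hcb) (hGint hac hcb le_rfl)]
    have e1 : ∫ x in a..c, G a b θ (2 * m) x = Rf a μ (2 * m) c := by
      have ecg : ∫ x in a..c, G a b θ (2 * m) x = ∫ x in a..c, Rf a μ (2 * m - 1) x :=
        integral_congr (fun x hx => by
          rw [Set.uIcc_of_le hac] at hx; exact hG1 x hx.2)
      rw [ecg, integral_eq_sub_of_hasDerivAt (fun x _ => hRderiv1 x)
        ((Rf_cont a μ _).intervalIntegrable _ _)]
      rw [Rf_zero a μ (2 * m) (by omega)]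
      ring
    have e2 : ∫ x in c..b, G a b θ (2 * m) x = Rf a μ (2 * m) c := by
      have ecg : ∫ x in c..b, G a b θ (2 * m) x = ∫ x in c..b, Rf b (-μ) (2 * m - 1) x :=
        integral_congr (fun x hx => by
          rw [Set.uIcc_of_le hcb] at hx; exact hG2 x hx.1)
      rw [ecg, integral_eq_sub_of_hasDerivAt (fun x _ => hRderiv2 x)
        ((Rf_cont b (-μ) _).intervalIntegrable _ _)]
      rw [Rf_zero b (-μ) (2 * m) (by omega)]
      rw [Rf_reflect a b μ (2 * m) c (by rw [hc]; ring)]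
      rw [Odd.neg_one_pow ⟨m, by omega⟩]
      ring
    rw [e1, e2]; ring
  have hSint : ∫ x in a..b, iteratedDeriv (2 * m) f x
      = iteratedDeriv (2 * m - 1) f b - iteratedDeriv (2 * m - 1) f a := by
    have := hftc b ⟨hab', le_rfl⟩; linarith
  have hne : b - a ≠ 0 := by linarith
  have hRfc : Rf a μ (2 * m) c
      = h ^ (2 * m + 1) / (((2 * m + 1).factorial : ℕ) : ℝ)
        - μ * (h ^ (2 * m) / (((2 * m).factorial : ℕ) : ℝ)) := by
    unfold Rf; rw [hca]
  have h2m1 : (2 * (m : ℝ) + 1) ≠ 0 := by positivity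
  have hPC : (b - a) ^ (2 * m + 1) / (((2 * m).factorial : ℝ) * 2 ^ (2 * m))
      * (1 / (2 * (m : ℝ) + 1) - θ) = 2 * Rf a μ (2 * m) c := by
    rw [hRfc, efac2, hμh, hba, mul_pow]
    have h1 := fac_ne (2 * m)
    field_simp
    ring
  have hkval : 2 * Rf a μ (2 * m) c / (b - a)
      = h ^ (2 * m) * (1 / (2 * (m : ℝ) + 1) - θ) / (((2 * m).factorial : ℕ) : ℝ) := by
    rw [hRfc, efac2, hμh, hba]
    have h1 := fac_ne (2 * m)
    field_simp
    ring
  -- the main bounding argument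
  have main : ∀ K : ℝ,
      (∀ t ∈ Set.Icc (0:ℝ) h,
        |psi θ h m t - h ^ (2 * m) * (1 / (2 * (m : ℝ) + 1) - θ)| ≤ h ^ (2 * m) * K) →
      |(∫ x in a..b, f x) - quadF a b θ (2 * m) f
          - (b - a) ^ (2 * m + 1) / (((2 * m).factorial : ℝ) * 2 ^ (2 * m))
            * (1 / (2 * (m : ℝ) + 1) - θ)
            * ((iteratedDeriv (2 * m - 1) f b - iteratedDeriv (2 * m - 1) f a) / (b - a))|
        ≤ ((iteratedDeriv (2 * m - 1) f b - iteratedDeriv (2 * m - 1) f a) / (b - a) - γ)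
          * ((b - a) ^ (2 * m + 1) / (((2 * m).factorial : ℝ) * 2 ^ (2 * m))) * K := by
    intro K hKb
    set P : ℝ := 2 * Rf a μ (2 * m) c with hPdef
    clear_value P
    have hK : ∀ x ∈ Set.Icc a b, |G a b θ (2 * m) x - P / (b - a)|
        ≤ h ^ (2 * m) * K / (((2 * m).factorial : ℕ) : ℝ) := by
      intro x hx
      obtain ⟨t, ht, hGt⟩ := hGpsi x hx
      rw [hGt, hkval, div_sub_div_same, abs_div, abs_of_pos hfacpos]
      exact (div_le_div_iff_of_pos_right hfacpos).mpr (hKb t ht)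
    set M : ℝ := h ^ (2 * m) * K / (((2 * m).factorial : ℕ) : ℝ) with hMdef
    clear_value M
    have hMnn : 0 ≤ M := le_trans (abs_nonneg _) (hK a ⟨le_rfl, hab'⟩)
    -- integrability of the product
    have hwγ : IntervalIntegrable (fun x => iteratedDeriv (2 * m) f x - γ) volume a b :=
      hint.sub intervalIntegrable_const
    have hq_int : IntervalIntegrable
        (fun x => (G a b θ (2 * m) x - P / (b - a)) * (iteratedDeriv (2 * m) f x - γ)) volume a b := by
      rw [intervalIntegrable_iff_integrableOn_Ioc_of_le hab']
      refine (hwγ.1).bdd_mul (c := M) ((hGm.sub measurable_const).aestronglyMeasurable) ?_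
      exact ae_restrict_of_forall_mem measurableSet_Ioc
        (fun x hx => hK x ⟨hx.1.le, hx.2⟩)
    have hGw := hprod_int le_rfl hab' le_rfl
    have hGab := hGint le_rfl hab' le_rfl
    have h1i : IntervalIntegrable (fun x => γ * G a b θ (2 * m) x) volume a b :=
      hGab.const_mul γ
    have h2i : IntervalIntegrable (fun x => P / (b - a) * iteratedDeriv (2 * m) f x) volume a b :=
      hint.const_mul (P / (b - a))
    have hexpand : ∫ x in a..b, (G a b θ (2 * m) x - P / (b - a)) * (iteratedDeriv (2 * m) f x - γ)
        = (∫ x in a..b, G a b θ (2 * m) x * iteratedDeriv (2 * m) f x)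
          - γ * (∫ x in a..b, G a b θ (2 * m) x)
          - P / (b - a) * (∫ x in a..b, iteratedDeriv (2 * m) f x) + P / (b - a) * γ * (b - a) := by
      have e0 : ∫ x in a..b, (G a b θ (2 * m) x - P / (b - a)) * (iteratedDeriv (2 * m) f x - γ)
          = ∫ x in a..b, ((G a b θ (2 * m) x * iteratedDeriv (2 * m) f x
              - γ * G a b θ (2 * m) x - P / (b - a) * iteratedDeriv (2 * m) f x) + P / (b - a) * γ) :=
        integral_congr (fun x _ => by ring)
      rw [e0, intervalIntegral.integral_add ((hGw.sub h1i).sub h2i) intervalIntegrable_const,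
        intervalIntegral.integral_sub (hGw.sub h1i) h2i,
        intervalIntegral.integral_sub hGw h1i,
        intervalIntegral.integral_const_mul, intervalIntegral.integral_const_mul,
        intervalIntegral.integral_const, smul_eq_mul]
      ring
    have hLHS : (∫ x in a..b, f x) - quadF a b θ (2 * m) f
        - (b - a) ^ (2 * m + 1) / (((2 * m).factorial : ℝ) * 2 ^ (2 * m))
          * (1 / (2 * (m : ℝ) + 1) - θ)
          * ((iteratedDeriv (2 * m - 1) f b - iteratedDeriv (2 * m - 1) f a) / (b - a))
        = ∫ x in a..b, (G a b θ (2 * m) x - P / (b - a)) * (iteratedDeriv (2 * m) f x - γ) := by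
      rw [hexpand, hIden, hPval, hSint, hPC]
      have c0 : P / (b - a) * (b - a) = P := div_mul_cancel₀ P hne
      have c1 : P / (b - a) * γ * (b - a) = γ * P := by linear_combination γ * c0
      linear_combination -c1
    have habs : |∫ x in a..b, (G a b θ (2 * m) x - P / (b - a)) * (iteratedDeriv (2 * m) f x - γ)|
        ≤ ∫ x in a..b, |(G a b θ (2 * m) x - P / (b - a)) * (iteratedDeriv (2 * m) f x - γ)| :=
      intervalIntegral.abs_integral_le_integral_abs hab'
    have hmono : (∫ x in a..b, |(G a b θ (2 * m) x - P / (b - a)) * (iteratedDeriv (2 * m) f x - γ)|)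
        ≤ ∫ x in a..b, M * (iteratedDeriv (2 * m) f x - γ) := by
      refine intervalIntegral.integral_mono_on hab' hq_int.abs (hwγ.const_mul M) ?_
      intro x hx
      rw [abs_mul, abs_of_nonneg (by linarith [hγ x hx] : (0:ℝ) ≤ iteratedDeriv (2 * m) f x - γ)]
      exact mul_le_mul_of_nonneg_right (hK x hx) (by linarith [hγ x hx])
    have hend : (∫ x in a..b, M * (iteratedDeriv (2 * m) f x - γ))
        = M * ((iteratedDeriv (2 * m - 1) f b - iteratedDeriv (2 * m - 1) f a) - γ * (b - a)) := by
      rw [intervalIntegral.integral_const_mul,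
        intervalIntegral.integral_sub hint intervalIntegrable_const,
        hSint, intervalIntegral.integral_const, smul_eq_mul]
      ring
    have hfinal : M * ((iteratedDeriv (2 * m - 1) f b - iteratedDeriv (2 * m - 1) f a) - γ * (b - a))
        = ((iteratedDeriv (2 * m - 1) f b - iteratedDeriv (2 * m - 1) f a) / (b - a) - γ)
          * ((b - a) ^ (2 * m + 1) / (((2 * m).factorial : ℝ) * 2 ^ (2 * m))) * K := by
      rw [hMdef, hba, mul_pow]
      have h1 := fac_ne (2 * m)
      have hhne : h ≠ 0 := ne_of_gt hh
      field_simp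
      ring
    rw [hLHS]
    calc |∫ x in a..b, (G a b θ (2 * m) x - P / (b - a)) * (iteratedDeriv (2 * m) f x - γ)|
        ≤ ∫ x in a..b, |(G a b θ (2 * m) x - P / (b - a)) * (iteratedDeriv (2 * m) f x - γ)| := habs
      _ ≤ ∫ x in a..b, M * (iteratedDeriv (2 * m) f x - γ) := hmono
      _ = M * ((iteratedDeriv (2 * m - 1) f b - iteratedDeriv (2 * m - 1) f a) - γ * (b - a)) := hend
      _ = _ := hfinal
  obtain ⟨hpr1, hpr2, hpr3⟩ := psi_range θ h m hm hh hθ0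
  have Hnn : (0:ℝ) ≤ h ^ (2 * m) := by positivity
  constructor
  · -- first branch : 1 ≤ θ (2m-1)
    intro hcase
    apply main
    intro t ht
    have hup := hpr3 t ht
    have hlow := hpr2 t ht hcase
    have hmax0 : max 0 (h ^ (2 * m) * (1 - θ * (2 * (m : ℝ)))) = 0 := by
      apply max_eq_left
      have hθ2m : 1 - θ * (2 * (m : ℝ)) ≤ 0 := by nlinarith
      nlinarith
    rw [hmax0] at hup
    have hK1a : θ - 1 / (2 * (m : ℝ) + 1)
        ≤ max (θ - 1 / (2 * (m : ℝ) + 1)) (θ * (2 * (m : ℝ) - 1) - 2 * (m : ℝ) / (2 * (m : ℝ) + 1)) :=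
      le_max_left _ _
    have hK1b : θ * (2 * (m : ℝ) - 1) - 2 * (m : ℝ) / (2 * (m : ℝ) + 1)
        ≤ max (θ - 1 / (2 * (m : ℝ) + 1)) (θ * (2 * (m : ℝ) - 1) - 2 * (m : ℝ) / (2 * (m : ℝ) + 1)) :=
      le_max_right _ _
    have u1 := mul_le_mul_of_nonneg_left hK1a Hnn
    have u2 := mul_le_mul_of_nonneg_left hK1b Hnn
    have e1 : -(h ^ (2 * m) * (1 / (2 * (m : ℝ) + 1) - θ))
        = h ^ (2 * m) * (θ - 1 / (2 * (m : ℝ) + 1)) := by ring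
    have e2 : h ^ (2 * m) * (1 - θ * (2 * (m : ℝ))) - h ^ (2 * m) * (1 / (2 * (m : ℝ) + 1) - θ)
        = -(h ^ (2 * m) * (θ * (2 * (m : ℝ) - 1) - 2 * (m : ℝ) / (2 * (m : ℝ) + 1))) := by
      field_simp
      ring
    rw [abs_le]
    constructor
    · linarith
    · linarith
  · -- second branch : θ (2m-1) < 1
    intro hcase
    apply main
    intro t ht
    have hup := hpr3 t ht
    have hlow := hpr1 t ht hcase.le
    set K2 : ℝ := max (max |θ - 1 / (2 * (m : ℝ) + 1)|
        |θ * (2 * (m : ℝ) - 1) - 2 * (m : ℝ) / (2 * (m : ℝ) + 1)|)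
      |θ - 1 / (2 * (m : ℝ) + 1) - θ ^ (2 * m) * (2 * (m : ℝ) - 1) ^ (2 * m - 1)| with hK2def
    have hK2a : θ - 1 / (2 * (m : ℝ) + 1) ≤ K2 :=
      le_trans (le_abs_self _) (le_trans (le_max_left _ _) (le_max_left _ _))
    have hK2b : -(θ * (2 * (m : ℝ) - 1) - 2 * (m : ℝ) / (2 * (m : ℝ) + 1)) ≤ K2 :=
      le_trans (neg_le_abs _) (le_trans (le_max_right _ _) (le_max_left _ _))
    have hK2c : -K2 ≤ θ - 1 / (2 * (m : ℝ) + 1)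
        - θ ^ (2 * m) * (2 * (m : ℝ) - 1) ^ (2 * m - 1) :=
      le_trans (neg_le_neg (le_max_right _ _)) (neg_abs_le _)
    have w1 := mul_le_mul_of_nonneg_left hK2a Hnn
    have w2 := mul_le_mul_of_nonneg_left hK2b Hnn
    have w3 := mul_le_mul_of_nonneg_left hK2c Hnn
    have e1 : h ^ (2 * m) * (1 / (2 * (m : ℝ) + 1) - θ)
        + h ^ (2 * m) * (θ - 1 / (2 * (m : ℝ) + 1)) = 0 := by ring
    have e2 : h ^ (2 * m) * (1 - θ * (2 * (m : ℝ)))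
        - h ^ (2 * m) * (1 / (2 * (m : ℝ) + 1) - θ)
        = h ^ (2 * m) * (-(θ * (2 * (m : ℝ) - 1) - 2 * (m : ℝ) / (2 * (m : ℝ) + 1))) := by
      field_simp
      ring
    have e3 : -(θ ^ (2 * m) * (2 * (m : ℝ) - 1) ^ (2 * m - 1) * h ^ (2 * m))
        - h ^ (2 * m) * (1 / (2 * (m : ℝ) + 1) - θ)
        = h ^ (2 * m) * (θ - 1 / (2 * (m : ℝ) + 1)
            - θ ^ (2 * m) * (2 * (m : ℝ) - 1) ^ (2 * m - 1)) := by ring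
    have e5 : -(h ^ (2 * m) * K2) = h ^ (2 * m) * (-K2) := by ring
    rw [abs_le]
    constructor
    · linarith
    · have s1 : max 0 (h ^ (2 * m) * (1 - θ * (2 * (m : ℝ))))
          ≤ h ^ (2 * m) * (1 / (2 * (m : ℝ) + 1) - θ) + h ^ (2 * m) * K2 := by
        apply max_le
        · linarith
        · linarith
      linarith
end psi
end

section
/- Let n ≥ 1 be an odd integer, f : [a,b] → ℝ with f^{(n-1)} absolutely continuous on [a,b] and f^{(n)} ∈ L²[a,b]. Then for every θ ∈ [0,1], |I - F_n| ≤ (b-a)^{n+1/2}/(n!·2^n) · √([θ²n²(2n+1) - θ(4n²-1) + (2n-1)] / ((2n+1)(2n-1))) · √(σ(f^{(n)})), where σ(g) = ∫_a^b g(x)² dx - (1/(b-a))(∫_a^b g(x) dx)². -/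
open MeasureTheory intervalIntegral

open Set


lemma my_cs (u v : ℝ) (huv : u ≤ v) (F W : ℝ → ℝ)
    (hF : AEStronglyMeasurable F (volume.restrict (Set.Ioc u v)))
    (hW : AEStronglyMeasurable W (volume.restrict (Set.Ioc u v)))
    (hF2 : IntegrableOn (fun x => F x ^ 2) (Set.Ioc u v))
    (hW2 : IntegrableOn (fun x => W x ^ 2) (Set.Ioc u v)) :
    |∫ x in u..v, F x * W x| ≤
      Real.sqrt (∫ x in u..v, F x ^ 2) * Real.sqrt (∫ x in u..v, W x ^ 2) := by
  have hpq : Real.HolderConjugate 2 2 := by rw [Real.holderConjugate_iff]; norm_num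
  set ν := volume.restrict (Set.Ioc u v)
  have hFm : MemLp F (ENNReal.ofReal 2) ν := by
    rw [show ENNReal.ofReal 2 = 2 by norm_num]
    exact (memLp_two_iff_integrable_sq hF).2 hF2
  have hWm : MemLp W (ENNReal.ofReal 2) ν := by
    rw [show ENNReal.ofReal 2 = 2 by norm_num]
    exact (memLp_two_iff_integrable_sq hW).2 hW2
  have key := MeasureTheory.integral_mul_norm_le_Lp_mul_Lq hpq hFm hWm
  rw [intervalIntegral.integral_of_le huv, intervalIntegral.integral_of_le huv,
    intervalIntegral.integral_of_le huv]
  calc |∫ x in Set.Ioc u v, F x * W x| ≤ ∫ x in Set.Ioc u v, ‖F x * W x‖ := by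
        exact (Real.norm_eq_abs _) ▸ MeasureTheory.norm_integral_le_integral_norm _
    _ = ∫ x in Set.Ioc u v, ‖F x‖ * ‖W x‖ := by simp [norm_mul]
    _ ≤ (∫ x in Set.Ioc u v, ‖F x‖ ^ (2:ℝ)) ^ (1/2:ℝ) * (∫ x in Set.Ioc u v, ‖W x‖ ^ (2:ℝ)) ^ (1/2:ℝ) := key
    _ = Real.sqrt (∫ x in Set.Ioc u v, F x ^ 2) * Real.sqrt (∫ x in Set.Ioc u v, W x ^ 2) := by
        rw [← Real.sqrt_eq_rpow, ← Real.sqrt_eq_rpow]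
        congr 2 <;>
        · apply MeasureTheory.integral_congr_ae
          filter_upwards with x
          rw [show ((2:ℝ)) = ((2:ℕ):ℝ) by norm_num, Real.rpow_natCast]
          simp [sq_abs]


lemma triangle_swap (u v : ℝ) (huv : u ≤ v) (φ' g : ℝ → ℝ)
    (hφ' : Continuous φ') (hg : IntegrableOn g (Set.Ioc u v)) :
    ∫ x in u..v, φ' x * (∫ t in u..x, g t)
      = ∫ t in u..v, (∫ x in t..v, φ' x) * g t := by
  set ν := volume.restrict (Set.Ioc u v) with hν
  have hφint : Integrable φ' ν := hφ'.integrableOn_Ioc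
  have hgm : AEStronglyMeasurable g ν := hg.aestronglyMeasurable
  set s : Set (ℝ × ℝ) := {p : ℝ × ℝ | p.2 ≤ p.1} with hs
  have hsm : MeasurableSet s := measurableSet_le measurable_snd measurable_fst
  set H : ℝ × ℝ → ℝ := s.indicator (fun p => φ' p.1 * g p.2) with hH
  have hHint : Integrable H (ν.prod ν) :=
    (Integrable.mul_prod hφint hg).indicator hsm
  have swap := MeasureTheory.integral_integral_swap (f := fun x t => H (x, t)) hHint
  have left : ∀ x ∈ Set.Ioc u v,
      (∫ t, H (x, t) ∂ν) = φ' x * ∫ t in u..x, g t := by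
    intro x hx
    have : (fun t => H (x, t)) = (Set.Iic x).indicator (fun t => φ' x * g t) := by
      funext t
      by_cases h : t ≤ x <;> simp [hH, hs, Set.indicator, h]
    rw [this, MeasureTheory.integral_indicator measurableSet_Iic, hν,
      Measure.restrict_restrict measurableSet_Iic]
    have : Set.Iic x ∩ Set.Ioc u v = Set.Ioc u x := by
      ext t; simp only [Set.mem_inter_iff, Set.mem_Iic, Set.mem_Ioc]
      exact ⟨fun ⟨h1, h2, _⟩ => ⟨h2, h1⟩, fun ⟨h1, h2⟩ => ⟨h2, h1, h2.trans hx.2⟩⟩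
    rw [this, MeasureTheory.integral_const_mul, ← intervalIntegral.integral_of_le hx.1.le]
  have right : ∀ t ∈ Set.Ioc u v,
      (∫ x, H (x, t) ∂ν) = (∫ x in t..v, φ' x) * g t := by
    intro t ht
    have : (fun x => H (x, t)) = (Set.Ici t).indicator (fun x => φ' x * g t) := by
      funext x
      by_cases h : t ≤ x <;> simp [hH, hs, Set.indicator, h]
    rw [this, MeasureTheory.integral_indicator measurableSet_Ici, hν,
      Measure.restrict_restrict measurableSet_Ici]
    have : Set.Ici t ∩ Set.Ioc u v = Set.Icc t v := by
      ext x; simp only [Set.mem_inter_iff, Set.mem_Ici, Set.mem_Ioc, Set.mem_Icc]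
      exact ⟨fun ⟨h1, _, h2⟩ => ⟨h1, h2⟩, fun ⟨h1, h2⟩ => ⟨h1, ht.1.trans_le h1, h2⟩⟩
    rw [this, MeasureTheory.integral_Icc_eq_integral_Ioc,
      MeasureTheory.integral_mul_const, ← intervalIntegral.integral_of_le ht.2]
  rw [intervalIntegral.integral_of_le huv, intervalIntegral.integral_of_le huv]
  calc ∫ x in Set.Ioc u v, φ' x * ∫ t in u..x, g t
      = ∫ x, (∫ t, H (x, t) ∂ν) ∂ν := by
        refine MeasureTheory.setIntegral_congr_ae measurableSet_Ioc ?_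
        filter_upwards with x hx
        exact (left x hx).symm
    _ = ∫ t, (∫ x, H (x, t) ∂ν) ∂ν := swap
    _ = ∫ t in Set.Ioc u v, (∫ x in t..v, φ' x) * g t := by
        refine MeasureTheory.setIntegral_congr_ae measurableSet_Ioc ?_
        filter_upwards with t ht
        exact right t ht

lemma ftc_ibp (u v : ℝ) (huv : u ≤ v) (φ φ' g F : ℝ → ℝ)
    (hφ : ∀ x, HasDerivAt φ (φ' x) x) (hφ'c : Continuous φ')
    (hg : IntervalIntegrable g volume u v)
    (hF : ∀ x ∈ Set.Icc u v, F x = F u + ∫ t in u..x, g t) :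
    ∫ x in u..v, φ x * g x
      = φ v * F v - φ u * F u - ∫ x in u..v, φ' x * F x := by
  have hφc : Continuous φ := continuous_iff_continuousAt.2 fun x => (hφ x).continuousAt
  have huIcc : Set.uIcc u v = Set.Icc u v := Set.uIcc_of_le huv
  have hgIcc : IntegrableOn g (Set.Icc u v) volume :=
    (integrableOn_Icc_iff_integrableOn_Ioc (f := g) (a := u)).2 hg.1
  have hprim : ContinuousOn (fun x => ∫ t in u..x, g t) (Set.Icc u v) := by
    have := intervalIntegral.continuousOn_primitive_interval
      (a := u) (b := v) (f := g) (μ := volume) (by rw [huIcc]; exact hgIcc)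
    rwa [huIcc] at this
  have hφg : IntervalIntegrable (fun x => φ x * g x) volume u v :=
    hg.continuousOn_mul hφc.continuousOn
  have hFTCφ : ∀ t, (∫ x in t..v, φ' x) = φ v - φ t := fun t =>
    intervalIntegral.integral_eq_sub_of_hasDerivAt (fun x _ => hφ x)
      (hφ'c.intervalIntegrable _ _)
  have step1 : ∫ x in u..v, φ' x * F x
      = ∫ x in u..v, φ' x * (F u + ∫ t in u..x, g t) := by
    apply intervalIntegral.integral_congr
    intro x hx
    rw [huIcc] at hx
    simp only [hF x hx]
  have step2 : ∫ x in u..v, φ' x * (F u + ∫ t in u..x, g t)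
      = F u * (φ v - φ u) + ∫ x in u..v, φ' x * (∫ t in u..x, g t) := by
    have h1 : IntervalIntegrable (fun x => φ' x * F u) volume u v :=
      (hφ'c.mul continuous_const).intervalIntegrable _ _
    have h2 : IntervalIntegrable (fun x => φ' x * (∫ t in u..x, g t)) volume u v := by
      apply ContinuousOn.intervalIntegrable
      rw [huIcc]
      exact hφ'c.continuousOn.mul hprim
    calc ∫ x in u..v, φ' x * (F u + ∫ t in u..x, g t)
        = ∫ x in u..v, (φ' x * F u + φ' x * (∫ t in u..x, g t)) := by
          congr 1; funext x; ring
      _ = (∫ x in u..v, φ' x * F u) + ∫ x in u..v, φ' x * (∫ t in u..x, g t) :=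
          intervalIntegral.integral_add h1 h2
      _ = F u * (φ v - φ u) + ∫ x in u..v, φ' x * (∫ t in u..x, g t) := by
          rw [intervalIntegral.integral_mul_const, hFTCφ u]; ring
  have step3 : ∫ x in u..v, φ' x * (∫ t in u..x, g t)
      = φ v * (∫ t in u..v, g t) - ∫ t in u..v, φ t * g t := by
    rw [triangle_swap u v huv φ' g hφ'c hg.1]
    have : ∫ t in u..v, (∫ x in t..v, φ' x) * g t
        = ∫ t in u..v, (φ v * g t - φ t * g t) := by
      apply intervalIntegral.integral_congr
      intro t _
      show (∫ x in t..v, φ' x) * g t = φ v * g t - φ t * g t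
      rw [hFTCφ t]; ring
    rw [this, intervalIntegral.integral_sub ((hg.const_mul _)) hφg,
      intervalIntegral.integral_const_mul]
  have hFv : F v = F u + ∫ t in u..v, g t := hF v ⟨huv, le_refl v⟩
  rw [step1, step2, step3, hFv]
  ring

noncomputable def pp (z ε : ℝ) (k : ℕ) (x : ℝ) : ℝ :=
  (x - z) ^ (k+1) / ((k+1).factorial : ℝ) - ε * (x - z) ^ k / (k.factorial : ℝ)

lemma pp_cont (z ε : ℝ) (k : ℕ) : Continuous (pp z ε k) := by
  unfold pp; fun_prop

lemma pp_deriv (z ε : ℝ) (k : ℕ) (x : ℝ) :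
    HasDerivAt (pp z ε (k+1)) (pp z ε k x) x := by
  have h1 : HasDerivAt (fun x : ℝ => x - z) 1 x := (hasDerivAt_id x).sub_const z
  have h2 : HasDerivAt (fun x : ℝ => (x - z) ^ (k+2))
      ((k+2 : ℕ) * (x - z) ^ (k+1) * 1) x := h1.pow (k+2)
  have h3 : HasDerivAt (fun x : ℝ => (x - z) ^ (k+1))
      ((k+1 : ℕ) * (x - z) ^ k * 1) x := h1.pow (k+1)
  have h4 := ((h2.div_const ((k+2).factorial : ℝ)).sub
    ((h3.const_mul ε).div_const ((k+1).factorial : ℝ)))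
  convert h4 using 1
  · rfl
  · rfl
  · rfl
  have hf2 : ((k+2).factorial : ℝ) = (k+2) * ((k+1).factorial : ℝ) := by
    rw [Nat.factorial_succ]; push_cast; ring
  have hf1 : ((k+1).factorial : ℝ) = (k+1) * (k.factorial : ℝ) := by
    rw [Nat.factorial_succ]; push_cast; ring
  have hne1 : ((k+1).factorial : ℝ) ≠ 0 := by positivity
  have hne0 : (k.factorial : ℝ) ≠ 0 := by positivity
  have hne2 : ((k+2).factorial : ℝ) ≠ 0 := by positivity
  unfold pp
  rw [hf2, hf1] at *
  push_cast
  field_simp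

lemma pp_zero_deriv (z ε : ℝ) (x : ℝ) : HasDerivAt (pp z ε 0) 1 x := by
  have h1 : HasDerivAt (fun x : ℝ => x - z) 1 x := (hasDerivAt_id x).sub_const z
  have : pp z ε 0 = fun x : ℝ => (x - z) - ε := by
    funext y; unfold pp; simp
  rw [this]
  simpa using h1.sub_const ε

section main
variable {a b : ℝ} {n : ℕ} {f : ℝ → ℝ}

lemma dcont (hd : ∀ k < n - 1, ∀ x ∈ Set.Icc a b,
      HasDerivAt (iteratedDeriv k f) (iteratedDeriv (k + 1) f x) x)
    (hcont : ContinuousOn (iteratedDeriv (n - 1) f) (Set.Icc a b))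
    {k : ℕ} (hk : k ≤ n - 1) :
    ContinuousOn (iteratedDeriv k f) (Set.Icc a b) := by
  rcases eq_or_lt_of_le hk with h | h
  · rwa [h]
  · exact fun x hx => ((hd k h x hx).continuousAt).continuousWithinAt

lemma ibp_step (hn : 1 ≤ n)
    (hd : ∀ k < n - 1, ∀ x ∈ Set.Icc a b,
      HasDerivAt (iteratedDeriv k f) (iteratedDeriv (k + 1) f x) x)
    (hcont : ContinuousOn (iteratedDeriv (n - 1) f) (Set.Icc a b))
    (hint : IntervalIntegrable (iteratedDeriv n f) volume a b)
    (hftc : ∀ x ∈ Set.Icc a b,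
      iteratedDeriv (n - 1) f x
        = iteratedDeriv (n - 1) f a + ∫ t in a..x, iteratedDeriv n f t)
    {u v : ℝ} (hau : a ≤ u) (huv : u ≤ v) (hvb : v ≤ b)
    {j : ℕ} (hj1 : 1 ≤ j) (hjn : j ≤ n)
    (φ φ' : ℝ → ℝ) (hφ : ∀ x, HasDerivAt φ (φ' x) x) (hφ'c : Continuous φ') :
    ∫ x in u..v, φ x * iteratedDeriv j f x
      = φ v * iteratedDeriv (j-1) f v - φ u * iteratedDeriv (j-1) f u
        - ∫ x in u..v, φ' x * iteratedDeriv (j-1) f x := by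
  have hφc : Continuous φ := continuous_iff_continuousAt.2 fun x => (hφ x).continuousAt
  have hsub : Set.Icc u v ⊆ Set.Icc a b := Set.Icc_subset_Icc hau hvb
  have huIcc : Set.uIcc u v = Set.Icc u v := Set.uIcc_of_le huv
  rcases eq_or_lt_of_le hjn with hj | hj
  · -- j = n : use ftc_ibp
    subst hj
    have hab' : a ≤ b := hau.trans (huv.trans hvb)
    have hmono : ∀ p q : ℝ, a ≤ p → q ≤ b → p ≤ q →
        IntervalIntegrable (iteratedDeriv j f) volume p q := by
      intro p q hp hq hpq
      refine hint.mono_set ?_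
      rw [Set.uIcc_of_le hpq, Set.uIcc_of_le hab']
      exact Set.Icc_subset_Icc hp hq
    refine ftc_ibp u v huv φ φ' _ _ hφ hφ'c (hmono u v hau hvb huv) ?_
    intro x hx
    have hx' : x ∈ Set.Icc a b := hsub hx
    have hu' : u ∈ Set.Icc a b := hsub ⟨le_refl u, hx.1.trans hx.2⟩
    rw [hftc x hx', hftc u hu']
    have h1 : IntervalIntegrable (iteratedDeriv j f) volume a u :=
      hmono a u le_rfl (huv.trans hvb) hau
    have h2 : IntervalIntegrable (iteratedDeriv j f) volume u x :=
      hmono u x hau hx'.2 hx.1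
    rw [← intervalIntegral.integral_add_adjacent_intervals h1 h2]
    ring
  · -- j < n : classical integration by parts
    have hjn1 : j ≤ n - 1 := Nat.le_sub_one_of_lt hj
    have hj1n1 : j - 1 < n - 1 := by omega
    have hdj : ContinuousOn (iteratedDeriv j f) (Set.Icc a b) := dcont hd hcont hjn1
    have key := intervalIntegral.integral_mul_deriv_eq_deriv_mul_of_hasDerivAt
      (a := u) (b := v) (u := φ) (v := iteratedDeriv (j-1) f) (u' := φ')
      (v' := iteratedDeriv j f)
      (hφc.continuousOn)
      (by rw [huIcc]; exact (dcont hd hcont (le_of_lt hj1n1)).mono hsub)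
      (fun x hx => hφ x)
      (fun x hx => by
        rw [min_eq_left huv, max_eq_right huv] at hx
        have := hd (j-1) hj1n1 x (hsub (Set.Ioo_subset_Icc_self hx))
        rwa [Nat.sub_add_cancel hj1] at this)
      (hφ'c.intervalIntegrable _ _)
      (by apply ContinuousOn.intervalIntegrable; rw [huIcc]; exact hdj.mono hsub)
    exact key


lemma chain (hn : 1 ≤ n)
    (hd : ∀ k < n - 1, ∀ x ∈ Set.Icc a b,
      HasDerivAt (iteratedDeriv k f) (iteratedDeriv (k + 1) f x) x)
    (hcont : ContinuousOn (iteratedDeriv (n - 1) f) (Set.Icc a b))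
    (hint : IntervalIntegrable (iteratedDeriv n f) volume a b)
    (hftc : ∀ x ∈ Set.Icc a b,
      iteratedDeriv (n - 1) f x
        = iteratedDeriv (n - 1) f a + ∫ t in a..x, iteratedDeriv n f t)
    (z ε : ℝ) {u v : ℝ} (hau : a ≤ u) (huv : u ≤ v) (hvb : v ≤ b) :
    ∀ k, k ≤ n - 1 →
      ∫ x in u..v, pp z ε k x * iteratedDeriv (k+1) f x
        = (∑ j ∈ Finset.range (k+1), (-1:ℝ)^(k-j) *
            (pp z ε j v * iteratedDeriv j f v - pp z ε j u * iteratedDeriv j f u))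
          + (-1:ℝ)^(k+1) * ∫ x in u..v, f x := by
  intro k
  induction k with
  | zero =>
    intro _
    have key := ibp_step hn hd hcont hint hftc hau huv hvb (j := 1) le_rfl hn
      (pp z ε 0) (fun _ => 1) (pp_zero_deriv z ε) continuous_const
    simp only [Nat.sub_self, iteratedDeriv_zero, one_mul] at key
    rw [key]
    simp [Finset.sum_range_one, iteratedDeriv_zero]
    ring
  | succ k ih =>
    intro hk1
    have hk : k ≤ n - 1 := Nat.le_of_succ_le hk1
    have hkn : k + 2 ≤ n := by omega
    have key := ibp_step hn hd hcont hint hftc hau huv hvb (j := k+2) (by omega) hkn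
      (pp z ε (k+1)) (pp z ε k) (pp_deriv z ε k) (pp_cont z ε k)
    have hred : k + 2 - 1 = k + 1 := rfl
    rw [hred] at key
    rw [key, ih hk]
    set B : ℕ → ℝ := fun j => pp z ε j v * iteratedDeriv j f v - pp z ε j u * iteratedDeriv j f u with hB
    have hs : ∑ j ∈ Finset.range (k+2), (-1:ℝ)^(k+1-j) * B j
        = B (k+1) - ∑ j ∈ Finset.range (k+1), (-1:ℝ)^(k-j) * B j := by
      rw [Finset.sum_range_succ]
      simp only [Nat.sub_self, pow_zero, one_mul]
      have hc : ∀ j ∈ Finset.range (k+1), (-1:ℝ)^(k+1-j) * B j = -((-1:ℝ)^(k-j) * B j) := by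
        intro j hj
        rw [Finset.mem_range] at hj
        have hkj : k+1-j = (k-j)+1 := by omega
        rw [hkj, pow_succ]
        ring
      rw [Finset.sum_congr rfl hc, Finset.sum_neg_distrib]
      ring
    rw [hs]
    rw [show ((-1:ℝ))^(k+1+1) = (-1:ℝ)^(k+1) * (-1) from pow_succ _ _]
    ring

end main

lemma sum_even_vanish (w : ℕ → ℝ) (h : ∀ j, Odd j → w j = 0) (s : ℕ) :
    ∑ j ∈ Finset.range (2*s), w j = ∑ i ∈ Finset.range s, w (2*i) := by
  induction s with
  | zero => simp
  | succ s ih =>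
    rw [show 2*(s+1) = (2*s+1)+1 by ring, Finset.sum_range_succ, Finset.sum_range_succ,
      Finset.sum_range_succ, ih, h (2*s+1) ⟨s, by ring⟩]
    ring

lemma GL_eq {a b θ : ℝ} {k : ℕ} (x : ℝ) (hx : x ≤ (a+b)/2) :
    G a b θ (k+1) x = pp a (θ*(b-a)/2) k x := by
  rw [G, if_pos hx, pp]
  have hf : ((k+1).factorial : ℝ) = (k+1) * (k.factorial : ℝ) := by
    rw [Nat.factorial_succ]; push_cast; ring
  have hne : (k.factorial : ℝ) ≠ 0 := by positivity
  have hx1 : (x - a) ^ (k + 1) = (x-a)^k * (x-a) := pow_succ _ _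
  simp only [Nat.add_sub_cancel]
  rw [hf, hx1]
  push_cast
  field_simp

lemma GR_eq {a b θ : ℝ} {k : ℕ} (x : ℝ) (hx : ¬ (x ≤ (a+b)/2)) :
    G a b θ (k+1) x = pp b (-(θ*(b-a)/2)) k x := by
  rw [G, if_neg hx, pp]
  have hf : ((k+1).factorial : ℝ) = (k+1) * (k.factorial : ℝ) := by
    rw [Nat.factorial_succ]; push_cast; ring
  have hne : (k.factorial : ℝ) ≠ 0 := by positivity
  have hx1 : (x - b) ^ (k + 1) = (x-b)^k * (x-b) := pow_succ _ _
  simp only [Nat.add_sub_cancel]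
  rw [hf, hx1]
  push_cast
  field_simp
  ring

lemma term_eval (a b θ : ℝ) (f : ℝ → ℝ) (j : ℕ) :
    (-1:ℝ)^j * ((pp a (θ*(b-a)/2) j ((a+b)/2) * iteratedDeriv j f ((a+b)/2)
        - pp a (θ*(b-a)/2) j a * iteratedDeriv j f a)
      + (pp b (-(θ*(b-a)/2)) j b * iteratedDeriv j f b
        - pp b (-(θ*(b-a)/2)) j ((a+b)/2) * iteratedDeriv j f ((a+b)/2)))
    = (if Even j then
        (1 - θ*((j:ℝ)+1)) * (b-a)^(j+1) / (((j+1).factorial : ℝ) * 2^j)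
          * iteratedDeriv j f ((a+b)/2) else 0)
      + (if j = 0 then (θ*(b-a)/2) * (f a + f b) else 0) := by
  have hf : ((j+1).factorial : ℝ) = ((j:ℝ)+1) * (j.factorial : ℝ) := by
    rw [Nat.factorial_succ]; push_cast; ring
  have hne : (j.factorial : ℝ) ≠ 0 := by positivity
  have hne1 : ((j:ℝ)+1) ≠ 0 := by positivity
  rcases Nat.eq_zero_or_pos j with hj | hj
  · subst hj
    simp only [pow_zero, one_mul, if_pos (Even.zero), if_pos rfl, iteratedDeriv_zero, pp]
    norm_num
    ring
  · have hj0 : j ≠ 0 := Nat.pos_iff_ne_zero.mp hj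
    have hza : pp a (θ*(b-a)/2) j a = 0 := by
      rw [pp]; rw [sub_self, zero_pow (by omega : j + 1 ≠ 0), zero_pow hj0]; simp
    have hzb : pp b (-(θ*(b-a)/2)) j b = 0 := by
      rw [pp]; rw [sub_self, zero_pow (by omega : j + 1 ≠ 0), zero_pow hj0]; simp
    rw [hza, hzb, if_neg hj0]
    have hma : (a+b)/2 - a = (b-a)/2 := by ring
    have hmb : (a+b)/2 - b = -((b-a)/2) := by ring
    rcases Nat.even_or_odd j with he | ho
    · rw [if_pos he]
      have h1 : ((-1:ℝ))^j = 1 := he.neg_one_pow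
      have h2 : (-((b-a)/2))^j = ((b-a)/2)^j := he.neg_pow _
      have h3 : (-((b-a)/2))^(j+1) = -(((b-a)/2)^(j+1)) := (he.add_one).neg_pow _
      rw [pp, pp, hma, hmb, h1, h2, h3, hf]
      have hbp : (b-a)^(j+1) = 2^(j+1) * ((b-a)/2)^(j+1) := by
        rw [div_pow, mul_div_cancel₀]; positivity
      rw [hbp, pow_succ ((b-a)/2) j, pow_succ (2:ℝ) j]
      have h2j : (2:ℝ)^j ≠ 0 := by positivity
      field_simp
      ring
    · rw [if_neg (Nat.not_even_iff_odd.mpr ho)]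
      have h2 : (-((b-a)/2))^j = -(((b-a)/2)^j) := ho.neg_pow _
      have h3 : (-((b-a)/2))^(j+1) = ((b-a)/2)^(j+1) := (ho.add_one).neg_pow _
      rw [pp, pp, hma, hmb, h2, h3]
      ring
section KI
variable {a b θ : ℝ} {n : ℕ} {f : ℝ → ℝ}

lemma kernel_identity (hab : a < b) (hn : 1 ≤ n) (hodd : Odd n)
    (hd : ∀ k < n - 1, ∀ x ∈ Set.Icc a b,
      HasDerivAt (iteratedDeriv k f) (iteratedDeriv (k + 1) f x) x)
    (hcont : ContinuousOn (iteratedDeriv (n - 1) f) (Set.Icc a b))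
    (hint : IntervalIntegrable (iteratedDeriv n f) volume a b)
    (hftc : ∀ x ∈ Set.Icc a b,
      iteratedDeriv (n - 1) f x
        = iteratedDeriv (n - 1) f a + ∫ t in a..x, iteratedDeriv n f t) :
    ∫ x in a..b, G a b θ n x * iteratedDeriv n f x
      = quadF a b θ n f - ∫ x in a..b, f x := by
  obtain ⟨s, hs⟩ := hodd
  subst hs
  set n := 2*s+1 with hn'
  set k := 2*s with hk'
  set m := (a+b)/2 with hm
  have ham : a ≤ m := by rw [hm]; linarith
  have hmb : m ≤ b := by rw [hm]; linarith
  have habl : a ≤ b := hab.le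
  have hnk : n = k + 1 := rfl
  have hk1 : k ≤ n - 1 := by omega
  -- integrability helpers
  have dnsub : ∀ p q : ℝ, a ≤ p → q ≤ b → p ≤ q →
      IntervalIntegrable (iteratedDeriv n f) volume p q := by
    intro p q hp hq hpq
    refine hint.mono_set ?_
    rw [Set.uIcc_of_le hpq, Set.uIcc_of_le habl]
    exact Set.Icc_subset_Icc hp hq
  have hfc : ContinuousOn f (Set.Icc a b) := by
    have := dcont (n := n) hd hcont (k := 0) (by omega)
    rwa [iteratedDeriv_zero] at this
  have hfL : IntervalIntegrable f volume a m := by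
    apply ContinuousOn.intervalIntegrable
    rw [Set.uIcc_of_le ham]
    exact hfc.mono (Set.Icc_subset_Icc le_rfl hmb)
  have hfR : IntervalIntegrable f volume m b := by
    apply ContinuousOn.intervalIntegrable
    rw [Set.uIcc_of_le hmb]
    exact hfc.mono (Set.Icc_subset_Icc ham le_rfl)
  -- congruences
  have hIL : ∫ x in a..m, G a b θ n x * iteratedDeriv n f x
      = ∫ x in a..m, pp a (θ*(b-a)/2) k x * iteratedDeriv n f x := by
    apply intervalIntegral.integral_congr
    intro x hx
    rw [Set.uIcc_of_le ham] at hx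
    simp only
    rw [hnk, GL_eq x (by rw [← hm]; exact hx.2)]
  have hIR : ∫ x in m..b, G a b θ n x * iteratedDeriv n f x
      = ∫ x in m..b, pp b (-(θ*(b-a)/2)) k x * iteratedDeriv n f x := by
    rw [intervalIntegral.integral_of_le hmb, intervalIntegral.integral_of_le hmb]
    apply MeasureTheory.setIntegral_congr_ae measurableSet_Ioc
    filter_upwards with x hx
    rw [hnk, GR_eq x (by rw [← hm]; exact not_le.mpr hx.1)]
  have iiL : IntervalIntegrable (fun x => G a b θ n x * iteratedDeriv n f x) volume a m := by
    rw [intervalIntegrable_iff_integrableOn_Ioc_of_le ham]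
    have hpp : IntervalIntegrable (fun x => pp a (θ*(b-a)/2) k x * iteratedDeriv n f x)
        volume a m := (dnsub a m le_rfl hmb ham).continuousOn_mul
      (pp_cont a (θ*(b-a)/2) k).continuousOn
    rw [intervalIntegrable_iff_integrableOn_Ioc_of_le ham] at hpp
    apply hpp.congr_fun ?_ measurableSet_Ioc
    intro x hx
    simp only
    rw [hnk, GL_eq x (by rw [← hm]; exact hx.2)]
  have iiR : IntervalIntegrable (fun x => G a b θ n x * iteratedDeriv n f x) volume m b := by
    rw [intervalIntegrable_iff_integrableOn_Ioc_of_le hmb]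
    have hpp : IntervalIntegrable (fun x => pp b (-(θ*(b-a)/2)) k x * iteratedDeriv n f x)
        volume m b := (dnsub m b ham le_rfl hmb).continuousOn_mul
      (pp_cont b (-(θ*(b-a)/2)) k).continuousOn
    rw [intervalIntegrable_iff_integrableOn_Ioc_of_le hmb] at hpp
    apply hpp.congr_fun ?_ measurableSet_Ioc
    intro x hx
    simp only
    rw [hnk, GR_eq x (by rw [← hm]; exact not_le.mpr hx.1)]
  have hsplit : ∫ x in a..b, G a b θ n x * iteratedDeriv n f x
      = (∫ x in a..m, G a b θ n x * iteratedDeriv n f x)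
        + ∫ x in m..b, G a b θ n x * iteratedDeriv n f x :=
    (intervalIntegral.integral_add_adjacent_intervals iiL iiR).symm
  have hfsplit : (∫ x in a..m, f x) + (∫ x in m..b, f x) = ∫ x in a..b, f x :=
    intervalIntegral.integral_add_adjacent_intervals hfL hfR
  have hL := chain hn hd hcont hint hftc a (θ*(b-a)/2) le_rfl ham hmb k hk1
  have hR := chain hn hd hcont hint hftc b (-(θ*(b-a)/2)) ham hmb le_rfl k hk1
  rw [hsplit, hIL, hIR, hnk, hL, hR]
  have hknegone : ((-1:ℝ))^(k+1) = -1 := by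
    rw [pow_succ, Even.neg_one_pow ⟨s, by omega⟩]; ring
  have hsign : ∀ j ∈ Finset.range (k+1), ((-1:ℝ))^(k-j) = ((-1:ℝ))^j := by
    intro j hj
    rw [Finset.mem_range] at hj
    have h1 : ((-1:ℝ))^(k-j) * (-1)^j = 1 := by
      rw [← pow_add, Nat.sub_add_cancel (by omega), Even.neg_one_pow ⟨s, by omega⟩]
    have h2 : ((-1:ℝ))^j * (-1)^j = 1 := by
      rw [← pow_add, Even.neg_one_pow ⟨j, by ring⟩]
    calc ((-1:ℝ))^(k-j) = (-1)^(k-j) * ((-1)^j * (-1)^j) := by rw [h2]; ring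
      _ = ((-1)^(k-j) * (-1)^j) * (-1)^j := by ring
      _ = (-1)^j := by rw [h1]; ring
  set W : ℕ → ℝ := fun j => if Even j then
      (1 - θ*((j:ℝ)+1)) * (b-a)^(j+1) / (((j+1).factorial : ℝ) * 2^j)
        * iteratedDeriv j f m else 0 with hW
  have hsum : (∑ j ∈ Finset.range (k+1), (-1:ℝ)^(k-j) *
        (pp a (θ*(b-a)/2) j m * iteratedDeriv j f m
          - pp a (θ*(b-a)/2) j a * iteratedDeriv j f a))
      + (∑ j ∈ Finset.range (k+1), (-1:ℝ)^(k-j) *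
        (pp b (-(θ*(b-a)/2)) j b * iteratedDeriv j f b
          - pp b (-(θ*(b-a)/2)) j m * iteratedDeriv j f m))
      = (∑ j ∈ Finset.range (k+1), W j) + θ*(b-a)/2 * (f a + f b) := by
    rw [← Finset.sum_add_distrib]
    have step : ∀ j ∈ Finset.range (k+1),
        ((-1:ℝ)^(k-j) * (pp a (θ*(b-a)/2) j m * iteratedDeriv j f m
            - pp a (θ*(b-a)/2) j a * iteratedDeriv j f a)
          + (-1:ℝ)^(k-j) * (pp b (-(θ*(b-a)/2)) j b * iteratedDeriv j f b
            - pp b (-(θ*(b-a)/2)) j m * iteratedDeriv j f m))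
        = W j + (if j = 0 then (θ*(b-a)/2) * (f a + f b) else 0) := by
      intro j hj
      rw [hW]
      simp only
      rw [← term_eval a b θ f j, hsign j hj, hm]
      ring
    rw [Finset.sum_congr rfl step, Finset.sum_add_distrib, Finset.sum_ite_eq'        ]
    rw [if_pos (Finset.mem_range.mpr (by omega : 0 < k+1))]
  have hWodd : ∀ j, Odd j → W j = 0 := by
    intro j hjo
    rw [hW]
    simp only
    rw [if_neg (Nat.not_even_iff_odd.mpr hjo)]
  have hWsum : ∑ j ∈ Finset.range (k+1), W j
      = (∑ i ∈ Finset.range s, W (2*(1+i))) + W 0 := by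
    rw [show k+1 = 2*s+1 from rfl, Finset.sum_range_succ,
      sum_even_vanish W hWodd s, ← Finset.sum_range_succ (fun i => W (2*i)) s,
      Finset.sum_range_succ' (fun i => W (2*i)) s]
    simp only [Nat.mul_add, Nat.add_comm]
  have hquad : quadF a b θ n f
      = (b - a) * ((1 - θ) * f m + θ * (f a + f b) / 2)
        + ∑ i ∈ Finset.range s, W (2*(1+i)) := by
    rw [quadF, ← hm, show (n-1)/2 = s from by omega, ← Finset.Ico_add_one_right_eq_Icc, Finset.sum_Ico_eq_sum_range]
    congr 1
    rw [show s + 1 - 1 = s from rfl]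
    apply Finset.sum_congr rfl
    intro i _
    rw [hW]
    simp only
    rw [if_pos (even_two_mul (1+i))]
    push_cast
    ring
  have hW0 : W 0 = (1 - θ) * (b - a) * f m := by
    rw [hW]
    simp only [if_pos Even.zero, iteratedDeriv_zero]
    norm_num [Nat.factorial]
  rw [hknegone]
  rw [show (∑ j ∈ Finset.range (k+1), (-1:ℝ)^(k-j) *
        (pp a (θ*(b-a)/2) j m * iteratedDeriv j f m
          - pp a (θ*(b-a)/2) j a * iteratedDeriv j f a)
      + -1 * ∫ x in a..m, f x)
      + ((∑ j ∈ Finset.range (k+1), (-1:ℝ)^(k-j) *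
        (pp b (-(θ*(b-a)/2)) j b * iteratedDeriv j f b
          - pp b (-(θ*(b-a)/2)) j m * iteratedDeriv j f m))
      + -1 * ∫ x in m..b, f x)
      = ((∑ j ∈ Finset.range (k+1), (-1:ℝ)^(k-j) *
        (pp a (θ*(b-a)/2) j m * iteratedDeriv j f m
          - pp a (θ*(b-a)/2) j a * iteratedDeriv j f a))
      + (∑ j ∈ Finset.range (k+1), (-1:ℝ)^(k-j) *
        (pp b (-(θ*(b-a)/2)) j b * iteratedDeriv j f b
          - pp b (-(θ*(b-a)/2)) j m * iteratedDeriv j f m)))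
      - ((∫ x in a..m, f x) + (∫ x in m..b, f x)) from by ring]
  rw [hsum, hfsplit, hWsum, hquad, hW0]
  ring

end KI

lemma split_int (p q r : ℝ) (hpq : p ≤ q) (hqr : q ≤ r) (f fL fR : ℝ → ℝ)
    (hfl : Set.EqOn f fL (Set.Ioc p q)) (hfr : Set.EqOn f fR (Set.Ioc q r))
    (hLi : IntervalIntegrable fL volume p q) (hRi : IntervalIntegrable fR volume q r) :
    IntervalIntegrable f volume p r ∧
      (∫ x in p..r, f x) = (∫ x in p..q, fL x) + ∫ x in q..r, fR x := by
  have hL : IntegrableOn f (Set.Ioc p q) volume :=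
    ((intervalIntegrable_iff_integrableOn_Ioc_of_le hpq).1 hLi).congr_fun hfl.symm measurableSet_Ioc
  have hR : IntegrableOn f (Set.Ioc q r) volume :=
    ((intervalIntegrable_iff_integrableOn_Ioc_of_le hqr).1 hRi).congr_fun hfr.symm measurableSet_Ioc
  have hfi1 : IntervalIntegrable f volume p q :=
    (intervalIntegrable_iff_integrableOn_Ioc_of_le hpq).2 hL
  have hfi2 : IntervalIntegrable f volume q r :=
    (intervalIntegrable_iff_integrableOn_Ioc_of_le hqr).2 hR
  refine ⟨hfi1.trans hfi2, ?_⟩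
  rw [← intervalIntegral.integral_add_adjacent_intervals hfi1 hfi2]
  congr 1
  · rw [intervalIntegral.integral_of_le hpq, intervalIntegral.integral_of_le hpq]
    exact MeasureTheory.setIntegral_congr_ae measurableSet_Ioc
      (Filter.Eventually.of_forall fun x hx => hfl hx)
  · rw [intervalIntegral.integral_of_le hqr, intervalIntegral.integral_of_le hqr]
    exact MeasureTheory.setIntegral_congr_ae measurableSet_Ioc
      (Filter.Eventually.of_forall fun x hx => hfr hx)

lemma int_pow_shift (z u v : ℝ) (j : ℕ) :
    ∫ x in u..v, (x - z)^j = ((v-z)^(j+1) - (u-z)^(j+1))/(j+1) := by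
  have h := intervalIntegral.integral_comp_sub_right (a := u) (b := v) (fun x => x^j) z
  rw [h, integral_pow]

lemma int_pp (z ε u v : ℝ) (j : ℕ) :
    ∫ x in u..v, pp z ε j x
      = ((v-z)^(j+2) - (u-z)^(j+2))/((j+2)*((j+1).factorial : ℝ))
        - ε * ((v-z)^(j+1) - (u-z)^(j+1))/((j+1)*(j.factorial : ℝ)) := by
  have h1 : IntervalIntegrable (fun x => (x-z)^(j+1)/((j+1).factorial : ℝ)) volume u v := by
    apply Continuous.intervalIntegrable; fun_prop
  have h2 : IntervalIntegrable (fun x => ε*(x-z)^j/(j.factorial : ℝ)) volume u v := by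
    apply Continuous.intervalIntegrable; fun_prop
  rw [show (fun x => pp z ε j x) = fun x => (x-z)^(j+1)/((j+1).factorial : ℝ)
      - ε*(x-z)^j/(j.factorial : ℝ) from rfl]
  rw [intervalIntegral.integral_sub h1 h2]
  rw [show (fun x => (x-z)^(j+1)/((j+1).factorial : ℝ))
      = fun x => ((j+1).factorial : ℝ)⁻¹ * (x-z)^(j+1) from by funext x; ring]
  rw [show (fun x => ε*(x-z)^j/(j.factorial : ℝ))
      = fun x => (ε/(j.factorial : ℝ)) * (x-z)^j from by funext x; ring]
  rw [intervalIntegral.integral_const_mul, intervalIntegral.integral_const_mul,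
    int_pow_shift, int_pow_shift]
  have c1 : ((j+1).factorial : ℝ) ≠ 0 := by positivity
  have c0 : ((j.factorial : ℝ)) ≠ 0 := by positivity
  have d2 : ((j:ℝ)+2) ≠ 0 := by positivity
  have d1 : ((j:ℝ)+1) ≠ 0 := by positivity
  push_cast
  field_simp
  ring

lemma int_pp_sq (z ε u v : ℝ) (j : ℕ) :
    ∫ x in u..v, (pp z ε j x)^2
      = ((v-z)^(2*j+3) - (u-z)^(2*j+3))/((2*j+3)*(((j+1).factorial : ℝ))^2)
        - 2*ε*((v-z)^(2*j+2) - (u-z)^(2*j+2))/((2*j+2)*(((j+1).factorial : ℝ))*(j.factorial : ℝ))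
        + ε^2*((v-z)^(2*j+1) - (u-z)^(2*j+1))/((2*j+1)*((j.factorial : ℝ))^2) := by
  have c1 : ((j+1).factorial : ℝ) ≠ 0 := by positivity
  have c0 : ((j.factorial : ℝ)) ≠ 0 := by positivity
  have hexp : (fun x => (pp z ε j x)^2)
      = fun x => (((j+1).factorial : ℝ))⁻¹^2 * (x-z)^(2*j+2)
        - (2*ε/(((j+1).factorial : ℝ)*(j.factorial : ℝ))) * (x-z)^(2*j+1)
        + (ε^2*((j.factorial : ℝ))⁻¹^2) * (x-z)^(2*j) := by
    funext x
    rw [pp]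
    field_simp
    ring
  rw [hexp]
  have h1 : IntervalIntegrable (fun x => (((j+1).factorial : ℝ))⁻¹^2 * (x-z)^(2*j+2)
      - (2*ε/(((j+1).factorial : ℝ)*(j.factorial : ℝ))) * (x-z)^(2*j+1)) volume u v := by
    apply Continuous.intervalIntegrable; fun_prop
  have h2 : IntervalIntegrable (fun x => (ε^2*((j.factorial : ℝ))⁻¹^2) * (x-z)^(2*j)) volume u v := by
    apply Continuous.intervalIntegrable; fun_prop
  have h3 : IntervalIntegrable (fun x => (((j+1).factorial : ℝ))⁻¹^2 * (x-z)^(2*j+2)) volume u v := by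
    apply Continuous.intervalIntegrable; fun_prop
  have h4 : IntervalIntegrable (fun x =>
      (2*ε/(((j+1).factorial : ℝ)*(j.factorial : ℝ))) * (x-z)^(2*j+1)) volume u v := by
    apply Continuous.intervalIntegrable; fun_prop
  rw [intervalIntegral.integral_add h1 h2, intervalIntegral.integral_sub h3 h4,
    intervalIntegral.integral_const_mul, intervalIntegral.integral_const_mul,
    intervalIntegral.integral_const_mul, int_pow_shift, int_pow_shift, int_pow_shift]
  have d3 : (2*(j:ℝ)+3) ≠ 0 := by positivity
  have d2 : (2*(j:ℝ)+2) ≠ 0 := by positivity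
  have d1 : (2*(j:ℝ)+1) ≠ 0 := by positivity
  push_cast
  field_simp
  ring

lemma G_int_zero (a b θ : ℝ) (s : ℕ) (hab : a ≤ b) :
    ∫ x in a..b, G a b θ (2*s+1) x = 0 := by
  have ham : a ≤ (a+b)/2 := by linarith
  have hmb : (a+b)/2 ≤ b := by linarith
  obtain ⟨-, hsplit⟩ := split_int a ((a+b)/2) b ham hmb (G a b θ (2*s+1))
    (pp a (θ*(b-a)/2) (2*s)) (pp b (-(θ*(b-a)/2)) (2*s))
    (fun x hx => GL_eq x hx.2) (fun x hx => GR_eq x (not_le.mpr hx.1))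
    ((pp_cont _ _ _).intervalIntegrable _ _) ((pp_cont _ _ _).intervalIntegrable _ _)
  rw [hsplit, int_pp, int_pp]
  have hma : (a+b)/2 - a = (b-a)/2 := by ring
  have hmb2 : (a+b)/2 - b = -((b-a)/2) := by ring
  rw [hma, hmb2, sub_self, sub_self,
    zero_pow (by omega : 2*s+2 ≠ 0), zero_pow (by omega : 2*s+1 ≠ 0),
    show (-((b-a)/2))^(2*s+2) = ((b-a)/2)^(2*s+2) from Even.neg_pow (⟨s+1, by ring⟩ : Even (2*s+2)) _,
    show (-((b-a)/2))^(2*s+1) = -(((b-a)/2)^(2*s+1)) from Odd.neg_pow (⟨s, by ring⟩ : Odd (2*s+1)) _]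
  ring

lemma G_int_sq (a b θ : ℝ) (s : ℕ) (hab : a ≤ b) :
    ∫ x in a..b, (G a b θ (2*s+1) x)^2
      = ((b-a)^(2*s+1) / (((2*s+1).factorial : ℝ) * 2^(2*s+1)))^2 * (b-a)
        * ((θ^2*(2*(s:ℝ)+1)^2*(4*(s:ℝ)+3) - θ*(4*(2*(s:ℝ)+1)^2-1) + (4*(s:ℝ)+1))
            / ((4*(s:ℝ)+3)*(4*(s:ℝ)+1))) := by
  have ham : a ≤ (a+b)/2 := by linarith
  have hmb : (a+b)/2 ≤ b := by linarith
  obtain ⟨-, hsplit⟩ := split_int a ((a+b)/2) b ham hmb (fun x => (G a b θ (2*s+1) x)^2)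
    (fun x => (pp a (θ*(b-a)/2) (2*s) x)^2) (fun x => (pp b (-(θ*(b-a)/2)) (2*s) x)^2)
    (fun x hx => by simp only; rw [GL_eq x hx.2])
    (fun x hx => by simp only; rw [GR_eq x (not_le.mpr hx.1)])
    (((pp_cont _ _ _).pow 2).intervalIntegrable _ _)
    (((pp_cont _ _ _).pow 2).intervalIntegrable _ _)
  rw [hsplit, int_pp_sq, int_pp_sq]
  have hma : (a+b)/2 - a = (b-a)/2 := by ring
  have hmb2 : (a+b)/2 - b = -((b-a)/2) := by ring
  rw [hma, hmb2, sub_self, sub_self,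
    zero_pow (by omega : 2*(2*s)+3 ≠ 0), zero_pow (by omega : 2*(2*s)+2 ≠ 0),
    zero_pow (by omega : 2*(2*s)+1 ≠ 0),
    show (-((b-a)/2))^(2*(2*s)+3) = -(((b-a)/2)^(2*(2*s)+3)) from
      Odd.neg_pow (⟨2*s+1, by ring⟩ : Odd (2*(2*s)+3)) _,
    show (-((b-a)/2))^(2*(2*s)+2) = ((b-a)/2)^(2*(2*s)+2) from
      Even.neg_pow (⟨2*s+1, by ring⟩ : Even (2*(2*s)+2)) _,
    show (-((b-a)/2))^(2*(2*s)+1) = -(((b-a)/2)^(2*(2*s)+1)) from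
      Odd.neg_pow (⟨2*s, by ring⟩ : Odd (2*(2*s)+1)) _]
  have hf : ((2*s+1).factorial : ℝ) = (2*(s:ℝ)+1) * ((2*s).factorial : ℝ) := by
    rw [Nat.factorial_succ]; push_cast; ring
  have c0 : (((2*s).factorial : ℝ)) ≠ 0 := by positivity
  have d3 : (2*(2*(s:ℝ))+3) ≠ 0 := by positivity
  have d2 : (2*(2*(s:ℝ))+2) ≠ 0 := by positivity
  have d1 : (2*(2*(s:ℝ))+1) ≠ 0 := by positivity
  have e3 : (4*(s:ℝ)+3) ≠ 0 := by positivity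
  have e1 : (4*(s:ℝ)+1) ≠ 0 := by positivity
  have p2 : ((2:ℝ))^(2*s+1) ≠ 0 := by positivity
  rw [hf]
  push_cast
  simp only [div_pow]
  field_simp
  ring

theorem stmt14 (a b θ : ℝ) (n : ℕ) (f : ℝ → ℝ)
    (hab : a < b) (hθ : θ ∈ Set.Icc (0 : ℝ) 1) (hn : 1 ≤ n) (hodd : Odd n)
    (hd : ∀ k < n - 1, ∀ x ∈ Set.Icc a b,
      HasDerivAt (iteratedDeriv k f) (iteratedDeriv (k + 1) f x) x)
    (hcont : ContinuousOn (iteratedDeriv (n - 1) f) (Set.Icc a b))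
    (hint : IntervalIntegrable (iteratedDeriv n f) volume a b)
    (hftc : ∀ x ∈ Set.Icc a b,
      iteratedDeriv (n - 1) f x
        = iteratedDeriv (n - 1) f a + ∫ t in a..x, iteratedDeriv n f t)
    (hint2 : IntervalIntegrable (fun x => (iteratedDeriv n f x) ^ 2) volume a b) :
    |(∫ x in a..b, f x) - quadF a b θ n f|
      ≤ (b - a) ^ n * Real.sqrt (b - a) / ((n.factorial : ℝ) * 2 ^ n)
        * Real.sqrt ((θ ^ 2 * (n : ℝ) ^ 2 * (2 * (n : ℝ) + 1) - θ * (4 * (n : ℝ) ^ 2 - 1)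
            + (2 * (n : ℝ) - 1)) / ((2 * (n : ℝ) + 1) * (2 * (n : ℝ) - 1)))
        * Real.sqrt (qsigma a b (iteratedDeriv n f)) := by
  obtain ⟨s, hs⟩ := hodd
  subst hs
  set n := 2*s+1 with hn'
  have habl : a ≤ b := hab.le
  have hba : (0:ℝ) < b - a := by linarith
  have ham : a ≤ (a+b)/2 := by linarith
  have hmb : (a+b)/2 ≤ b := by linarith
  set g := iteratedDeriv n f with hg
  set μ := (∫ x in a..b, g x)/(b-a) with hμ
  have K := kernel_identity (θ := θ) hab hn ⟨s, rfl⟩ hd hcont hint hftc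
  -- integrability of pieces
  have dnsub : ∀ p q : ℝ, a ≤ p → q ≤ b → p ≤ q → IntervalIntegrable g volume p q := by
    intro p q hp hq hpq
    refine hint.mono_set ?_
    rw [Set.uIcc_of_le hpq, Set.uIcc_of_le habl]
    exact Set.Icc_subset_Icc hp hq
  have splitGg := split_int a ((a+b)/2) b ham hmb (fun x => G a b θ n x * g x)
    (fun x => pp a (θ*(b-a)/2) (2*s) x * g x) (fun x => pp b (-(θ*(b-a)/2)) (2*s) x * g x)
    (fun x hx => by simp only; rw [GL_eq x hx.2])
    (fun x hx => by simp only; rw [GR_eq x (not_le.mpr hx.1)])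
    ((dnsub a ((a+b)/2) le_rfl hmb ham).continuousOn_mul (pp_cont _ _ _).continuousOn)
    ((dnsub ((a+b)/2) b ham le_rfl hmb).continuousOn_mul (pp_cont _ _ _).continuousOn)
  have hGg_int := splitGg.1
  have hG_int := (split_int a ((a+b)/2) b ham hmb (G a b θ n)
    (pp a (θ*(b-a)/2) (2*s)) (pp b (-(θ*(b-a)/2)) (2*s))
    (fun x hx => GL_eq x hx.2) (fun x hx => GR_eq x (not_le.mpr hx.1))
    ((pp_cont _ _ _).intervalIntegrable _ _) ((pp_cont _ _ _).intervalIntegrable _ _)).1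
  have hG2_int := (split_int a ((a+b)/2) b ham hmb (fun x => (G a b θ n x)^2)
    (fun x => (pp a (θ*(b-a)/2) (2*s) x)^2) (fun x => (pp b (-(θ*(b-a)/2)) (2*s) x)^2)
    (fun x hx => by simp only; rw [GL_eq x hx.2])
    (fun x hx => by simp only; rw [GR_eq x (not_le.mpr hx.1)])
    (((pp_cont _ _ _).pow 2).intervalIntegrable _ _)
    (((pp_cont _ _ _).pow 2).intervalIntegrable _ _)).1
  -- key equation with centered weight
  have hGW : ∫ x in a..b, G a b θ n x * (g x - μ)
      = quadF a b θ n f - ∫ x in a..b, f x := by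
    rw [show (fun x => G a b θ n x * (g x - μ))
        = fun x => G a b θ n x * g x - μ * G a b θ n x from by funext x; ring]
    rw [intervalIntegral.integral_sub hGg_int (hG_int.const_mul μ),
      intervalIntegral.integral_const_mul, G_int_zero a b θ s habl, K]
    ring
  -- measurability and square integrability
  have mG : Measurable (G a b θ n) := by
    unfold G
    exact Measurable.ite (measurableSet_le measurable_id measurable_const)
      (Continuous.measurable (by fun_prop)) (Continuous.measurable (by fun_prop))
  have hGm : AEStronglyMeasurable (G a b θ n) (volume.restrict (Set.Ioc a b)) :=
    mG.aestronglyMeasurable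
  have hWm : AEStronglyMeasurable (fun x => g x - μ) (volume.restrict (Set.Ioc a b)) :=
    hint.1.aestronglyMeasurable.sub aestronglyMeasurable_const
  have hG2 : IntegrableOn (fun x => (G a b θ n x)^2) (Set.Ioc a b) volume :=
    (intervalIntegrable_iff_integrableOn_Ioc_of_le habl).1 hG2_int
  have hWexp : (fun x => (g x - μ)^2) = fun x => ((g x)^2 - (2*μ)*(g x)) + μ^2 := by
    funext x; ring
  have hW2_int : IntervalIntegrable (fun x => (g x - μ)^2) volume a b := by
    rw [hWexp]
    exact (hint2.sub (hint.const_mul (2*μ))).add intervalIntegrable_const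
  have hW2 : IntegrableOn (fun x => (g x - μ)^2) (Set.Ioc a b) volume :=
    (intervalIntegrable_iff_integrableOn_Ioc_of_le habl).1 hW2_int
  have CS := my_cs a b habl (G a b θ n) (fun x => g x - μ) hGm hWm hG2 hW2
  -- variance identity
  have hW2eq : ∫ x in a..b, (g x - μ)^2 = qsigma a b g := by
    rw [hWexp, intervalIntegral.integral_add (hint2.sub (hint.const_mul (2*μ)))
        intervalIntegrable_const,
      intervalIntegral.integral_sub hint2 (hint.const_mul (2*μ)),
      intervalIntegral.integral_const_mul, intervalIntegral.integral_const, qsigma, hμ]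
    have : b - a ≠ 0 := ne_of_gt hba
    simp only [smul_eq_mul]
    field_simp
    ring
  have hG2eq := G_int_sq a b θ s habl
  -- sqrt algebra
  have hM : (θ ^ 2 * ((2*s+1:ℕ) : ℝ) ^ 2 * (2 * ((2*s+1:ℕ) : ℝ) + 1)
        - θ * (4 * ((2*s+1:ℕ) : ℝ) ^ 2 - 1) + (2 * ((2*s+1:ℕ) : ℝ) - 1))
        / ((2 * ((2*s+1:ℕ) : ℝ) + 1) * (2 * ((2*s+1:ℕ) : ℝ) - 1))
      = (θ^2*(2*(s:ℝ)+1)^2*(4*(s:ℝ)+3) - θ*(4*(2*(s:ℝ)+1)^2-1) + (4*(s:ℝ)+1))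
            / ((4*(s:ℝ)+3)*(4*(s:ℝ)+1)) := by
    push_cast; ring
  have hC : (0:ℝ) ≤ (b-a)^(2*s+1) / (((2*s+1).factorial : ℝ) * 2^(2*s+1)) := by positivity
  have hsqrtG : Real.sqrt (∫ x in a..b, (G a b θ n x)^2)
      = (b-a)^(2*s+1) / (((2*s+1).factorial : ℝ) * 2^(2*s+1))
        * (Real.sqrt (b-a) * Real.sqrt ((θ^2*(2*(s:ℝ)+1)^2*(4*(s:ℝ)+3)
            - θ*(4*(2*(s:ℝ)+1)^2-1) + (4*(s:ℝ)+1)) / ((4*(s:ℝ)+3)*(4*(s:ℝ)+1)))) := by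
    rw [hG2eq]
    rw [show ((b-a)^(2*s+1) / (((2*s+1).factorial : ℝ) * 2^(2*s+1)))^2 * (b-a)
        * ((θ^2*(2*(s:ℝ)+1)^2*(4*(s:ℝ)+3) - θ*(4*(2*(s:ℝ)+1)^2-1) + (4*(s:ℝ)+1))
            / ((4*(s:ℝ)+3)*(4*(s:ℝ)+1)))
      = ((b-a)^(2*s+1) / (((2*s+1).factorial : ℝ) * 2^(2*s+1)))^2 * ((b-a)
        * ((θ^2*(2*(s:ℝ)+1)^2*(4*(s:ℝ)+3) - θ*(4*(2*(s:ℝ)+1)^2-1) + (4*(s:ℝ)+1))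
            / ((4*(s:ℝ)+3)*(4*(s:ℝ)+1)))) from by ring]
    rw [Real.sqrt_mul (sq_nonneg _), Real.sqrt_sq hC, Real.sqrt_mul (le_of_lt hba)]
  have habs : |(∫ x in a..b, f x) - quadF a b θ n f|
      = |∫ x in a..b, G a b θ n x * (g x - μ)| := by
    rw [hGW, abs_sub_comm]
  rw [habs, hM]
  calc |∫ x in a..b, G a b θ n x * (g x - μ)|
      ≤ Real.sqrt (∫ x in a..b, (G a b θ n x)^2)
        * Real.sqrt (∫ x in a..b, (g x - μ)^2) := CS
    _ = (b-a)^(2*s+1) * Real.sqrt (b-a) / (((2*s+1).factorial : ℝ) * 2^(2*s+1))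
        * Real.sqrt ((θ^2*(2*(s:ℝ)+1)^2*(4*(s:ℝ)+3) - θ*(4*(2*(s:ℝ)+1)^2-1) + (4*(s:ℝ)+1))
            / ((4*(s:ℝ)+3)*(4*(s:ℝ)+1)))
        * Real.sqrt (qsigma a b g) := by
        rw [hsqrtG, hW2eq]; ring
end

section
/- Let n > 1 be an integer and f : [a,b] → ℝ with f^{(n-1)} absolutely continuous on [a,b] and f^{(n)} ∈ L¹[a,b]. Then the averaged midpoint-trapezoid quadrature error satisfies |∫_a^b f(x) dx - (b-a)/4 · [f(a) + 2 f((a+b)/2) + f(b)] + Σ_{i=1}^{⌊(n-1)/2⌋} (2i-1)(b-a)^{2i+1}/((2i+1)!·2^{2i+1}) · f^{(2i)}((a+b)/2)| ≤ ‖f^{(n)}‖₁ · K, where K = (n-2)(b-a)^n/(n!·2^{n+1}) if n ≥ 3, and K = (b-a)²/32 if n = 2, with ‖f^{(n)}‖₁ = ∫_a^b |f^{(n)}(x)| dx. -/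
open MeasureTheory intervalIntegral Set

/- ### Auxiliary development -/

lemma swap_tri (α γ : ℝ) (hle : α ≤ γ) (u g : ℝ → ℝ) (hu : Continuous u)
    (hg : IntervalIntegrable g volume α γ) :
    ∫ x in α..γ, u x * (∫ t in α..x, g t) = ∫ t in α..γ, (∫ x in t..γ, u x) * g t := by
  have hgI : IntegrableOn g (Ioc α γ) volume := by
    simpa [IntervalIntegrable, hle] using hg.1
  set μ := volume.restrict (Ioc α γ) with hμ
  have huI : Integrable u μ := hu.integrableOn_Ioc
  have hS : MeasurableSet {q : ℝ × ℝ | q.2 ≤ q.1} :=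
    (isClosed_le continuous_snd continuous_fst).measurableSet
  set F : ℝ × ℝ → ℝ := ({q : ℝ × ℝ | q.2 ≤ q.1}).indicator (fun q => u q.1 * g q.2) with hF
  have hFI : Integrable F (μ.prod μ) := (huI.mul_prod hgI).indicator hS
  have swap := MeasureTheory.integral_integral_swap (f := fun x t => F (x, t)) (μ := μ) (ν := μ) (by exact hFI)
  have L : ∫ x, ∫ t, F (x, t) ∂μ ∂μ = ∫ x in α..γ, u x * (∫ t in α..x, g t) := by
    rw [intervalIntegral.integral_of_le hle]
    apply setIntegral_congr_fun measurableSet_Ioc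
    intro x hx
    show (∫ t, F (x, t) ∂μ) = u x * ∫ t in α..x, g t
    have h1 : (fun t => F (x, t)) = (Iic x).indicator (fun t => u x * g t) := by
      funext t
      simp only [hF, Set.indicator, mem_setOf_eq, mem_Iic]
    rw [h1, MeasureTheory.integral_indicator measurableSet_Iic, hμ,
      Measure.restrict_restrict measurableSet_Iic]
    have h2 : Iic x ∩ Ioc α γ = Ioc α x := by
      ext t; simp only [mem_inter_iff, mem_Iic, mem_Ioc]
      constructor
      · rintro ⟨h1, h2, h3⟩; exact ⟨h2, h1⟩
      · rintro ⟨h1, h2⟩; exact ⟨h2, h1, h2.trans hx.2⟩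
    rw [h2, MeasureTheory.integral_const_mul, ← intervalIntegral.integral_of_le (le_of_lt hx.1)]
  have R : ∫ t, ∫ x, F (x, t) ∂μ ∂μ = ∫ t in α..γ, (∫ x in t..γ, u x) * g t := by
    rw [intervalIntegral.integral_of_le hle]
    apply setIntegral_congr_fun measurableSet_Ioc
    intro t ht
    show (∫ x, F (x, t) ∂μ) = (∫ x in t..γ, u x) * g t
    have h1 : (fun x => F (x, t)) = (Ici t).indicator (fun x => u x * g t) := by
      funext x
      simp only [hF, Set.indicator, mem_setOf_eq, mem_Ici]
    rw [h1, MeasureTheory.integral_indicator measurableSet_Ici, hμ,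
      Measure.restrict_restrict measurableSet_Ici]
    have h2 : Ici t ∩ Ioc α γ = Icc t γ := by
      ext x; simp only [mem_inter_iff, mem_Ici, mem_Icc, mem_Ioc]
      constructor
      · rintro ⟨h1, h2, h3⟩; exact ⟨h1, h3⟩
      · rintro ⟨h1, h2⟩; exact ⟨h1, lt_of_lt_of_le ht.1 h1, h2⟩
    rw [h2, integral_Icc_eq_integral_Ioc, MeasureTheory.integral_mul_const,
      ← intervalIntegral.integral_of_le ht.2]
  rw [← L, ← R, swap]

lemma ibp_ac_s18 (α γ : ℝ) (hle : α ≤ γ) (U u v g : ℝ → ℝ)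
    (hU : ∀ x, HasDerivAt U (u x) x) (hu : Continuous u)
    (hg : IntervalIntegrable g volume α γ)
    (hv : ∀ x ∈ Set.Icc α γ, v x = v α + ∫ t in α..x, g t) :
    ∫ x in α..γ, U x * g x
      = U γ * v γ - U α * v α - ∫ x in α..γ, u x * v x := by
  have hUc : Continuous U := by
    have : Differentiable ℝ U := fun x => (hU x).differentiableAt
    exact this.continuous
  have hftcU : ∀ s t : ℝ, ∫ x in s..t, u x = U t - U s := fun s t =>
    intervalIntegral.integral_eq_sub_of_hasDerivAt (fun x _ => hU x)
      (hu.intervalIntegrable s t)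
  set V : ℝ → ℝ := fun x => ∫ t in α..x, g t with hV
  have hgIcc : IntegrableOn g (Icc α γ) volume :=
    (intervalIntegrable_iff_integrableOn_Icc_of_le hle).1 hg
  have hVc : ContinuousOn V (Icc α γ) := by
    have := intervalIntegral.continuousOn_primitive_interval
      (a := α) (b := γ) (f := g) (μ := volume) (by rw [uIcc_of_le hle]; exact hgIcc)
    simpa [uIcc_of_le hle] using this
  have h1 : ∫ x in α..γ, u x * v x = ∫ x in α..γ, u x * (v α + V x) := by
    apply intervalIntegral.integral_congr
    intro x hx
    rw [uIcc_of_le hle] at hx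
    show u x * v x = u x * (v α + V x)
    rw [hv x hx]
  have hiuV : IntervalIntegrable (fun x => u x * V x) volume α γ :=
    ContinuousOn.intervalIntegrable (by
      rw [uIcc_of_le hle]; exact hu.continuousOn.mul hVc)
  have h2 : ∫ x in α..γ, u x * (v α + V x)
      = v α * (U γ - U α) + ∫ x in α..γ, u x * V x := by
    have : ∀ x, u x * (v α + V x) = v α * u x + u x * V x := fun x => by ring
    simp_rw [this]
    rw [intervalIntegral.integral_add ((hu.intervalIntegrable α γ).const_mul _) hiuV,
      intervalIntegral.integral_const_mul, hftcU]
  have h3 : ∫ x in α..γ, u x * V x = ∫ t in α..γ, (U γ - U t) * g t := by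
    rw [swap_tri α γ hle u g hu hg]
    apply intervalIntegral.integral_congr
    intro t _
    show (∫ x in t..γ, u x) * g t = (U γ - U t) * g t
    rw [hftcU t γ]
  have h4 : ∫ t in α..γ, (U γ - U t) * g t
      = U γ * (∫ t in α..γ, g t) - ∫ t in α..γ, U t * g t := by
    have : ∀ t, (U γ - U t) * g t = U γ * g t - U t * g t := fun t => by ring
    simp_rw [this]
    rw [intervalIntegral.integral_sub (hg.const_mul _) (hg.continuousOn_mul hUc.continuousOn),
      intervalIntegral.integral_const_mul]
  have h5 : v γ = v α + ∫ t in α..γ, g t := hv γ ⟨hle, le_refl _⟩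
  have h6 : ∫ x in α..γ, u x * v x
      = v α * (U γ - U α) + (U γ * (v γ - v α) - ∫ t in α..γ, U t * g t) := by
    rw [h1, h2, h3, h4]
    congr 2
    rw [h5]; ring
  rw [h6]; ring

/-- Left-half antiderivative chain. -/
noncomputable def Pl (a b : ℝ) (j : ℕ) (x : ℝ) : ℝ :=
  (x - a) ^ (j + 1) / ((j + 1).factorial : ℝ)
    - (b - a) / 4 * ((x - a) ^ j / (j.factorial : ℝ))

/-- Right-half antiderivative chain. -/
noncomputable def Pr (a b : ℝ) (j : ℕ) (x : ℝ) : ℝ :=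
  (x - b) ^ (j + 1) / ((j + 1).factorial : ℝ)
    + (b - a) / 4 * ((x - b) ^ j / (j.factorial : ℝ))

lemma contPl (a b : ℝ) (j : ℕ) : Continuous (Pl a b j) := by
  unfold Pl; fun_prop

lemma contPr (a b : ℝ) (j : ℕ) : Continuous (Pr a b j) := by
  unfold Pr; fun_prop

lemma hasDerivAt_Pl (a b : ℝ) (j : ℕ) (x : ℝ) :
    HasDerivAt (Pl a b (j + 1)) (Pl a b j x) x := by
  have h1 := (((hasDerivAt_id x).sub_const a).pow (j + 2)).div_const ((j + 2).factorial : ℝ)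
  have h2 := ((((hasDerivAt_id x).sub_const a).pow (j + 1)).div_const
      ((j + 1).factorial : ℝ)).const_mul ((b - a) / 4)
  have h := h1.sub h2
  have e : (↑(j + 2) * (x - a) ^ (j + 2 - 1) * 1 / ((j + 2).factorial : ℝ)
      - (b - a) / 4 * (↑(j + 1) * (x - a) ^ (j + 1 - 1) * 1 / ((j + 1).factorial : ℝ)))
      = Pl a b j x := by
    unfold Pl
    have e1 : ((j + 2).factorial : ℝ) = (j + 2) * ((j + 1).factorial : ℝ) := by
      exact_mod_cast Nat.factorial_succ (j + 1)
    have e2 : ((j + 1).factorial : ℝ) = (j + 1) * (j.factorial : ℝ) := by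
      exact_mod_cast Nat.factorial_succ j
    have p1 : (0:ℝ) < ((j + 1).factorial : ℝ) := by positivity
    have p2 : (0:ℝ) < (j.factorial : ℝ) := by positivity
    rw [e1, e2]
    push_cast
    field_simp
  rw [← e]
  exact h

lemma hasDerivAt_Pr (a b : ℝ) (j : ℕ) (x : ℝ) :
    HasDerivAt (Pr a b (j + 1)) (Pr a b j x) x := by
  have h1 := (((hasDerivAt_id x).sub_const b).pow (j + 2)).div_const ((j + 2).factorial : ℝ)
  have h2 := ((((hasDerivAt_id x).sub_const b).pow (j + 1)).div_const
      ((j + 1).factorial : ℝ)).const_mul ((b - a) / 4)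
  have h := h1.add h2
  have e : (↑(j + 2) * (x - b) ^ (j + 2 - 1) * 1 / ((j + 2).factorial : ℝ)
      + (b - a) / 4 * (↑(j + 1) * (x - b) ^ (j + 1 - 1) * 1 / ((j + 1).factorial : ℝ)))
      = Pr a b j x := by
    unfold Pr
    have e1 : ((j + 2).factorial : ℝ) = (j + 2) * ((j + 1).factorial : ℝ) := by
      exact_mod_cast Nat.factorial_succ (j + 1)
    have e2 : ((j + 1).factorial : ℝ) = (j + 1) * (j.factorial : ℝ) := by
      exact_mod_cast Nat.factorial_succ j
    have p1 : (0:ℝ) < ((j + 1).factorial : ℝ) := by positivity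
    have p2 : (0:ℝ) < (j.factorial : ℝ) := by positivity
    rw [e1, e2]
    push_cast
    field_simp
  rw [← e]
  exact h

lemma hasDerivAt_Pl0 (a b : ℝ) (x : ℝ) : HasDerivAt (Pl a b 0) 1 x := by
  have h1 := (((hasDerivAt_id x).sub_const a).pow 1).div_const ((1).factorial : ℝ)
  have h2 := ((((hasDerivAt_id x).sub_const a).pow 0).div_const
      ((0).factorial : ℝ)).const_mul ((b - a) / 4)
  have h := h1.sub h2
  have e : ((1:ℕ) * (x - a) ^ (1 - 1) * 1 / ((1).factorial : ℝ)
      - (b - a) / 4 * ((0:ℕ) * (x - a) ^ (0 - 1) * 1 / ((0).factorial : ℝ))) = 1 := by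
    norm_num
  rw [← e]
  exact h

lemma hasDerivAt_Pr0 (a b : ℝ) (x : ℝ) : HasDerivAt (Pr a b 0) 1 x := by
  have h1 := (((hasDerivAt_id x).sub_const b).pow 1).div_const ((1).factorial : ℝ)
  have h2 := ((((hasDerivAt_id x).sub_const b).pow 0).div_const
      ((0).factorial : ℝ)).const_mul ((b - a) / 4)
  have h := h1.add h2
  have e : ((1:ℕ) * (x - b) ^ (1 - 1) * 1 / ((1).factorial : ℝ)
      + (b - a) / 4 * ((0:ℕ) * (x - b) ^ (0 - 1) * 1 / ((0).factorial : ℝ))) = 1 := by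
    norm_num
  rw [← e]
  exact h

/-- The error functional. -/
noncomputable def Er (a b : ℝ) (n : ℕ) (f : ℝ → ℝ) : ℝ :=
  (∫ x in a..b, f x) - (b - a) / 4 * (f a + 2 * f ((a + b) / 2) + f b)
    + ∑ i ∈ Finset.Icc 1 ((n - 1) / 2),
        (2 * (i : ℝ) - 1) * (b - a) ^ (2 * i + 1)
          / (((2 * i + 1).factorial : ℝ) * 2 ^ (2 * i + 1))
          * iteratedDeriv (2 * i) f ((a + b) / 2)

theorem stmt18 (a b : ℝ) (n : ℕ) (f : ℝ → ℝ)
    (hab : a < b) (hn : 1 < n)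
    (hd : ∀ k < n - 1, ∀ x ∈ Set.Icc a b,
      HasDerivAt (iteratedDeriv k f) (iteratedDeriv (k + 1) f x) x)
    (hcont : ContinuousOn (iteratedDeriv (n - 1) f) (Set.Icc a b))
    (hint : IntervalIntegrable (iteratedDeriv n f) volume a b)
    (hftc : ∀ x ∈ Set.Icc a b,
      iteratedDeriv (n - 1) f x
        = iteratedDeriv (n - 1) f a + ∫ t in a..x, iteratedDeriv n f t)
    :
    (3 ≤ n →
      |(∫ x in a..b, f x)
        - (b - a) / 4 * (f a + 2 * f ((a + b) / 2) + f b)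
        + ∑ i ∈ Finset.Icc 1 ((n - 1) / 2),
            (2 * (i : ℝ) - 1) * (b - a) ^ (2 * i + 1)
              / (((2 * i + 1).factorial : ℝ) * 2 ^ (2 * i + 1))
              * iteratedDeriv (2 * i) f ((a + b) / 2)|
        ≤ (∫ x in a..b, |iteratedDeriv n f x|)
          * (((n : ℝ) - 2) * (b - a) ^ n / ((n.factorial : ℝ) * 2 ^ (n + 1)))) ∧
    (n = 2 →
      |(∫ x in a..b, f x)
        - (b - a) / 4 * (f a + 2 * f ((a + b) / 2) + f b)
        + ∑ i ∈ Finset.Icc 1 ((n - 1) / 2),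
            (2 * (i : ℝ) - 1) * (b - a) ^ (2 * i + 1)
              / (((2 * i + 1).factorial : ℝ) * 2 ^ (2 * i + 1))
              * iteratedDeriv (2 * i) f ((a + b) / 2)|
        ≤ (∫ x in a..b, |iteratedDeriv n f x|) * ((b - a) ^ 2 / 32)) := by
  obtain ⟨m, rfl⟩ : ∃ m, n = m + 2 := ⟨n - 2, by omega⟩
  simp only [show m + 2 - 1 = m + 1 from rfl] at hd hcont hftc
  set c : ℝ := (a + b) / 2 with hc
  have hab' : a ≤ b := le_of_lt hab
  have hac : a ≤ c := by rw [hc]; linarith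
  have hcb : c ≤ b := by rw [hc]; linarith
  have haI : a ∈ Icc a b := ⟨le_refl _, hab'⟩
  have hbI : b ∈ Icc a b := ⟨hab', le_refl _⟩
  have hcI : c ∈ Icc a b := ⟨hac, hcb⟩
  have hsub : ∀ {s t : ℝ}, s ∈ Icc a b → t ∈ Icc a b → uIcc s t ⊆ Icc a b :=
    fun hs ht => uIcc_subset_Icc hs ht
  -- continuity of iterated derivatives up to m+1
  have contk : ∀ k, k ≤ m + 1 → ContinuousOn (iteratedDeriv k f) (Icc a b) := by
    intro k hk
    rcases eq_or_lt_of_le hk with rfl | hlt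
    · exact hcont
    · exact fun x hx => ((hd k (by omega) x hx).continuousAt).continuousWithinAt
  have intk : ∀ k, k ≤ m + 1 → ∀ {s t : ℝ}, s ∈ Icc a b → t ∈ Icc a b →
      IntervalIntegrable (iteratedDeriv k f) volume s t := by
    intro k hk s t hs ht
    exact ((contk k hk).mono (hsub hs ht)).intervalIntegrable
  have intn : ∀ {s t : ℝ}, s ∈ Icc a b → t ∈ Icc a b →
      IntervalIntegrable (iteratedDeriv (m + 2) f) volume s t := by
    intro s t hs ht
    exact hint.mono_set (by rw [uIcc_of_le hab']; exact hsub hs ht)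
  -- the claim, by induction
  have claim : ∀ j, j + 1 ≤ m + 2 →
      (∫ x in a..c, Pl a b j x * iteratedDeriv (j + 1) f x)
        + (∫ x in c..b, Pr a b j x * iteratedDeriv (j + 1) f x)
      = (-1) ^ (j + 1) * Er a b (j + 1) f := by
    intro j
    induction j with
    | zero =>
      intro _
      have hL := intervalIntegral.integral_mul_deriv_eq_deriv_mul
        (u := Pl a b 0) (v := iteratedDeriv 0 f) (u' := fun _ => (1:ℝ))
        (v' := iteratedDeriv 1 f)
        (fun x _ => hasDerivAt_Pl0 a b x)
        (fun x hx => hd 0 (by omega) x (hsub haI hcI hx))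
        (continuous_const.intervalIntegrable a c)
        (intk 1 (by omega) haI hcI)
      have hR := intervalIntegral.integral_mul_deriv_eq_deriv_mul
        (u := Pr a b 0) (v := iteratedDeriv 0 f) (u' := fun _ => (1:ℝ))
        (v' := iteratedDeriv 1 f)
        (fun x _ => hasDerivAt_Pr0 a b x)
        (fun x hx => hd 0 (by omega) x (hsub hcI hbI hx))
        (continuous_const.intervalIntegrable c b)
        (intk 1 (by omega) hcI hbI)
      have hsplit : (∫ x in a..c, iteratedDeriv 0 f x) + (∫ x in c..b, iteratedDeriv 0 f x)
          = ∫ x in a..b, iteratedDeriv 0 f x :=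
        intervalIntegral.integral_add_adjacent_intervals
          (intk 0 (by omega) haI hcI) (intk 0 (by omega) hcI hbI)
      have e0 : iteratedDeriv 0 f = f := iteratedDeriv_zero
      have v1 : Pl a b 0 c = (b - a) / 4 := by
        simp [Pl, Nat.factorial]; rw [hc]; ring
      have v2 : Pl a b 0 a = -((b - a) / 4) := by
        simp [Pl, Nat.factorial]
      have v3 : Pr a b 0 b = (b - a) / 4 := by
        simp [Pr, Nat.factorial]
      have v4 : Pr a b 0 c = -((b - a) / 4) := by
        simp [Pr, Nat.factorial]; rw [hc]; ring
      have hEr : Er a b 1 f = (∫ x in a..b, f x)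
          - (b - a) / 4 * (f a + 2 * f c + f b) := by
        unfold Er
        rw [show (1 - 1) / 2 = 0 from rfl, Finset.Icc_eq_empty (by omega)]
        simp [hc]
      simp only [one_mul] at hL hR
      rw [e0] at hL hR hsplit
      simp only [Nat.zero_add]
      rw [hL, hR, v1, v2, v3, v4, hEr, pow_one]
      linarith [hsplit]
    | succ j ih =>
      intro hj2
      have hjm : j ≤ m := by omega
      have key := ih (by omega)
      have hL : ∫ x in a..c, Pl a b (j + 1) x * iteratedDeriv (j + 1 + 1) f x
          = Pl a b (j + 1) c * iteratedDeriv (j + 1) f c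
            - Pl a b (j + 1) a * iteratedDeriv (j + 1) f a
            - ∫ x in a..c, Pl a b j x * iteratedDeriv (j + 1) f x := by
        rcases lt_or_eq_of_le hjm with hlt | rfl
        · exact intervalIntegral.integral_mul_deriv_eq_deriv_mul
            (fun x _ => hasDerivAt_Pl a b j x)
            (fun x hx => hd (j + 1) (by omega) x (hsub haI hcI hx))
            ((contPl a b j).intervalIntegrable a c)
            (intk (j + 1 + 1) (by omega) haI hcI)
        · exact ibp_ac_s18 a c hac (Pl a b (j + 1)) (Pl a b j)
            (iteratedDeriv (j + 1) f) (iteratedDeriv (j + 1 + 1) f)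
            (hasDerivAt_Pl a b j) (contPl a b j) (intn haI hcI)
            (fun x hx => hftc x ⟨hx.1, hx.2.trans hcb⟩)
      have hR : ∫ x in c..b, Pr a b (j + 1) x * iteratedDeriv (j + 1 + 1) f x
          = Pr a b (j + 1) b * iteratedDeriv (j + 1) f b
            - Pr a b (j + 1) c * iteratedDeriv (j + 1) f c
            - ∫ x in c..b, Pr a b j x * iteratedDeriv (j + 1) f x := by
        rcases lt_or_eq_of_le hjm with hlt | rfl
        · exact intervalIntegral.integral_mul_deriv_eq_deriv_mul
            (fun x _ => hasDerivAt_Pr a b j x)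
            (fun x hx => hd (j + 1) (by omega) x (hsub hcI hbI hx))
            ((contPr a b j).intervalIntegrable c b)
            (intk (j + 1 + 1) (by omega) hcI hbI)
        · exact ibp_ac_s18 c b hcb (Pr a b (j + 1)) (Pr a b j)
            (iteratedDeriv (j + 1) f) (iteratedDeriv (j + 1 + 1) f)
            (hasDerivAt_Pr a b j) (contPr a b j) (intn hcI hbI)
            (fun x hx => by
              show iteratedDeriv (j + 1) f x
                = iteratedDeriv (j + 1) f c + ∫ t in c..x, iteratedDeriv (j + 2) f t
              have h1 := hftc x ⟨hac.trans hx.1, hx.2⟩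
              have h2 := hftc c hcI
              have hadd := intervalIntegral.integral_add_adjacent_intervals
                (intn haI hcI) (intn hcI ⟨hac.trans hx.1, hx.2⟩)
              rw [h1, h2, ← hadd]
              ring)
      have hPla0 : Pl a b (j + 1) a = 0 := by
        simp [Pl]
      have hPrb0 : Pr a b (j + 1) b = 0 := by
        simp [Pr]
      have hcb' : c - b = -(c - a) := by rw [hc]; ring
      have hca : c - a = (b - a) / 2 := by rw [hc]; ring
      rcases Nat.even_or_odd j with he | ho
      · -- j even : boundary term vanishes, sum unchanged
        obtain ⟨t, rfl⟩ := he
        have hPP : Pl a b (t + t + 1) c = Pr a b (t + t + 1) c := by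
          unfold Pl Pr
          rw [hcb', Even.neg_pow ⟨t + 1, by ring⟩, Odd.neg_pow ⟨t, by ring⟩]
          ring
        have hEr : Er a b (t + t + 1 + 1) f = Er a b (t + t + 1) f := by
          unfold Er
          rw [show (t + t + 1 + 1 - 1) / 2 = t from by omega,
            show (t + t + 1 - 1) / 2 = t from by omega]
        have s1 : ((-1 : ℝ)) ^ (t + t + 1) = -1 := Odd.neg_one_pow ⟨t, by ring⟩
        have s2 : ((-1 : ℝ)) ^ (t + t + 1 + 1) = 1 := Even.neg_one_pow ⟨t + 1, by ring⟩
        rw [hL, hR, hPla0, hPrb0, hEr, s2]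
        rw [s1] at key
        linear_combination (-1 : ℝ) * key + (iteratedDeriv (t + t + 1) f c) * hPP
      · -- j odd : a new series term appears
        obtain ⟨t, rfl⟩ := ho
        have hPP : Pl a b (2 * t + 1 + 1) c - Pr a b (2 * t + 1 + 1) c
            = -((2 * ((t:ℝ) + 1) - 1) * (b - a) ^ (2 * (t + 1) + 1)
              / (((2 * (t + 1) + 1).factorial : ℝ) * 2 ^ (2 * (t + 1) + 1))) := by
          unfold Pl Pr
          rw [hcb', Odd.neg_pow ⟨t + 1, by ring⟩, Even.neg_pow ⟨t + 1, by ring⟩, hca]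
          rw [show 2 * (t + 1) + 1 = 2 * t + 1 + 1 + 1 from by ring]
          have e1 : ((2 * t + 1 + 1 + 1).factorial : ℝ)
              = (2 * t + 3) * ((2 * t + 1 + 1).factorial : ℝ) := by
            exact_mod_cast Nat.factorial_succ (2 * t + 1 + 1)
          have p1 : (0:ℝ) < ((2 * t + 1 + 1).factorial : ℝ) := by positivity
          rw [e1, div_pow, div_pow]
          have p2 : (0:ℝ) < (2:ℝ) ^ (2 * t + 1 + 1 + 1) := by positivity
          have p3 : (0:ℝ) < (2:ℝ) ^ (2 * t + 1 + 1) := by positivity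
          have e2 : (2:ℝ) ^ (2 * t + 1 + 1 + 1) = 2 * 2 ^ (2 * t + 1 + 1) := by
            rw [pow_succ]; ring
          have e3 : (b - a) ^ (2 * t + 1 + 1 + 1) = (b - a) ^ (2 * t + 1 + 1) * (b - a) := by
            rw [pow_succ]
          push_cast
          rw [e2, e3]
          field_simp
          ring
        have hEr : Er a b (2 * t + 1 + 1 + 1) f = Er a b (2 * t + 1 + 1) f
            + (2 * ((t:ℝ) + 1) - 1) * (b - a) ^ (2 * (t + 1) + 1)
              / (((2 * (t + 1) + 1).factorial : ℝ) * 2 ^ (2 * (t + 1) + 1))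
              * iteratedDeriv (2 * (t + 1)) f c := by
          unfold Er
          rw [show (2 * t + 1 + 1 + 1 - 1) / 2 = t + 1 from by omega,
            show (2 * t + 1 + 1 - 1) / 2 = t from by omega,
            Finset.sum_Icc_succ_top (by omega : 1 ≤ t + 1)]
          push_cast
          rw [← hc]
          ring
        have hDidx : 2 * (t + 1) = 2 * t + 1 + 1 := by ring
        rw [hDidx] at hEr hPP
        have s1 : ((-1 : ℝ)) ^ (2 * t + 1 + 1) = 1 := Even.neg_one_pow ⟨t + 1, by ring⟩
        have s2 : ((-1 : ℝ)) ^ (2 * t + 1 + 1 + 1) = -1 := Odd.neg_one_pow ⟨t + 1, by ring⟩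
        rw [hL, hR, hPla0, hPrb0, hEr, s2]
        rw [s1] at key
        linear_combination (-1 : ℝ) * key + (iteratedDeriv (2 * t + 1 + 1) f c) * hPP
  have key := claim (m + 1) (le_refl _)
  have habs : |Er a b (m + 2) f|
      = |(∫ x in a..c, Pl a b (m + 1) x * iteratedDeriv (m + 1 + 1) f x)
          + (∫ x in c..b, Pr a b (m + 1) x * iteratedDeriv (m + 1 + 1) f x)| := by
    rw [key, abs_mul, abs_pow, abs_neg, abs_one, one_pow, one_mul]
  have main : ∀ K : ℝ,
      (∀ t : ℝ, 0 ≤ t → t ≤ (b - a) / 2 →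
        |t ^ (m + 2) / ((m + 2).factorial : ℝ)
          - (b - a) / 4 * (t ^ (m + 1) / ((m + 1).factorial : ℝ))| ≤ K) →
      |Er a b (m + 2) f| ≤ (∫ x in a..b, |iteratedDeriv (m + 2) f x|) * K := by
    intro K hK
    set g := iteratedDeriv (m + 2) f with hg
    have hPlb : ∀ x ∈ Icc a c, |Pl a b (m + 1) x| ≤ K := by
      intro x hx
      have hx2 : x ≤ (a + b) / 2 := hx.2
      have h1 := hK (x - a) (by linarith [hx.1]) (by linarith)
      have e : Pl a b (m + 1) x
          = (x - a) ^ (m + 2) / ((m + 2).factorial : ℝ)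
            - (b - a) / 4 * ((x - a) ^ (m + 1) / ((m + 1).factorial : ℝ)) := rfl
      rw [e]; exact h1
    have hPrb : ∀ x ∈ Icc c b, |Pr a b (m + 1) x| ≤ K := by
      intro x hx
      have hx1 : (a + b) / 2 ≤ x := hx.1
      have h1 := hK (b - x) (by linarith [hx.2]) (by linarith)
      have e : Pr a b (m + 1) x
          = (-1) ^ m * ((b - x) ^ (m + 2) / ((m + 2).factorial : ℝ)
            - (b - a) / 4 * ((b - x) ^ (m + 1) / ((m + 1).factorial : ℝ))) := by
        show (x - b) ^ (m + 2) / ((m + 2).factorial : ℝ)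
            + (b - a) / 4 * ((x - b) ^ (m + 1) / ((m + 1).factorial : ℝ)) = _
        rw [show x - b = -(b - x) from by ring]
        rcases Nat.even_or_odd m with ⟨r, rfl⟩ | ⟨r, rfl⟩
        · rw [Even.neg_pow ⟨r + 1, by ring⟩, Odd.neg_pow ⟨r, by ring⟩,
            Even.neg_one_pow ⟨r, by ring⟩]
          ring
        · rw [Odd.neg_pow ⟨r + 1, by ring⟩, Even.neg_pow ⟨r + 1, by ring⟩,
            Odd.neg_one_pow ⟨r, by ring⟩]
          ring
      rw [e, abs_mul, abs_pow, abs_neg, abs_one, one_pow, one_mul]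
      exact h1
    have hgac := intn haI hcI
    have hgcb := intn hcI hbI
    have iL : |∫ x in a..c, Pl a b (m + 1) x * g x| ≤ K * ∫ x in a..c, |g x| := by
      refine le_trans (intervalIntegral.abs_integral_le_integral_abs hac) ?_
      have h2 : ∫ x in a..c, |Pl a b (m + 1) x * g x| ≤ ∫ x in a..c, K * |g x| := by
        apply intervalIntegral.integral_mono_on hac
        · exact (hgac.continuousOn_mul (contPl a b (m + 1)).continuousOn).abs
        · exact hgac.abs.const_mul K
        · intro x hx
          rw [abs_mul]
          exact mul_le_mul_of_nonneg_right (hPlb x hx) (abs_nonneg _)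
      rw [intervalIntegral.integral_const_mul] at h2
      exact h2
    have iR : |∫ x in c..b, Pr a b (m + 1) x * g x| ≤ K * ∫ x in c..b, |g x| := by
      refine le_trans (intervalIntegral.abs_integral_le_integral_abs hcb) ?_
      have h2 : ∫ x in c..b, |Pr a b (m + 1) x * g x| ≤ ∫ x in c..b, K * |g x| := by
        apply intervalIntegral.integral_mono_on hcb
        · exact (hgcb.continuousOn_mul (contPr a b (m + 1)).continuousOn).abs
        · exact hgcb.abs.const_mul K
        · intro x hx
          rw [abs_mul]
          exact mul_le_mul_of_nonneg_right (hPrb x hx) (abs_nonneg _)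
      rw [intervalIntegral.integral_const_mul] at h2
      exact h2
    have hsplit : (∫ x in a..c, |g x|) + (∫ x in c..b, |g x|) = ∫ x in a..b, |g x| :=
      intervalIntegral.integral_add_adjacent_intervals hgac.abs hgcb.abs
    calc |Er a b (m + 2) f|
        ≤ |∫ x in a..c, Pl a b (m + 1) x * g x| + |∫ x in c..b, Pr a b (m + 1) x * g x| := by
          rw [habs]; exact abs_add_le _ _
      _ ≤ K * (∫ x in a..c, |g x|) + K * (∫ x in c..b, |g x|) := add_le_add iL iR
      _ = (∫ x in a..b, |g x|) * K := by rw [← hsplit]; ring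
  constructor
  · intro h3
    obtain ⟨p, rfl⟩ : ∃ p, m = p + 1 := ⟨m - 1, by omega⟩
    refine main ((((p + 1 + 2 : ℕ) : ℝ) - 2) * (b - a) ^ (p + 1 + 2)
      / (((p + 1 + 2).factorial : ℝ) * 2 ^ (p + 1 + 2 + 1))) ?_
    intro t h0t hth
    set h : ℝ := (b - a) / 2 with hh
    have h0h : 0 ≤ h := le_trans h0t hth
    set F : ℝ := ((p + 1 + 1).factorial : ℝ) with hF
    have hFpos : (0 : ℝ) < F := by rw [hF]; positivity
    have e1 : ((p + 1 + 2).factorial : ℝ) = ((p : ℝ) + 3) * F := by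
      rw [hF]
      have := Nat.factorial_succ (p + 1 + 1)
      push_cast [this]
      ring
    have hba : b - a = 2 * h := by rw [hh]; ring
    have hdenpos : (0 : ℝ) < ((p : ℝ) + 3) * F := by positivity
    have eX : t ^ (p + 1 + 2) / ((p + 1 + 2).factorial : ℝ)
        - (b - a) / 4 * (t ^ (p + 1 + 1) / ((p + 1 + 1).factorial : ℝ))
        = t ^ (p + 2) * (t - ((p : ℝ) + 3) * h / 2) / (((p : ℝ) + 3) * F) := by
      rw [e1, ← hF, hba]
      field_simp
      ring
    have hM : t ≤ ((p : ℝ) + 3) * h / 2 := by nlinarith [Nat.cast_nonneg (α := ℝ) p]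
    have habs2 : |t ^ (p + 1 + 2) / ((p + 1 + 2).factorial : ℝ)
        - (b - a) / 4 * (t ^ (p + 1 + 1) / ((p + 1 + 1).factorial : ℝ))|
        = t ^ (p + 2) * (((p : ℝ) + 3) * h / 2 - t) / (((p : ℝ) + 3) * F) := by
      rw [eX, abs_div, abs_of_pos hdenpos,
        abs_of_nonpos (mul_nonpos_of_nonneg_of_nonpos (pow_nonneg h0t _) (by linarith))]
      ring
    rw [habs2]
    have hA : t ^ p ≤ h ^ p := pow_le_pow_left₀ h0t hth p
    have hA0 : (0 : ℝ) ≤ t ^ p := pow_nonneg h0t p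
    have hp0 : (0 : ℝ) ≤ (p : ℝ) := Nat.cast_nonneg p
    have core : t ^ (p + 2) * (((p : ℝ) + 3) * h / 2 - t) ≤ ((p : ℝ) + 1) * h ^ (p + 3) / 2 := by
      have et : t ^ (p + 2) = t ^ p * t ^ 2 := by rw [pow_add]
      have eh : h ^ (p + 3) = h ^ p * h ^ 3 := by rw [pow_add]
      rw [et, eh]
      have n1 : (0 : ℝ) ≤ ((p : ℝ) + 1) * h ^ 3 * (h ^ p - t ^ p) := by
        apply mul_nonneg (mul_nonneg (by linarith) (by positivity))
        linarith
      have n2 : (0 : ℝ) ≤ (p : ℝ) * h * (t ^ p * ((h - t) * (h + t))) := by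
        apply mul_nonneg (mul_nonneg hp0 h0h)
        apply mul_nonneg hA0
        apply mul_nonneg (by linarith) (by linarith)
      have n3 : (0 : ℝ) ≤ t ^ p * ((h - t) ^ 2 * (h + 2 * t)) := by
        apply mul_nonneg hA0
        apply mul_nonneg (sq_nonneg _) (by linarith)
      linarith [n1, n2, n3]
    calc t ^ (p + 2) * (((p : ℝ) + 3) * h / 2 - t) / (((p : ℝ) + 3) * F)
        ≤ (((p : ℝ) + 1) * h ^ (p + 3) / 2) / (((p : ℝ) + 3) * F) :=
          (div_le_div_iff_of_pos_right hdenpos).2 core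
      _ = (((p + 1 + 2 : ℕ) : ℝ) - 2) * (b - a) ^ (p + 1 + 2)
          / (((p + 1 + 2).factorial : ℝ) * 2 ^ (p + 1 + 2 + 1)) := by
          rw [e1, hba]
          have e2 : (2 * h) ^ (p + 1 + 2) = 2 ^ (p + 1 + 2) * h ^ (p + 1 + 2) := by
            rw [mul_pow]
          rw [e2]
          have e3 : h ^ (p + 1 + 2) = h ^ (p + 3) := by norm_num
          rw [e3]
          push_cast
          have h2pos : (0 : ℝ) < 2 ^ (p + 1 + 2) := by positivity
          field_simp
          ring
  · intro h2
    have hm0 : m = 0 := by omega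
    subst hm0
    have hfin := main ((b - a) ^ 2 / 32) (by
      intro t h0 h1
      norm_num [Nat.factorial]
      rw [abs_le]
      constructor
      · nlinarith [sq_nonneg (t - (b - a) / 4)]
      · nlinarith [mul_nonneg h0 (by linarith : (0:ℝ) ≤ (b - a) / 2 - t)])
    exact hfin
end
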